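/- arXiv:2112.12445 — 10 statements merged into one kernel-verified Lean document; each statement's English description precedes it below -/
import Mathlib

section
/- Suppose (h, β) is such that 1, β_1, …, β_{λ−1} are linearly independent over F_q, and let D = span_{F_{q^m}}{ h_0^{[i]} + Σ_{j=1}^{λ−1} β_j h_j^{[i]} : 0 ≤ i ≤ n−k−1 }. Let A = (a_{j,i})_{j,i=0}^{λ−1} be an invertible λ×λ matrix with entries in F_q. Then c := a_{0,0} + Σ_{i=1}^{λ−1} a_{i,0} β_i is nonzero; defining β'_j = (a_{0,j} + Σ_{i=1}^{λ−1} a_{i,j} β_i)/c for j = 1,…,λ−1, and defining (h'_0,…,h'_{λ−1}) as the unique tuple of vectors satisfying c·h_j = a_{j,0} h'_0 + Σ_{i=1}^{λ−1} a_{j,i} h'_i for all j = 0,…,λ−1, the elements 1, β'_1, …, β'_{λ−1} are linearly independent over F_q and span_{F_{q^m}}{ h'_0^{[i]} + Σ_{j=1}^{λ−1} β'_j h'_j^{[i]} : 0 ≤ i ≤ n−k−1 } = D. -/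
noncomputable section

/-- `frob q m i x = x ^ (q ^ (i mod m))`, the `i`-th Frobenius power `x^{[i]}`. -/
def frob {K : Type} [Field K] (q m : ℕ) (i : ℤ) (x : K) : K :=
  x ^ q ^ (i % (m : ℤ)).toNat

/-- `yv q m h β u j` is `y^{[u,j]} = h_0^{[j]} + ∑_{i=1}^{λ-1} (β i)^{[u]} (h i)^{[j]}`,
under the convention `β 0 = 1`. -/
def yv {K : Type} [Field K] (q m : ℕ) {n lam : ℕ}
    (h : Fin lam → Fin n → K) (β : Fin lam → K) (u j : ℤ) : Fin n → K :=
  fun t => ∑ i, frob q m u (β i) * frob q m j (h i t)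

/-- `C_I`, the `F_{q^m}`-span of the `y^{[u,j]}` for `(u,j) ∈ I`. -/
def codeC {K : Type} [Field K] (q m : ℕ) {n lam : ℕ}
    (h : Fin lam → Fin n → K) (β : Fin lam → K) (I : Set (ℤ × ℤ)) :
    Submodule K (Fin n → K) :=
  Submodule.span K ((fun p : ℤ × ℤ => yv q m h β p.1 p.2) '' I)

/-- `C^{[i]}`, the componentwise Frobenius image of a subspace. -/
def frobSub {K : Type} [Field K] (q m : ℕ) {n : ℕ} (i : ℤ)
    (C : Submodule K (Fin n → K)) : Submodule K (Fin n → K) :=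
  Submodule.span K ((fun v : Fin n → K => fun t => frob q m i (v t)) '' (C : Set (Fin n → K)))

/-- `1, β 1, …, β (λ-1)` (i.e. `β` with `β 0 = 1`) are linearly independent over `F_q`. -/
def LinIndepFq {K : Type} [Field K] (q : ℕ) {lam : ℕ} (β : Fin lam → K) : Prop :=
  ∀ c : Fin lam → K, (∀ i, c i ^ q = c i) → (∑ i, c i * β i) = 0 → ∀ i, c i = 0

/-- index set of `C_pub⊥`, namely `{0} × [0, n-k-1]`. -/
def CpubSet (n k : ℕ) : Set (ℤ × ℤ) :=
  {(0 : ℤ)} ×ˢ Set.Icc (0 : ℤ) ((n : ℤ) - (k : ℤ) - 1)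

def I1set (lam : ℕ) : Set (ℤ × ℤ) :=
  ⋃ u ∈ Set.Icc (0 : ℤ) ((lam : ℤ) - 2), {u} ×ˢ Set.Icc u ((lam : ℤ) - 2)

def I3set (n k lam : ℕ) : Set (ℤ × ℤ) :=
  ⋃ u ∈ Set.Icc (0 : ℤ) ((lam : ℤ) - 1),
    {u} ×ˢ Set.Icc ((n : ℤ) - (k : ℤ)) ((n : ℤ) - (k : ℤ) + u - 1)

def I4set (n k lam : ℕ) : Set (ℤ × ℤ) :=
  I3set n k lam ∪
    {(lam : ℤ)} ×ˢ Set.Icc ((n : ℤ) - (k : ℤ)) ((n : ℤ) - (k : ℤ) + (lam : ℤ) - 1)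

def Mset (n k lam : ℕ) : Set (ℤ × ℤ) :=
  ⋃ u ∈ Set.Icc (0 : ℤ) (lam : ℤ), {u} ×ˢ Set.Icc u ((n : ℤ) - (k : ℤ) + u - 1)

/-- `I + a`. -/
def shiftSet (I : Set (ℤ × ℤ)) (a : ℤ) : Set (ℤ × ℤ) :=
  (fun p : ℤ × ℤ => (p.1 + a, p.2 + a)) '' I

/-- Assumption (i): for every tuple of `λ` integers pairwise distinct modulo `m`,
the matrix with rows `(1, β_1^{[u]}, …, β_{λ-1}^{[u]})` is invertible. -/
def CondI {K : Type} [Field K] (q m : ℕ) {lam : ℕ} (β : Fin lam → K) : Prop :=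
  ∀ u : Fin lam → ℤ, (∀ s t, u s % (m : ℤ) = u t % (m : ℤ) → s = t) →
    IsUnit (Matrix.det (Matrix.of fun s t : Fin lam => frob q m (u s) (β t)))

/-- Assumption (ii): the `y^{[u,j]}`, `(u,j) ∈ M`, are linearly independent. -/
def CondII {K : Type} [Field K] (q m : ℕ) (k : ℕ) {n lam : ℕ}
    (h : Fin lam → Fin n → K) (β : Fin lam → K) : Prop :=
  LinearIndependent K (fun p : Mset n k lam => yv q m h β p.val.1 p.val.2)

/-- `S_i = C_pub⊥^{[i]} + ⋯ + C_pub⊥^{[i+λ-1]}`. -/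
def Ssum {K : Type} [Field K] (q m : ℕ) (k : ℕ) {n lam : ℕ}
    (h : Fin lam → Fin n → K) (β : Fin lam → K) (i : ℤ) : Submodule K (Fin n → K) :=
  ⨆ t : Fin lam, frobSub q m (i + (t : ℕ)) (codeC q m h β (CpubSet n k))

end

/-- the action of an invertible matrix `A` over `F_q` on a pair `(h, β)`
produces a pair `(h', β')` with `1, β'_1, …, β'_{λ-1}` again `F_q`-linearly independent
and generating the same code `D`. -/
theorem stmt1 (q m n k lam : ℕ) (hq : ∃ p e : ℕ, p.Prime ∧ 0 < e ∧ q = p ^ e)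
    (hm : 0 < m) (hk : k < n) (hlam : 2 ≤ lam) [NeZero lam]
    (K : Type) [Field K] [Fintype K] (hcard : Fintype.card K = q ^ m)
    (h : Fin lam → Fin n → K) (β : Fin lam → K) (hβ0 : β 0 = 1)
    (hβ : LinIndepFq q β)
    (A : Matrix (Fin lam) (Fin lam) K) (hA : ∀ i j, A i j ^ q = A i j)
    (hAinv : IsUnit A.det)
    (D : Submodule K (Fin n → K))
    (hD : D = Submodule.span K (Set.range fun i : Fin (n - k) =>
      fun t => ∑ j, β j * frob q m ((i : ℕ) : ℤ) (h j t)))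
    (c : K) (hc : c = ∑ i, A i 0 * β i)
    (β' : Fin lam → K) (hβ' : ∀ j, β' j = (∑ i, A i j * β i) / c) :
    c ≠ 0 ∧
    (∃! h' : Fin lam → Fin n → K, ∀ j t, c * h j t = ∑ i, A j i * h' i t) ∧
    ∀ h' : Fin lam → Fin n → K, (∀ j t, c * h j t = ∑ i, A j i * h' i t) →
      LinIndepFq q β' ∧
      Submodule.span K (Set.range fun i : Fin (n - k) =>
        fun t => ∑ j, β' j * frob q m ((i : ℕ) : ℤ) (h' j t)) = D := by
  obtain ⟨p, e, hp, he, hqe⟩ := hq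
  -- characteristic
  haveI : CharP K (ringChar K) := ringChar.charP K
  have hrne : ringChar K ≠ 0 := CharP.char_ne_zero_of_finite K (ringChar K)
  have hrprime : (ringChar K).Prime :=
    (CharP.char_is_prime_or_zero K (ringChar K)).resolve_right hrne
  haveI : Fact (ringChar K).Prime := ⟨hrprime⟩
  obtain ⟨nn, -, hcard'⟩ := FiniteField.card K (ringChar K)
  have hpr : ringChar K = p := by
    have h1 : (ringChar K) ∣ p ^ (e * m) := by
      rw [pow_mul, ← hqe, ← hcard, hcard']
      exact dvd_pow_self _ (by exact_mod_cast nn.ne_zero)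
    exact (Nat.prime_dvd_prime_iff_eq hrprime hp).mp (hrprime.dvd_of_dvd_pow h1)
  haveI hcharp : CharP K p := hpr ▸ ringChar.charP K
  haveI : ExpChar K p := ExpChar.prime hp
  -- q-power is a ring hom
  have hhom : ∀ r : ℕ, ∃ φ : K →+* K, ∀ x : K, x ^ q ^ r = φ x := by
    intro r
    refine ⟨iterateFrobenius K p (e * r), fun x => ?_⟩
    rw [iterateFrobenius_def, hqe, ← pow_mul]
  have hfix : ∀ {x : K}, x ^ q = x → ∀ r : ℕ, x ^ q ^ r = x := by
    intro x hx r
    induction r with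
    | zero => simp
    | succ r ih => rw [pow_succ, pow_mul, ih, hx]
  have frob_eq : ∀ (i : ℤ) (x : K), frob q m i x = x ^ q ^ (i % (m:ℤ)).toNat :=
    fun _ _ => rfl
  have frob_fix : ∀ (i : ℤ) {x : K}, x ^ q = x → frob q m i x = x :=
    fun i x hx => hfix hx _
  have frob_sum : ∀ (i : ℤ) (f : Fin lam → K),
      frob q m i (∑ j, f j) = ∑ j, frob q m i (f j) := by
    intro i f
    obtain ⟨φ, hφ⟩ := hhom (i % (m:ℤ)).toNat
    simp only [frob_eq, hφ, map_sum]
  have frob_mul : ∀ (i : ℤ) (x y : K),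
      frob q m i (x * y) = frob q m i x * frob q m i y := by
    intro i x y; simp [frob, mul_pow]
  have frob_ne : ∀ (i : ℤ) {x : K}, x ≠ 0 → frob q m i x ≠ 0 := by
    intro i x hx
    simp only [frob]
    exact pow_ne_zero _ hx
  have hdet : A.det ≠ 0 := hAinv.ne_zero
  -- c ≠ 0
  have hcne : c ≠ 0 := by
    intro h0
    rw [hc] at h0
    have hz := hβ (fun i => A i 0) (fun i => hA i 0) h0
    exact hdet (Matrix.det_eq_zero_of_column_eq_zero 0 hz)
  have hAmul : A * A⁻¹ = 1 := Matrix.mul_nonsing_inv A hAinv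
  have hAmul' : A⁻¹ * A = 1 := Matrix.nonsing_inv_mul A hAinv
  refine ⟨hcne, ?_, ?_⟩
  · -- existence and uniqueness of h'
    refine ⟨fun i t => ∑ j, A⁻¹ i j * (c * h j t), ?_, ?_⟩
    · intro j t
      have hmv : A.mulVec (A⁻¹.mulVec (fun j => c * h j t)) = (fun j => c * h j t) := by
        rw [Matrix.mulVec_mulVec, hAmul, Matrix.one_mulVec]
      have := congrFun hmv j
      simpa [Matrix.mulVec, dotProduct] using this.symm
    · intro g hg
      funext i t
      have e1 : A.mulVec (fun s => g s t) = fun j => c * h j t := by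
        funext j
        simpa [Matrix.mulVec, dotProduct] using (hg j t).symm
      have e2 : A⁻¹.mulVec (A.mulVec (fun s => g s t)) = fun s => g s t := by
        rw [Matrix.mulVec_mulVec, hAmul', Matrix.one_mulVec]
      rw [e1] at e2
      have := congrFun e2 i
      simpa [Matrix.mulVec, dotProduct] using this.symm
  · intro h' hh'
    constructor
    · -- linear independence of the new β'
      intro d hd hsum i0
      have he'q : ∀ s, (∑ j, A s j * d j) ^ q = ∑ j, A s j * d j := by
        intro s
        obtain ⟨φ, hφ⟩ := hhom 1
        have hx : ∀ x : K, x ^ q = φ x := by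
          intro x; rw [← hφ x, pow_one]
        rw [hx, map_sum]
        refine Finset.sum_congr rfl fun j _ => ?_
        rw [← hx, mul_pow, hA, hd]
      have hβcj : ∀ j, ∑ s, A s j * β s = c * β' j := by
        intro j
        rw [hβ' j, mul_div_cancel₀ _ hcne]
      have hsum' : ∑ s, (∑ j, A s j * d j) * β s = 0 := by
        calc ∑ s, (∑ j, A s j * d j) * β s
            = ∑ s, ∑ j, A s j * d j * β s := by
              simp [Finset.sum_mul]
          _ = ∑ j, ∑ s, A s j * d j * β s := Finset.sum_comm
          _ = ∑ j, d j * (∑ s, A s j * β s) := by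
              refine Finset.sum_congr rfl fun j _ => ?_
              rw [Finset.mul_sum]
              exact Finset.sum_congr rfl fun s _ => by ring
          _ = ∑ j, d j * (c * β' j) := by simp [hβcj]
          _ = c * ∑ j, d j * β' j := by
              rw [Finset.mul_sum]
              exact Finset.sum_congr rfl fun j _ => by ring
          _ = 0 := by rw [hsum, mul_zero]
      have hz := hβ (fun s => ∑ j, A s j * d j) he'q hsum'
      have hmv : A.mulVec d = 0 := by
        funext s
        simpa [Matrix.mulVec, dotProduct] using hz s
      have hd0 : d = 0 := by
        have := congrArg (A⁻¹.mulVec) hmv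
        rwa [Matrix.mulVec_mulVec, hAmul', Matrix.one_mulVec, Matrix.mulVec_zero] at this
      exact congrFun hd0 i0
    · -- span equality
      rw [hD]
      have key : ∀ i : Fin (n-k),
          (fun t => ∑ j, β' j * frob q m ((i:ℕ):ℤ) (h' j t))
            = (frob q m ((i:ℕ):ℤ) c / c) •
              (fun t => ∑ j, β j * frob q m ((i:ℕ):ℤ) (h j t)) := by
        intro i
        funext t
        set r : ℤ := ((i:ℕ):ℤ) with hr
        have step1 : ∀ s, frob q m r (c * h s t) = ∑ j, A s j * frob q m r (h' j t) := by
          intro s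
          rw [hh' s t, frob_sum]
          refine Finset.sum_congr rfl fun j _ => ?_
          rw [frob_mul, frob_fix r (hA s j)]
        have main : c * (∑ j, β' j * frob q m r (h' j t))
            = frob q m r c * ∑ s, β s * frob q m r (h s t) := by
          calc c * (∑ j, β' j * frob q m r (h' j t))
              = ∑ j, (∑ s, A s j * β s) * frob q m r (h' j t) := by
                rw [Finset.mul_sum]
                refine Finset.sum_congr rfl fun j _ => ?_
                rw [hβ' j]
                field_simp
            _ = ∑ j, ∑ s, A s j * β s * frob q m r (h' j t) := by
                simp [Finset.sum_mul]
            _ = ∑ s, ∑ j, A s j * β s * frob q m r (h' j t) := Finset.sum_comm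
            _ = ∑ s, β s * (∑ j, A s j * frob q m r (h' j t)) := by
                refine Finset.sum_congr rfl fun s _ => ?_
                rw [Finset.mul_sum]
                exact Finset.sum_congr rfl fun j _ => by ring
            _ = ∑ s, β s * (frob q m r c * frob q m r (h s t)) := by
                refine Finset.sum_congr rfl fun s _ => ?_
                rw [← step1, ← frob_mul]
            _ = frob q m r c * ∑ s, β s * frob q m r (h s t) := by
                rw [Finset.mul_sum]
                exact Finset.sum_congr rfl fun s _ => by ring
        show (∑ j, β' j * frob q m r (h' j t))
            = (frob q m r c / c) * (∑ j, β j * frob q m r (h j t))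
        rw [div_mul_eq_mul_div, eq_div_iff hcne]
        linear_combination main
      apply le_antisymm
      · rw [Submodule.span_le]
        rintro _ ⟨i, rfl⟩
        beta_reduce
        rw [key i]
        exact Submodule.smul_mem _ _ (Submodule.subset_span ⟨i, rfl⟩)
      · rw [Submodule.span_le]
        rintro _ ⟨i, rfl⟩
        have hne : frob q m ((i:ℕ):ℤ) c / c ≠ 0 :=
          div_ne_zero (frob_ne _ hcne) hcne
        have hsmul : (fun t => ∑ j, β j * frob q m ((i:ℕ):ℤ) (h j t))
            = (frob q m ((i:ℕ):ℤ) c / c)⁻¹ •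
              (fun t => ∑ j, β' j * frob q m ((i:ℕ):ℤ) (h' j t)) := by
          rw [key i, smul_smul, inv_mul_cancel₀ hne, one_smul]
        beta_reduce
        rw [hsmul]
        exact Submodule.smul_mem _ _ (Submodule.subset_span ⟨i, rfl⟩)
end

section
/- Assume 1, β_1, …, β_{λ−1} are linearly independent over F_q and λ ≤ n−k. Then dim_{F_{q^m}}( C_pub⊥ + C_pub⊥^{[1]} + ⋯ + C_pub⊥^{[λ]} ) ≤ λ(n−k) + λ. -/
section Aux

variable {K : Type} [Field K]

lemma pow_q_mod (q m : ℕ) [Fintype K] (hcard : Fintype.card K = q ^ m) (x : K) (s : ℕ) :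
    x ^ q ^ s = x ^ q ^ (s % m) := by
  have hxm : x ^ q ^ m = x := by rw [← hcard]; exact FiniteField.pow_card x
  have key : ∀ d r : ℕ, x ^ q ^ (m * d + r) = x ^ q ^ r := by
    intro d r
    induction d with
    | zero => simp
    | succ d ih =>
      have h1 : m * (d + 1) + r = m + (m * d + r) := by ring
      rw [h1, pow_add, pow_mul, hxm, ih]
  conv_lhs => rw [← Nat.div_add_mod s m]
  exact key _ _

lemma frob_frob (q m : ℕ) [Fintype K] (hm : 0 < m) (hcard : Fintype.card K = q ^ m)
    (a b : ℤ) (x : K) : frob q m a (frob q m b x) = frob q m (a + b) x := by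
  have hm' : (0 : ℤ) < (m : ℤ) := by exact_mod_cast hm
  set A := ((a % (m : ℤ)).toNat) with hA
  set B := ((b % (m : ℤ)).toNat) with hB
  have hA' : (A : ℤ) = a % (m : ℤ) := Int.toNat_of_nonneg (Int.emod_nonneg a hm'.ne')
  have hB' : (B : ℤ) = b % (m : ℤ) := Int.toNat_of_nonneg (Int.emod_nonneg b hm'.ne')
  have h1 : (a + b) % (m : ℤ) = ((B : ℤ) + (A : ℤ)) % m := by
    rw [Int.add_emod, ← hA', ← hB', Int.add_comm]
  have h2 : ((a + b) % (m : ℤ)).toNat = (B + A) % m := by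
    rw [h1, show ((B : ℤ) + (A : ℤ)) = ((B + A : ℕ) : ℤ) by push_cast; ring,
      ← Int.natCast_mod, Int.toNat_natCast]
  show (x ^ q ^ B) ^ q ^ A = x ^ q ^ ((a + b) % (m : ℤ)).toNat
  rw [h2, ← pow_mul, ← pow_add, pow_q_mod q m hcard]

lemma frob_add' (q m : ℕ) (p : ℕ) [Fact p.Prime] [CharP K p] {e : ℕ} (hqe : q = p ^ e)
    (i : ℤ) (x y : K) : frob q m i (x + y) = frob q m i x + frob q m i y := by
  subst hqe
  show (x + y) ^ (p ^ e) ^ ((i % (m : ℤ)).toNat)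
      = x ^ (p ^ e) ^ ((i % (m : ℤ)).toNat) + y ^ (p ^ e) ^ ((i % (m : ℤ)).toNat)
  rw [← pow_mul]
  exact add_pow_char_pow x y p _

lemma frob_zero' (q m : ℕ) (hq0 : q ≠ 0) (i : ℤ) : frob q m i (0 : K) = 0 :=
  zero_pow (pow_ne_zero _ hq0)

lemma frob_mul' (q m : ℕ) (i : ℤ) (x y : K) :
    frob q m i (x * y) = frob q m i x * frob q m i y := mul_pow ..

lemma frob_sum' (q m : ℕ) (p : ℕ) [Fact p.Prime] [CharP K p] {e : ℕ} (he : 0 < e)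
    (hqe : q = p ^ e) (i : ℤ) {ι : Type*} (s : Finset ι) (f : ι → K) :
    frob q m i (∑ x ∈ s, f x) = ∑ x ∈ s, frob q m i (f x) := by
  classical
  induction s using Finset.cons_induction with
  | empty =>
    simp only [Finset.sum_empty]
    exact frob_zero' q m (by subst hqe; exact pow_ne_zero _ (Fact.out : p.Prime).pos.ne') i
  | cons a s ha ih =>
    rw [Finset.sum_cons, Finset.sum_cons, frob_add' q m p hqe, ih]

lemma yv_frob (q m : ℕ) [Fintype K] (hm : 0 < m) (hcard : Fintype.card K = q ^ m)
    (p : ℕ) [Fact p.Prime] [CharP K p] {e : ℕ} (he : 0 < e) (hqe : q = p ^ e)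
    {n lam : ℕ} (h : Fin lam → Fin n → K) (β : Fin lam → K) (s u j : ℤ) :
    (fun t => frob q m s (yv q m h β u j t)) = yv q m h β (s + u) (s + j) := by
  funext t
  show frob q m s (∑ i, frob q m u (β i) * frob q m j (h i t)) = _
  rw [frob_sum' q m p he hqe]
  exact Finset.sum_congr rfl fun i _ => by
    rw [frob_mul' q m, frob_frob q m hm hcard, frob_frob q m hm hcard]

end Aux

/-- distinguisher: `dim(C_pub⊥ + C_pub⊥^{[1]} + ⋯ + C_pub⊥^{[λ]}) ≤ λ(n-k)+λ`. -/
theorem stmt4 (q m n k lam : ℕ) (hq : ∃ p e : ℕ, p.Prime ∧ 0 < e ∧ q = p ^ e)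
    (hm : 0 < m) (hk : k < n) (hnm : n ≤ m) (hlam : 2 ≤ lam) [NeZero lam]
    (hlamnk : lam ≤ n - k)
    (K : Type) [Field K] [Fintype K] (hcard : Fintype.card K = q ^ m)
    (h : Fin lam → Fin n → K) (β : Fin lam → K) (hβ0 : β 0 = 1)
    (hβ : LinIndepFq q β) :
    Module.finrank K
      ↥(⨆ i : Fin (lam + 1), frobSub q m ((i : ℕ) : ℤ) (codeC q m h β (CpubSet n k)))
      ≤ lam * (n - k) + lam := by
  classical
  obtain ⟨p, e, hp, he, hqe⟩ := hq
  haveI : Fact p.Prime := ⟨hp⟩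
  -- the characteristic of K is p
  haveI hchar : CharP K p := by
    obtain ⟨r, hr⟩ := CharP.exists K
    haveI := hr
    obtain ⟨s, hrprime, hcards⟩ := FiniteField.card K r
    have hpr : p = r := by
      have hdvd : p ∣ r ^ (s : ℕ) := by
        rw [← hcards, hcard, hqe, ← pow_mul]
        exact dvd_pow_self p (by positivity)
      have := hp.dvd_of_dvd_pow hdvd
      exact ((Nat.prime_dvd_prime_iff_eq hp hrprime).mp this)
    rw [hpr]; exact hr
  set N := n - k with hN
  have hN1 : 1 ≤ N := by omega
  have hlamN : lam ≤ N := hlamnk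
  -- column generating finsets
  set hvec : ℕ → Fin lam → Fin n → K :=
    fun c i => fun t => frob q m (c : ℤ) (h i t) with hhvec
  set col : ℕ → Finset (Fin n → K) := fun c =>
    if lam ≤ c ∧ c < N then Finset.univ.image (hvec c)
    else (Finset.Icc (c + 1 - N) (min lam c)).image
      (fun u : ℕ => yv q m h β (u : ℤ) (c : ℤ)) with hcol
  set G : Finset (Fin n → K) := (Finset.range (N + lam)).biUnion col with hG
  -- each valid yv lies in the span of G
  have hyv_mem : ∀ u c : ℕ, u ≤ lam → u ≤ c → c + 1 ≤ u + N →
      yv q m h β (u : ℤ) (c : ℤ) ∈ Submodule.span K (G : Set (Fin n → K)) := by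
    intro u c hu huc hcN
    have hcrange : c ∈ Finset.range (N + lam) := Finset.mem_range.mpr (by omega)
    have hcolsub : (col c : Set (Fin n → K)) ⊆ (G : Set (Fin n → K)) := by
      intro x hx
      exact Finset.mem_coe.mpr (Finset.mem_biUnion.mpr ⟨c, hcrange, Finset.mem_coe.mp hx⟩)
    have hmono := Submodule.span_mono (R := K) hcolsub
    refine hmono ?_
    by_cases hmid : lam ≤ c ∧ c < N
    · -- middle columns: yv is a combination of the hvec's
      have hdecomp : yv q m h β (u : ℤ) (c : ℤ)
          = ∑ i : Fin lam, frob q m (u : ℤ) (β i) • hvec c i := by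
        funext t
        simp only [yv, hhvec, Finset.sum_apply, Pi.smul_apply, smul_eq_mul]
      rw [hdecomp]
      refine Submodule.sum_mem _ fun i _ => Submodule.smul_mem _ _ ?_
      refine Submodule.subset_span ?_
      refine Finset.mem_coe.mpr ?_
      rw [hcol]
      simp only [hmid, and_self, if_true]
      exact Finset.mem_image.mpr ⟨i, Finset.mem_univ _, rfl⟩
    · refine Submodule.subset_span ?_
      refine Finset.mem_coe.mpr ?_
      rw [hcol]
      simp only [hmid, if_false]
      exact Finset.mem_image.mpr ⟨u, Finset.mem_Icc.mpr ⟨by omega, by omega⟩, rfl⟩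
  -- the big space is contained in the span of G
  have hT : (⨆ i : Fin (lam + 1), frobSub q m ((i : ℕ) : ℤ) (codeC q m h β (CpubSet n k)))
      ≤ Submodule.span K (G : Set (Fin n → K)) := by
    refine iSup_le fun i => ?_
    rw [frobSub, Submodule.span_le]
    rintro _ ⟨v, hv, rfl⟩
    have hv' : v ∈ Submodule.span K
        ((fun p : ℤ × ℤ => yv q m h β p.1 p.2) '' CpubSet n k) := hv
    clear hv
    induction hv' using Submodule.span_induction with
    | mem x hx =>
      obtain ⟨⟨u0, j⟩, hmem, rfl⟩ := hx
      simp only [CpubSet, Set.mem_prod, Set.mem_singleton_iff, Set.mem_Icc] at hmem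
      obtain ⟨rfl, hj0, hj1⟩ := hmem
      show (fun t => frob q m ((i : ℕ) : ℤ) (yv q m h β 0 j t)) ∈ _
      rw [yv_frob q m hm hcard p he hqe]
      have hjN : j ≤ (N : ℤ) - 1 := by
        rw [hN]; push_cast; omega
      set c : ℕ := (i : ℕ) + j.toNat with hc
      have hcast : ((i : ℕ) : ℤ) + j = (c : ℤ) := by
        rw [hc]; push_cast; omega
      have hilam : (i : ℕ) ≤ lam := by omega
      have h2 : (i : ℕ) ≤ c := by omega
      have h3 : c + 1 ≤ (i : ℕ) + N := by
        have : j.toNat ≤ N - 1 := by omega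
        omega
      have := hyv_mem (i : ℕ) c hilam h2 h3
      rw [add_zero, hcast]
      exact this
    | zero =>
      show (fun t => frob q m ((i : ℕ) : ℤ) ((0 : Fin n → K) t)) ∈ _
      have : (fun t => frob q m ((i : ℕ) : ℤ) ((0 : Fin n → K) t)) = 0 := by
        funext t
        exact frob_zero' q m (by subst hqe; exact pow_ne_zero _ hp.pos.ne') _
      rw [this]; exact Submodule.zero_mem _
    | add x y hx hy ihx ihy =>
      show (fun t => frob q m ((i : ℕ) : ℤ) ((x + y) t)) ∈ _
      have : (fun t => frob q m ((i : ℕ) : ℤ) ((x + y) t))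
          = (fun t => frob q m ((i : ℕ) : ℤ) (x t)) + fun t => frob q m ((i : ℕ) : ℤ) (y t) := by
        funext t
        exact frob_add' q m p hqe _ _ _
      rw [this]; exact Submodule.add_mem _ ihx ihy
    | smul a x hx ihx =>
      show (fun t => frob q m ((i : ℕ) : ℤ) ((a • x) t)) ∈ _
      have : (fun t => frob q m ((i : ℕ) : ℤ) ((a • x) t))
          = frob q m ((i : ℕ) : ℤ) a • fun t => frob q m ((i : ℕ) : ℤ) (x t) := by
        funext t
        exact frob_mul' q m _ _ _
      rw [this]; exact Submodule.smul_mem _ _ ihx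
  -- cardinality bound on G
  have hcolcard : ∀ c ∈ Finset.range (N + lam), (col c).card ≤
      (if lam ≤ c ∧ c < N then lam else min lam c + 1 - (c + 1 - N)) := by
    intro c _
    rw [hcol]
    by_cases hmid : lam ≤ c ∧ c < N
    · simp only [hmid, and_self, if_true]
      exact (Finset.card_image_le).trans (by simp)
    · simp only [hmid, if_false]
      exact (Finset.card_image_le).trans (by rw [Nat.card_Icc])
  have hGcard : G.card ≤ lam * N + lam := by
    calc G.card ≤ ∑ c ∈ Finset.range (N + lam), (col c).card := Finset.card_biUnion_le
      _ ≤ ∑ c ∈ Finset.range (N + lam),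
          (if lam ≤ c ∧ c < N then lam else min lam c + 1 - (c + 1 - N)) :=
        Finset.sum_le_sum hcolcard
      _ = lam * N + lam := by
        set w : ℕ → ℕ := fun c => if lam ≤ c ∧ c < N then lam else min lam c + 1 - (c + 1 - N)
          with hw
        have hsplit : ∑ c ∈ Finset.range (N + lam), w c
            = ∑ c ∈ Finset.range N, w c + ∑ c ∈ Finset.Ico N (N + lam), w c := by
          simp only [Finset.range_eq_Ico]
          exact (Finset.sum_Ico_consecutive _ (Nat.zero_le N) (by omega)).symm
        have hhigh : ∑ c ∈ Finset.Ico N (N + lam), w c = ∑ t ∈ Finset.range lam, (lam - t) := by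
          rw [Finset.sum_Ico_eq_sum_range]
          simp only [Nat.add_sub_cancel_left]
          refine Finset.sum_congr rfl fun t ht => ?_
          have ht' : t < lam := Finset.mem_range.mp ht
          simp only [hw]
          have h1 : ¬(lam ≤ N + t ∧ N + t < N) := by omega
          rw [if_neg h1]
          have h2 : min lam (N + t) = lam := by omega
          rw [h2]; omega
        have hlowsplit : ∑ c ∈ Finset.range N, w c
            = ∑ c ∈ Finset.range lam, w c + ∑ c ∈ Finset.Ico lam N, w c := by
          simp only [Finset.range_eq_Ico]
          exact (Finset.sum_Ico_consecutive _ (Nat.zero_le lam) hlamN).symm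
        have hlow : ∑ c ∈ Finset.range lam, w c = ∑ c ∈ Finset.range lam, (c + 1) := by
          refine Finset.sum_congr rfl fun c hc => ?_
          have hc' : c < lam := Finset.mem_range.mp hc
          simp only [hw]
          have h1 : ¬(lam ≤ c ∧ c < N) := by omega
          rw [if_neg h1]
          have h2 : min lam c = c := by omega
          rw [h2]; omega
        have hmid : ∑ c ∈ Finset.Ico lam N, w c = (N - lam) * lam := by
          have : ∀ c ∈ Finset.Ico lam N, w c = lam := by
            intro c hc
            rw [Finset.mem_Ico] at hc
            simp only [hw]
            rw [if_pos ⟨hc.1, hc.2⟩]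
          rw [Finset.sum_congr rfl this, Finset.sum_const, Nat.card_Ico, smul_eq_mul]
        have hpair : ∑ c ∈ Finset.range lam, (c + 1) + ∑ t ∈ Finset.range lam, (lam - t)
            = lam * (lam + 1) := by
          rw [← Finset.sum_add_distrib]
          have : ∀ c ∈ Finset.range lam, (c + 1) + (lam - c) = lam + 1 := by
            intro c hc
            have := Finset.mem_range.mp hc
            omega
          rw [Finset.sum_congr rfl this, Finset.sum_const, Finset.card_range, smul_eq_mul]
        obtain ⟨d, hd⟩ := Nat.exists_eq_add_of_le hlamN
        rw [hsplit, hhigh, hlowsplit, hlow, hmid]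
        have hNd : N - lam = d := by omega
        rw [hNd]
        have : ∑ c ∈ Finset.range lam, (c + 1) + d * lam + ∑ t ∈ Finset.range lam, (lam - t)
            = lam * N + lam := by
          rw [hd]
          have h2 : ∑ c ∈ Finset.range lam, (c + 1) + ∑ t ∈ Finset.range lam, (lam - t)
              + d * lam = lam * (lam + 1) + d * lam := by rw [hpair]
          calc ∑ c ∈ Finset.range lam, (c + 1) + d * lam + ∑ t ∈ Finset.range lam, (lam - t)
              = ∑ c ∈ Finset.range lam, (c + 1) + ∑ t ∈ Finset.range lam, (lam - t)
                + d * lam := by ring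
            _ = lam * (lam + 1) + d * lam := h2
            _ = lam * (lam + d) + lam := by ring
        omega
  -- put everything together
  have h1 : Module.finrank K ↥(Submodule.span K (G : Set (Fin n → K))) ≤ G.card := by
    have := finrank_span_finset_le_card (R := K) G
    simpa [Set.finrank] using this
  exact le_trans (Submodule.finrank_mono hT) (le_trans h1 hGcard)
end

section
/- Assume conditions (i) and (ii). For j = λ−1,…,n−k−1 let A_j ⊆ ℤ be a set of λ integers that are pairwise distinct modulo m, and set I_2' = ⊔_{j=λ−1}^{n−k−1} A_j × {j} and M' = I_1 ⊔ I_2' ⊔ I_4. Then C_{M'} = C_M, and the vectors y^{[u,j]}, (u,j) ∈ M', are linearly independent over F_{q^m}. -/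
section Helpers

open Submodule

variable {K : Type} [Field K]

lemma yv_eq (q m : ℕ) {n lam : ℕ} (h : Fin lam → Fin n → K) (β : Fin lam → K) (u j : ℤ) :
    yv q m h β u j = ∑ i, frob q m u (β i) • (fun t => frob q m j (h i t)) := by
  funext t
  simp [yv, Finset.sum_apply]

lemma mem_span_of_invertible {lam : ℕ} {V : Type} [AddCommGroup V] [Module K V]
    (B : Matrix (Fin lam) (Fin lam) K) (hB : IsUnit B.det) (g : Fin lam → V) (i : Fin lam) :
    g i ∈ Submodule.span K (Set.range fun s => ∑ i', B s i' • g i') := by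
  have key : (∑ s, B⁻¹ i s • ∑ i', B s i' • g i') = g i := by
    simp_rw [Finset.smul_sum, smul_smul]
    rw [Finset.sum_comm]
    simp_rw [← Finset.sum_smul, ← Matrix.mul_apply, Matrix.nonsing_inv_mul B hB,
      Matrix.one_apply, ite_smul, one_smul, zero_smul]
    simp
  rw [← key]
  exact Submodule.sum_mem _ fun s _ => Submodule.smul_mem _ _ (Submodule.subset_span ⟨s, rfl⟩)

lemma yv_mem_span_column (q m : ℕ) {n lam : ℕ} (h : Fin lam → Fin n → K) (β : Fin lam → K)
    (hi : CondI q m β) (U : Fin lam → ℤ)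
    (hU : ∀ s t, U s % (m : ℤ) = U t % (m : ℤ) → s = t) (u j : ℤ) :
    yv q m h β u j ∈ Submodule.span K (Set.range fun s => yv q m h β (U s) j) := by
  have hB := hi U hU
  have hfun : (fun s : Fin lam => yv q m h β (U s) j) =
      fun s : Fin lam => ∑ i', (Matrix.of fun s t : Fin lam => frob q m (U s) (β t)) s i' •
        (fun t => frob q m j (h i' t)) := by
    funext s
    simpa using yv_eq q m h β (U s) j
  rw [yv_eq q m h β u j, hfun]
  exact Submodule.sum_mem _ fun i _ =>
    Submodule.smul_mem _ _ (mem_span_of_invertible _ hB _ i)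

lemma yv_mem_codeC (q m : ℕ) {n lam : ℕ} (h : Fin lam → Fin n → K) (β : Fin lam → K)
    {I : Set (ℤ × ℤ)} {p : ℤ × ℤ} (hp : p ∈ I) :
    yv q m h β p.1 p.2 ∈ codeC q m h β I :=
  Submodule.subset_span ⟨p, hp, rfl⟩

lemma codeC_le_of_forall (q m : ℕ) {n lam : ℕ} (h : Fin lam → Fin n → K) (β : Fin lam → K)
    {I J : Set (ℤ × ℤ)} (hIJ : ∀ p ∈ I, yv q m h β p.1 p.2 ∈ codeC q m h β J) :
    codeC q m h β I ≤ codeC q m h β J := by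
  rw [codeC, Submodule.span_le]
  rintro _ ⟨p, hp, rfl⟩
  exact hIJ p hp

lemma span_column_le (q m : ℕ) {n lam : ℕ} (h : Fin lam → Fin n → K) (β : Fin lam → K)
    {J : Set (ℤ × ℤ)} (U : Fin lam → ℤ) (j : ℤ) (hUJ : ∀ s, (U s, j) ∈ J) :
    Submodule.span K (Set.range fun s => yv q m h β (U s) j) ≤ codeC q m h β J := by
  rw [Submodule.span_le]
  rintro _ ⟨s, rfl⟩
  exact Submodule.subset_span ⟨(U s, j), hUJ s, rfl⟩

lemma mem_Mset {n k lam : ℕ} {p : ℤ × ℤ} :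
    p ∈ Mset n k lam ↔
      0 ≤ p.1 ∧ p.1 ≤ (lam : ℤ) ∧ p.1 ≤ p.2 ∧ p.2 ≤ (n : ℤ) - (k : ℤ) + p.1 - 1 := by
  simp only [Mset, Set.mem_iUnion, Set.mem_prod, Set.mem_singleton_iff, Set.mem_Icc]
  constructor
  · rintro ⟨u, ⟨h0, h1⟩, h2, h3, h4⟩
    omega
  · rintro ⟨h0, h1, h2, h3⟩
    exact ⟨p.1, ⟨h0, h1⟩, rfl, h2, h3⟩

lemma mem_I1set {lam : ℕ} {p : ℤ × ℤ} :
    p ∈ I1set lam ↔ 0 ≤ p.1 ∧ p.1 ≤ p.2 ∧ p.2 ≤ (lam : ℤ) - 2 := by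
  simp only [I1set, Set.mem_iUnion, Set.mem_prod, Set.mem_singleton_iff, Set.mem_Icc]
  constructor
  · rintro ⟨u, ⟨h0, h1⟩, h2, h3, h4⟩
    omega
  · rintro ⟨h0, h1, h2⟩
    exact ⟨p.1, ⟨h0, by omega⟩, rfl, h1, h2⟩

lemma mem_I4set {n k lam : ℕ} {p : ℤ × ℤ} :
    p ∈ I4set n k lam ↔
      0 ≤ p.1 ∧ p.1 ≤ (lam : ℤ) ∧ (n : ℤ) - (k : ℤ) ≤ p.2 ∧
        p.2 ≤ (n : ℤ) - (k : ℤ) + p.1 - 1 := by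
  simp only [I4set, I3set, Set.mem_union, Set.mem_iUnion, Set.mem_prod,
    Set.mem_singleton_iff, Set.mem_Icc]
  constructor
  · rintro (⟨u, ⟨h0, h1⟩, h2, h3, h4⟩ | ⟨h1, h2, h3⟩) <;> omega
  · rintro ⟨h0, h1, h2, h3⟩
    rcases eq_or_lt_of_le h1 with heq | hlt
    · exact Or.inr ⟨heq, h2, by omega⟩
    · exact Or.inl ⟨p.1, ⟨h0, by omega⟩, rfl, h2, h3⟩

end Helpers

/-- replacing the middle block of `M` by arbitrary sets `A_j` of `λ`
integers pairwise distinct mod `m` gives `C_{M'} = C_M` with `y^{[M']}` independent. -/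
theorem stmt5 (q m n k lam : ℕ) (hq : ∃ p e : ℕ, p.Prime ∧ 0 < e ∧ q = p ^ e)
    (hm : 0 < m) (hk : k < n) (hnm : n ≤ m) (hlam : 2 ≤ lam) [NeZero lam]
    (hlamnk : lam ≤ n - k)
    (K : Type) [Field K] [Fintype K] (hcard : Fintype.card K = q ^ m)
    (h : Fin lam → Fin n → K) (β : Fin lam → K) (hβ0 : β 0 = 1)
    (hi : CondI q m β) (hii : CondII q m k h β)
    (A : ℤ → Set ℤ)
    (hA : ∀ j ∈ Set.Icc ((lam : ℤ) - 1) ((n : ℤ) - (k : ℤ) - 1),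
      (A j).ncard = lam ∧ Set.InjOn (fun x : ℤ => x % (m : ℤ)) (A j))
    (I2' : Set (ℤ × ℤ))
    (hI2' : I2' = ⋃ j ∈ Set.Icc ((lam : ℤ) - 1) ((n : ℤ) - (k : ℤ) - 1), (A j) ×ˢ {j})
    (M' : Set (ℤ × ℤ)) (hM' : M' = I1set lam ∪ I2' ∪ I4set n k lam) :
    codeC q m h β M' = codeC q m h β (Mset n k lam) ∧
    LinearIndependent K (fun p : M' => yv q m h β p.val.1 p.val.2) := by
  classical
  have hlmZ : (lam : ℤ) ≤ (n : ℤ) - (k : ℤ) := by omega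
  have hlmm : (lam : ℤ) ≤ (m : ℤ) := by omega
  -- membership in I2'
  have mem_I2' : ∀ p : ℤ × ℤ, p ∈ I2' ↔
      ((lam : ℤ) - 1 ≤ p.2 ∧ p.2 ≤ (n : ℤ) - (k : ℤ) - 1 ∧ p.1 ∈ A p.2) := by
    intro p
    rw [hI2']
    simp only [Set.mem_iUnion, Set.mem_prod, Set.mem_singleton_iff, Set.mem_Icc]
    constructor
    · rintro ⟨j, ⟨h1, h2⟩, h3, rfl⟩
      exact ⟨h1, h2, h3⟩
    · rintro ⟨h1, h2, h3⟩
      exact ⟨p.2, ⟨h1, h2⟩, h3, rfl⟩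
  -- finiteness of the A j
  have hAfin : ∀ j ∈ Set.Icc ((lam : ℤ) - 1) ((n : ℤ) - (k : ℤ) - 1), (A j).Finite := by
    intro j hj
    exact Set.finite_of_ncard_ne_zero (by rw [(hA j hj).1]; omega)
  -- enumerations of the A j
  have hUA : ∀ j ∈ Set.Icc ((lam : ℤ) - 1) ((n : ℤ) - (k : ℤ) - 1), ∃ U : Fin lam → ℤ,
      (∀ s, U s ∈ A j) ∧ (∀ s t, U s % (m : ℤ) = U t % (m : ℤ) → s = t) := by
    intro j hj
    obtain ⟨hcard', hinj⟩ := hA j hj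
    have hfin := hAfin j hj
    have hFc : hfin.toFinset.card = lam := by
      rw [← Set.ncard_eq_toFinset_card _ hfin, hcard']
    have hmemA : ∀ s : Fin lam, ((hfin.toFinset.orderIsoOfFin hFc s : ℤ)) ∈ A j := by
      intro s
      have := (hfin.toFinset.orderIsoOfFin hFc s).2
      rwa [Set.Finite.mem_toFinset] at this
    refine ⟨fun s => ((hfin.toFinset.orderIsoOfFin hFc s : ℤ)), hmemA, fun s t hst => ?_⟩
    have := hinj (hmemA s) (hmemA t) hst
    exact (hfin.toFinset.orderIsoOfFin hFc).injective (Subtype.ext this)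
  -- middle columns are in C_{M'}
  have hmidM' : ∀ u j : ℤ, (lam : ℤ) - 1 ≤ j → j ≤ (n : ℤ) - (k : ℤ) - 1 →
      yv q m h β u j ∈ codeC q m h β M' := by
    intro u j hj1 hj2
    obtain ⟨U, hU1, hU2⟩ := hUA j (Set.mem_Icc.2 ⟨hj1, hj2⟩)
    refine span_column_le q m h β U j (fun s => ?_) (yv_mem_span_column q m h β hi U hU2 u j)
    rw [hM']
    exact Set.mem_union_left _ (Set.mem_union_right _ ((mem_I2' (U s, j)).2 ⟨hj1, hj2, hU1 s⟩))
  -- middle columns are in C_M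
  have hmidM : ∀ u j : ℤ, (lam : ℤ) - 1 ≤ j → j ≤ (n : ℤ) - (k : ℤ) - 1 →
      yv q m h β u j ∈ codeC q m h β (Mset n k lam) := by
    intro u j hj1 hj2
    have hU2 : ∀ s t : Fin lam, ((s : ℕ) : ℤ) % (m : ℤ) = ((t : ℕ) : ℤ) % (m : ℤ) → s = t := by
      intro s t hst
      have hs : (s : ℕ) < lam := s.2
      have ht : (t : ℕ) < lam := t.2
      rw [Int.emod_eq_of_lt (by omega) (by omega), Int.emod_eq_of_lt (by omega) (by omega)] at hst
      exact Fin.ext (by exact_mod_cast hst)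
    refine span_column_le q m h β (fun s => ((s : ℕ) : ℤ)) j (fun s => ?_)
      (yv_mem_span_column q m h β hi _ hU2 u j)
    have hs : (s : ℕ) < lam := s.2
    show (((s : ℕ) : ℤ), j) ∈ Mset n k lam
    exact mem_Mset.2 ⟨by omega, by omega, by omega, by omega⟩
  -- the span equality
  have hspan : codeC q m h β M' = codeC q m h β (Mset n k lam) := by
    apply le_antisymm
    · apply codeC_le_of_forall
      intro p hp
      rw [hM'] at hp
      simp only [Set.mem_union] at hp
      rcases hp with (hp1 | hp2) | hp4
      · rw [mem_I1set] at hp1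
        exact yv_mem_codeC q m h β (mem_Mset.2 ⟨by omega, by omega, by omega, by omega⟩)
      · obtain ⟨h1, h2, -⟩ := (mem_I2' p).1 hp2
        exact hmidM p.1 p.2 h1 h2
      · rw [mem_I4set] at hp4
        exact yv_mem_codeC q m h β (mem_Mset.2 ⟨by omega, by omega, by omega, by omega⟩)
    · apply codeC_le_of_forall
      intro p hp
      rw [mem_Mset] at hp
      by_cases hj1 : p.2 ≤ (lam : ℤ) - 2
      · refine yv_mem_codeC q m h β (show p ∈ M' from ?_)
        rw [hM']
        exact Set.mem_union_left _
          (Set.mem_union_left _ (mem_I1set.2 ⟨by omega, by omega, by omega⟩))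
      · by_cases hj2 : (n : ℤ) - (k : ℤ) ≤ p.2
        · refine yv_mem_codeC q m h β (show p ∈ M' from ?_)
          rw [hM']
          exact Set.mem_union_right _ (mem_I4set.2 ⟨by omega, by omega, by omega, by omega⟩)
        · exact hmidM' p.1 p.2 (by omega) (by omega)
  refine ⟨hspan, ?_⟩
  -- finiteness
  have hfinM : (Mset n k lam).Finite := by
    apply Set.Finite.subset
      (Set.Finite.prod (Set.finite_Icc (0 : ℤ) (lam : ℤ))
        (Set.finite_Icc (0 : ℤ) ((n : ℤ) - (k : ℤ) + (lam : ℤ) - 1)))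
    intro p hp
    rw [mem_Mset] at hp
    exact Set.mem_prod.2 ⟨Set.mem_Icc.2 ⟨by omega, by omega⟩, Set.mem_Icc.2 ⟨by omega, by omega⟩⟩
  have hfinM' : M'.Finite := by
    rw [hM']
    refine Set.Finite.union (Set.Finite.union ?_ ?_) ?_
    · apply Set.Finite.subset
        (Set.Finite.prod (Set.finite_Icc (0 : ℤ) (lam : ℤ)) (Set.finite_Icc (0 : ℤ) (lam : ℤ)))
      intro p hp
      rw [mem_I1set] at hp
      exact Set.mem_prod.2 ⟨Set.mem_Icc.2 ⟨by omega, by omega⟩, Set.mem_Icc.2 ⟨by omega, by omega⟩⟩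
    · rw [hI2']
      refine Set.Finite.biUnion (Set.finite_Icc _ _) (fun j hj => ?_)
      exact Set.Finite.prod (hAfin j hj) (Set.finite_singleton _)
    · apply Set.Finite.subset
        (Set.Finite.prod (Set.finite_Icc (0 : ℤ) (lam : ℤ))
          (Set.finite_Icc ((n : ℤ) - (k : ℤ)) ((n : ℤ) - (k : ℤ) + (lam : ℤ) - 1)))
      intro p hp
      rw [mem_I4set] at hp
      exact Set.mem_prod.2 ⟨Set.mem_Icc.2 ⟨by omega, by omega⟩, Set.mem_Icc.2 ⟨by omega, by omega⟩⟩
  -- the counting injection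
  let L : ℤ → List ℤ := fun j =>
    if hj : j ∈ Set.Icc ((lam : ℤ) - 1) ((n : ℤ) - (k : ℤ) - 1) then
      ((hAfin j hj).toFinset.sort (· ≤ ·)) else []
  have hLmem : ∀ j (hj : j ∈ Set.Icc ((lam : ℤ) - 1) ((n : ℤ) - (k : ℤ) - 1)) (a : ℤ),
      a ∈ L j ↔ a ∈ A j := by
    intro j hj a
    simp only [L, dif_pos hj, Finset.mem_sort, Set.Finite.mem_toFinset]
  have hLlen : ∀ j (hj : j ∈ Set.Icc ((lam : ℤ) - 1) ((n : ℤ) - (k : ℤ) - 1)),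
      (L j).length = lam := by
    intro j hj
    simp only [L, dif_pos hj, Finset.length_sort]
    rw [← Set.ncard_eq_toFinset_card _ (hAfin j hj), (hA j hj).1]
  let g : ℤ × ℤ → ℤ × ℤ := fun p =>
    if (lam : ℤ) - 1 ≤ p.2 ∧ p.2 ≤ (n : ℤ) - (k : ℤ) - 1 then
      ((((L p.2).idxOf p.1 : ℕ) : ℤ), p.2) else p
  have hsnd : ∀ p : ℤ × ℤ, (g p).2 = p.2 := by
    intro p
    by_cases hc : (lam : ℤ) - 1 ≤ p.2 ∧ p.2 ≤ (n : ℤ) - (k : ℤ) - 1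
    · rw [show g p = ((((L p.2).idxOf p.1 : ℕ) : ℤ), p.2) from if_pos hc]
    · rw [show g p = p from if_neg hc]
  have hmidA : ∀ p : ℤ × ℤ, p ∈ M' → (lam : ℤ) - 1 ≤ p.2 → p.2 ≤ (n : ℤ) - (k : ℤ) - 1 →
      p.1 ∈ A p.2 := by
    intro p hp hj1 hj2
    rw [hM'] at hp
    simp only [Set.mem_union] at hp
    rcases hp with (hp1 | hp2) | hp4
    · rw [mem_I1set] at hp1; omega
    · exact ((mem_I2' p).1 hp2).2.2
    · rw [mem_I4set] at hp4; omega
  have hcount : M'.ncard ≤ (Mset n k lam).ncard := by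
    apply Set.ncard_le_ncard_of_injOn g ?_ ?_ hfinM
    · intro p hp
      by_cases hmid : (lam : ℤ) - 1 ≤ p.2 ∧ p.2 ≤ (n : ℤ) - (k : ℤ) - 1
      · have hpA := hmidA p hp hmid.1 hmid.2
        have hidx : (L p.2).idxOf p.1 < lam := by
          rw [← hLlen p.2 (Set.mem_Icc.2 hmid)]
          exact List.idxOf_lt_length_iff.2 ((hLmem p.2 (Set.mem_Icc.2 hmid) p.1).2 hpA)
        have : g p = ((((L p.2).idxOf p.1 : ℕ) : ℤ), p.2) := if_pos hmid
        rw [this, mem_Mset]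
        refine ⟨by positivity, by omega, by omega, by omega⟩
      · have : g p = p := if_neg hmid
        rw [this, mem_Mset]
        rw [hM'] at hp
        simp only [Set.mem_union] at hp
        rcases hp with (hp1 | hp2) | hp4
        · rw [mem_I1set] at hp1
          exact ⟨by omega, by omega, by omega, by omega⟩
        · obtain ⟨h1, h2, -⟩ := (mem_I2' p).1 hp2
          exact absurd ⟨h1, h2⟩ hmid
        · rw [mem_I4set] at hp4
          exact ⟨by omega, by omega, by omega, by omega⟩
    · intro p1 hp1 p2 hp2 hg
      have h2eq : p1.2 = p2.2 := by rw [← hsnd p1, ← hsnd p2, hg]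
      by_cases hmid : (lam : ℤ) - 1 ≤ p1.2 ∧ p1.2 ≤ (n : ℤ) - (k : ℤ) - 1
      · have hmid2 : (lam : ℤ) - 1 ≤ p2.2 ∧ p2.2 ≤ (n : ℤ) - (k : ℤ) - 1 := h2eq ▸ hmid
        have hA1 := hmidA p1 hp1 hmid.1 hmid.2
        have hA2 := hmidA p2 hp2 hmid2.1 hmid2.2
        have hg1 : g p1 = ((((L p1.2).idxOf p1.1 : ℕ) : ℤ), p1.2) := if_pos hmid
        have hg2 : g p2 = ((((L p2.2).idxOf p2.1 : ℕ) : ℤ), p2.2) := if_pos hmid2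
        rw [hg1, hg2, Prod.mk.injEq] at hg
        have hidx : (L p1.2).idxOf p1.1 = (L p2.2).idxOf p2.1 := by exact_mod_cast hg.1
        rw [← h2eq] at hA2 hidx
        have := (List.idxOf_inj ((hLmem p1.2 (Set.mem_Icc.2 hmid) p1.1).2 hA1)).1 hidx
        exact Prod.ext this h2eq
      · have hmid2 : ¬((lam : ℤ) - 1 ≤ p2.2 ∧ p2.2 ≤ (n : ℤ) - (k : ℤ) - 1) := h2eq ▸ hmid
        rw [show g p1 = p1 from if_neg hmid, show g p2 = p2 from if_neg hmid2] at hg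
        exact hg
  -- finrank computations
  haveI : Fintype ↥(Mset n k lam) := hfinM.fintype
  haveI : Fintype ↥M' := hfinM'.fintype
  have himgM : Set.range (fun p : Mset n k lam => yv q m h β p.val.1 p.val.2)
      = (fun p : ℤ × ℤ => yv q m h β p.1 p.2) '' (Mset n k lam) := by
    rw [Set.image_eq_range]
  have hrankM : Module.finrank K (codeC q m h β (Mset n k lam)) = (Mset n k lam).ncard := by
    have h1 := finrank_span_eq_card hii
    rw [himgM] at h1
    rw [codeC, h1, ← Nat.card_coe_set_eq, Nat.card_eq_fintype_card]
  have hrankM' : Module.finrank K (codeC q m h β M') ≤ M'.ncard := by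
    haveI : Fintype ↥((fun p : ℤ × ℤ => yv q m h β p.1 p.2) '' M') := (hfinM'.image _).fintype
    have h1 := finrank_span_le_card (R := K) ((fun p : ℤ × ℤ => yv q m h β p.1 p.2) '' M')
    rw [← Set.ncard_eq_toFinset_card'] at h1
    exact le_trans h1 (Set.ncard_image_le hfinM')
  have hge : (Mset n k lam).ncard ≤ M'.ncard := by
    calc (Mset n k lam).ncard = Module.finrank K (codeC q m h β (Mset n k lam)) := hrankM.symm
      _ = Module.finrank K (codeC q m h β M') := by rw [hspan]
      _ ≤ M'.ncard := hrankM'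
  have hMeq : M'.ncard = (Mset n k lam).ncard := le_antisymm hcount hge
  rw [linearIndependent_iff_card_eq_finrank_span]
  have himgM' : Set.range (fun p : M' => yv q m h β p.val.1 p.val.2)
      = (fun p : ℤ × ℤ => yv q m h β p.1 p.2) '' M' := by
    rw [Set.image_eq_range]
  rw [Set.finrank, himgM']
  rw [show Submodule.span K ((fun p : ℤ × ℤ => yv q m h β p.1 p.2) '' M')
    = codeC q m h β M' from rfl, hspan, hrankM]
  rw [← hMeq, ← Nat.card_coe_set_eq, Nat.card_eq_fintype_card]
end

section
/- Suppose 1, β_1, …, β_{λ−1} are linearly independent over F_q, let A = (a_{j,i})_{j,i=0}^{λ−1} be an invertible λ×λ matrix with entries in F_q, set c = a_{0,0} + Σ_{i=1}^{λ−1} a_{i,0} β_i (so c ≠ 0), let β'_j = (a_{0,j} + Σ_{i=1}^{λ−1} a_{i,j} β_i)/c for j = 1,…,λ−1, and let (h'_0,…,h'_{λ−1}) be the unique tuple with c·h_j = a_{j,0} h'_0 + Σ_{i=1}^{λ−1} a_{j,i} h'_i for all j = 0,…,λ−1. Then for every ℓ ∈ ℤ, h'_0 + Σ_{j=1}^{λ−1}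 (β'_j)^{[−ℓ]} h'_j = (c / c^{[−ℓ]}) · ( h_0 + Σ_{j=1}^{λ−1} β_j^{[−ℓ]} h_j ); in particular the one-dimensional F_{q^m}-spans of h_0 + Σ_{j=1}^{λ−1} β_j^{[−ℓ]} h_j and of h'_0 + Σ_{j=1}^{λ−1} (β'_j)^{[−ℓ]} h'_j coincide. -/
/-- for every `ℓ ∈ ℤ`,
`h'_0 + ∑_j (β'_j)^{[-ℓ]} h'_j = (c / c^{[-ℓ]}) · (h_0 + ∑_j β_j^{[-ℓ]} h_j)`,
in particular the two one-dimensional spans coincide. -/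
theorem stmt11 (q m n lam : ℕ) (hq : ∃ p e : ℕ, p.Prime ∧ 0 < e ∧ q = p ^ e)
    (hm : 0 < m) (hn : 0 < n) (hnm : n ≤ m) (hlam : 2 ≤ lam) [NeZero lam]
    (K : Type) [Field K] [Fintype K] (hcard : Fintype.card K = q ^ m)
    (h : Fin lam → Fin n → K) (β : Fin lam → K) (hβ0 : β 0 = 1)
    (hβ : LinIndepFq q β)
    (A : Matrix (Fin lam) (Fin lam) K) (hA : ∀ i j, A i j ^ q = A i j)
    (hAinv : IsUnit A.det)
    (c : K) (hc : c = ∑ i, A i 0 * β i)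
    (β' : Fin lam → K) (hβ' : ∀ j, β' j = (∑ i, A i j * β i) / c)
    (h' : Fin lam → Fin n → K) (hh' : ∀ j t, c * h j t = ∑ i, A j i * h' i t) :
    ∀ ℓ : ℤ,
      (fun t => ∑ j, frob q m (-ℓ) (β' j) * h' j t) =
        (fun t => (c / frob q m (-ℓ) c) * ∑ j, frob q m (-ℓ) (β j) * h j t) ∧
      Submodule.span K {fun t => ∑ j, frob q m (-ℓ) (β' j) * h' j t} =
        Submodule.span K {fun t => ∑ j, frob q m (-ℓ) (β j) * h j t} := by
  classical
  obtain ⟨p, e', hp, he', rfl⟩ := hq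
  haveI : Fact p.Prime := ⟨hp⟩
  -- characteristic of K is p
  haveI hKp : CharP K p := by
    set p0 := ringChar K with hp0def
    haveI : CharP K p0 := ringChar.charP K
    haveI hp0 : Fact p0.Prime := ⟨CharP.char_is_prime K p0⟩
    obtain ⟨n0, hp0', hcard'⟩ := FiniteField.card K p0
    have hdvd : p0 ∣ p := by
      have h1 : p0 ∣ Fintype.card K := hcard' ▸ dvd_pow_self p0 n0.ne_zero
      rw [hcard, ← pow_mul] at h1
      exact hp0.out.dvd_of_dvd_pow h1
    have : p0 = p := (Nat.prime_dvd_prime_iff_eq hp0.out hp).mp hdvd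
    rwa [this] at ‹CharP K p0›
  -- the fixed-point lemma
  have fix : ∀ (x : K), x ^ (p ^ e') = x → ∀ N : ℕ, x ^ (p ^ e') ^ N = x := by
    intro x hx N
    induction N with
    | zero => simp
    | succ N ih => rw [pow_succ, pow_mul, ih, hx]
  -- c ≠ 0
  have hc0 : c ≠ 0 := by
    intro h0
    have hz := hβ (fun i => A i 0) (fun i => hA i 0) (by rw [← hc, h0])
    have hdet : A.det = 0 := by
      apply Matrix.det_eq_zero_of_column_eq_zero 0
      intro i; exact hz i
    rw [hdet] at hAinv
    exact hAinv.ne_zero rfl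
  intro ℓ
  set e : ℕ := ((-ℓ) % (m : ℤ)).toNat with he
  set F : K →+* K := iterateFrobenius K p (e' * e) with hF
  have hfrob : ∀ x : K, frob (p ^ e') m (-ℓ) x = F x := by
    intro x
    rw [hF, iterateFrobenius_def, frob, ← he, ← pow_mul]
  have hFA : ∀ i j, F (A i j) = A i j := by
    intro i j
    rw [hF, iterateFrobenius_def, pow_mul]
    exact fix _ (hA i j) e
  have hFc : F c ≠ 0 := by
    rw [hF, iterateFrobenius_def]
    exact pow_ne_zero _ hc0
  have hFβ' : ∀ j, F (β' j) = (∑ i, A i j * F (β i)) / F c := by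
    intro j
    rw [hβ' j, map_div₀, map_sum]
    congr 1
    exact Finset.sum_congr rfl fun i _ => by rw [map_mul, hFA]
  have key : ∀ t, ∑ j, frob (p ^ e') m (-ℓ) (β' j) * h' j t
      = (c / frob (p ^ e') m (-ℓ) c) * ∑ j, frob (p ^ e') m (-ℓ) (β j) * h j t := by
    intro t
    simp only [hfrob]
    calc ∑ j, F (β' j) * h' j t
        = (∑ j, ∑ i, (A i j * h' j t) * F (β i)) / F c := by
          rw [Finset.sum_div]
          refine Finset.sum_congr rfl fun j _ => ?_
          rw [hFβ' j, div_mul_eq_mul_div, Finset.sum_mul]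
          congr 1
          exact Finset.sum_congr rfl fun i _ => by ring
      _ = (∑ i, F (β i) * (c * h i t)) / F c := by
          rw [Finset.sum_comm]
          congr 1
          refine Finset.sum_congr rfl fun i _ => ?_
          rw [hh' i t, ← Finset.sum_mul, mul_comm]
      _ = (c / F c) * ∑ i, F (β i) * h i t := by
          rw [div_mul_eq_mul_div, Finset.mul_sum]
          congr 1
          exact Finset.sum_congr rfl fun i _ => by ring
  have heq : (fun t => ∑ j, frob (p ^ e') m (-ℓ) (β' j) * h' j t) =
      (fun t => (c / frob (p ^ e') m (-ℓ) c) * ∑ j, frob (p ^ e') m (-ℓ) (β j) * h j t) :=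
    funext key
  refine ⟨heq, ?_⟩
  rw [heq]
  have hs : IsUnit (c / frob (p ^ e') m (-ℓ) c) := by
    apply isUnit_iff_ne_zero.mpr
    rw [hfrob]
    exact div_ne_zero hc0 hFc
  have hsmul : (fun t => (c / frob (p ^ e') m (-ℓ) c) * ∑ j, frob (p ^ e') m (-ℓ) (β j) * h j t)
      = (c / frob (p ^ e') m (-ℓ) c) • (fun t => ∑ j, frob (p ^ e') m (-ℓ) (β j) * h j t) := rfl
  rw [hsmul]
  exact Submodule.span_singleton_smul_eq hs _
end

section
/- Suppose h_0,…,h_{λ−1} are linearly independent over F_{q^m}, and let i_1,…,i_λ be distinct integers such that the λ×λ matrix whose s-th row is (1, β_1^{[−i_s]}, …, β_{λ−1}^{[−i_s]}) is invertible over F_{q^m}. For i ∈ ℤ let A_i denote the one-dimensional F_{q^m}-span of h_0 + Σ_{j=1}^{λ−1} β_j^{[−i]} h_j, and let A_0 be the span of h_0 + Σ_{j=1}^{λ−1} β_j h_j. Then for every u_0 ∈ A_0 there exists a unique λ-tuple (u_{i_1}, …, u_{i_λ}) ∈ A_{i_1} × ⋯ × A_{i_λ} such that u_{i_1} + ⋯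 + u_{i_λ} = u_0. -/
/-- every `u₀ ∈ A_0` decomposes uniquely as a sum of elements of
`A_{i_1}, …, A_{i_λ}`. -/
theorem stmt12 (q m n lam : ℕ) (hq : ∃ p e : ℕ, p.Prime ∧ 0 < e ∧ q = p ^ e)
    (hm : 0 < m) (hn : 0 < n) (hnm : n ≤ m) (hlam : 2 ≤ lam) [NeZero lam]
    (K : Type) [Field K] [Fintype K] (hcard : Fintype.card K = q ^ m)
    (h : Fin lam → Fin n → K) (β : Fin lam → K) (hβ0 : β 0 = 1)
    (hh : LinearIndependent K h)
    (ι : Fin lam → ℤ) (hι : Function.Injective ι)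
    (hdet : IsUnit (Matrix.det (Matrix.of fun s t : Fin lam =>
      frob q m (-(ι s)) (β t))))
    (v : ℤ → Fin n → K)
    (hv : ∀ i : ℤ, v i = fun t => ∑ j, frob q m (-i) (β j) * h j t) :
    ∀ u₀ ∈ Submodule.span K {v 0},
      ∃! w : Fin lam → Fin n → K,
        (∀ s, w s ∈ Submodule.span K {v (ι s)}) ∧ (∑ s, w s) = u₀ := by
  classical
  intro u₀ hu₀
  obtain ⟨c, hc⟩ := Submodule.mem_span_singleton.mp hu₀
  set M : Matrix (Fin lam) (Fin lam) K :=
    Matrix.of fun s t : Fin lam => frob q m (-(ι s)) (β t) with hMdef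
  have hMdet : IsUnit M.det := hdet
  have hfrob0 : ∀ x : K, frob q m 0 x = x := by
    intro x
    simp [frob]
  -- key computation
  have key : ∀ d : Fin lam → K,
      (∑ s, d s • v (ι s)) = fun t0 => ∑ j, (Matrix.vecMul d M) j * h j t0 := by
    intro d
    funext t0
    simp only [Finset.sum_apply, Pi.smul_apply, smul_eq_mul, hv, Matrix.vecMul,
      dotProduct, hMdef, Matrix.of_apply, Finset.sum_mul, Finset.mul_sum]
    rw [Finset.sum_comm]
    apply Finset.sum_congr rfl
    intro j _
    apply Finset.sum_congr rfl
    intro s _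
    ring
  have hv0 : u₀ = fun t0 => ∑ j, (c * β j) * h j t0 := by
    rw [← hc, hv 0]
    funext t0
    simp only [Pi.smul_apply, smul_eq_mul, neg_zero, hfrob0, Finset.mul_sum]
    apply Finset.sum_congr rfl
    intro j _
    ring
  set x : Fin lam → K := Matrix.vecMul (fun j => c * β j) M⁻¹ with hxdef
  have hxM : Matrix.vecMul x M = fun j => c * β j := by
    rw [hxdef, Matrix.vecMul_vecMul, Matrix.nonsing_inv_mul M hMdet, Matrix.vecMul_one]
  -- injectivity of vecMul · M
  have hinj : ∀ d : Fin lam → K, Matrix.vecMul d M = 0 → d = 0 := by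
    intro d hd
    have : Matrix.vecMul (Matrix.vecMul d M) M⁻¹ = d := by
      rw [Matrix.vecMul_vecMul, Matrix.mul_nonsing_inv M hMdet, Matrix.vecMul_one]
    rw [hd, Matrix.zero_vecMul] at this
    exact this.symm
  refine ⟨fun s => x s • v (ι s), ⟨fun s => Submodule.mem_span_singleton.mpr ⟨x s, rfl⟩, ?_⟩, ?_⟩
  · rw [key x, hxM, hv0]
  · rintro w' ⟨hw'mem, hw'sum⟩
    choose cs hcs using fun s => Submodule.mem_span_singleton.mp (hw'mem s)
    have hsum0 : (∑ s, (cs s - x s) • v (ι s)) = 0 := by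
      have h1 : (∑ s, cs s • v (ι s)) = u₀ := by
        rw [← hw'sum]
        exact Finset.sum_congr rfl fun s _ => hcs s
      have h2 : (∑ s, x s • v (ι s)) = u₀ := by rw [key x, hxM, hv0]
      calc (∑ s, (cs s - x s) • v (ι s))
          = (∑ s, cs s • v (ι s)) - (∑ s, x s • v (ι s)) := by
            rw [← Finset.sum_sub_distrib]
            exact Finset.sum_congr rfl fun s _ => sub_smul _ _ _
        _ = 0 := by rw [h1, h2, sub_self]
    have hcoef : (∑ j, (Matrix.vecMul (fun s => cs s - x s) M) j • h j) = 0 := by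
      rw [← hsum0, key (fun s => cs s - x s)]
      funext t0
      simp [Finset.sum_apply]
    have hzero := (Fintype.linearIndependent_iff.mp hh) _ hcoef
    have hd : (fun s => cs s - x s) = 0 := by
      apply hinj
      funext j
      simpa using hzero j
    funext s
    have hds : cs s = x s := by
      have := congrFun hd s
      simpa [sub_eq_zero] using this
    rw [← hcs s, hds]
end

section
/- For every set I of λ nonnegative integers, the polynomial f_0 divides f^I in F_q[X_1,…,X_{λ−1}]. -/
noncomputable section
open MvPolynomial

/-- `f^I = det(Mat^I)` where the `s`-th row of `Mat^I` is
`(1, X_1^{q^{i_s}}, X_2^{q^{i_s}}, …, X_{λ-1}^{q^{i_s}})`, the set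
`I = {i_1 < ⋯ < i_λ}` being given by its (strictly increasing) enumeration `ι`. -/
def fI (q lam : ℕ) (F : Type) [CommRing F] (ι : Fin lam → ℕ) : MvPolynomial ℕ F :=
  Matrix.det (Matrix.of fun s t : Fin lam =>
    if (t : ℕ) = 0 then 1 else X (t : ℕ) ^ q ^ ι s)

/-- `f_0 = ∏_{a∈F_q}(X_1+a) · ∏_{i=2}^{λ-1} ∏_{a_0,…,a_{i-1}∈F_q}
(X_i + ∑_{j=1}^{i-1} a_j X_j + a_0)`, where `F_q = {x | x^q = x}` is the subfield
with `q` elements. -/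
def f0 (q lam : ℕ) (F : Type) [Field F] [Fintype F] [DecidableEq F] : MvPolynomial ℕ F :=
  (∏ a ∈ Finset.univ.filter (fun x : F => x ^ q = x), (X 1 + C a)) *
    ∏ i ∈ Finset.Icc 2 (lam - 1),
      ∏ a : Fin i → {x : F // x ^ q = x},
        (X i + ∑ j : Fin i, C (a j).val * if (j : ℕ) = 0 then 1 else X (j : ℕ))

/-- `J_s = {1,…,λ+1} \ {s+1}`. -/
def Jset (lam s : ℕ) : Set ℕ := Set.Icc 1 (lam + 1) \ {s + 1}

/-- `L_s = {λ+1-t : t ∈ (J_s \ {1}) ∪ {0}}`. -/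
def Lset (lam s : ℕ) : Set ℕ := (fun t => lam + 1 - t) '' ((Jset lam s \ {1}) ∪ {0})

/-- `M_s = {λ+1-t : t ∈ J_s}`. -/
def MsetJ (lam s : ℕ) : Set ℕ := (fun t => lam + 1 - t) '' Jset lam s

namespace Stmt14Aux

/-- The linear polynomial `X i + ∑_{j<i} c_j * (X_j or 1)`. -/
def lin (F : Type) [Field F] (i : ℕ) (c : Fin i → F) : MvPolynomial ℕ F :=
  X i + ∑ j : Fin i, C (c j) * (if (j : ℕ) = 0 then 1 else X (j : ℕ))

variable {F : Type} [Field F]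

lemma eval_lin (i : ℕ) (c : Fin i → F) (v : ℕ → F) :
    eval v (lin F i c) = v i + ∑ j : Fin i, c j * (if (j : ℕ) = 0 then 1 else v (j : ℕ)) := by
  simp [lin, apply_ite (eval v)]

lemma sum_eval_zero (i : ℕ) (hi : 0 < i) (c : Fin i → F) (v : ℕ → F)
    (hv : ∀ m : Fin i, (m : ℕ) ≠ 0 → v m = 0) :
    ∑ j : Fin i, c j * (if (j : ℕ) = 0 then 1 else v (j : ℕ)) = c ⟨0, hi⟩ := by
  rw [Finset.sum_eq_single (⟨0, hi⟩ : Fin i)]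
  · simp
  · intro b _ hb
    have hb' : (b : ℕ) ≠ 0 := fun h => hb (Fin.ext h)
    rw [if_neg hb', hv b hb', mul_zero]
  · simp

lemma sum_eval_two (i : ℕ) (hi : 0 < i) (k : Fin i) (hk : (k : ℕ) ≠ 0) (c : Fin i → F)
    (v : ℕ → F) (hv : ∀ m : Fin i, (m : ℕ) ≠ 0 → m ≠ k → v m = 0) :
    ∑ j : Fin i, c j * (if (j : ℕ) = 0 then 1 else v (j : ℕ)) = c ⟨0, hi⟩ + c k * v k := by
  have key : ∀ j : Fin i, c j * (if (j : ℕ) = 0 then 1 else v (j : ℕ)) =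
      (if j = ⟨0, hi⟩ then c ⟨0, hi⟩ else 0) + (if j = k then c k * v (k : ℕ) else 0) := by
    intro j
    by_cases h0 : j = ⟨0, hi⟩
    · subst h0
      rw [if_pos rfl, if_pos rfl, mul_one, if_neg (fun h => hk (by rw [← h])), add_zero]
    · have hj0 : (j : ℕ) ≠ 0 := fun h => h0 (Fin.ext h)
      rw [if_neg hj0, if_neg h0, zero_add]
      by_cases hjk : j = k
      · subst hjk; rw [if_pos rfl]
      · rw [if_neg hjk, hv j hj0 hjk, mul_zero]
  rw [Finset.sum_congr rfl (fun j _ => key j), Finset.sum_add_distrib]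
  simp

lemma not_dvd_of_point (g g' : MvPolynomial ℕ F) (v : ℕ → F) (h0 : eval v g = 0)
    (h1 : eval v g' ≠ 0) : ¬ g ∣ g' := by
  rintro ⟨h, rfl⟩
  exact h1 (by rw [map_mul, h0, zero_mul])

lemma not_dvd_lin_ne (i i' : ℕ) (hi : 0 < i) (hi' : 0 < i') (hne : i ≠ i')
    (c : Fin i → F) (c' : Fin i' → F) : ¬ lin F i c ∣ lin F i' c' := by
  rcases lt_or_gt_of_ne hne with h | h
  · -- i < i'
    set A : F := -(c ⟨0, hi⟩) with hA
    set B : F := 1 - c' ⟨0, hi'⟩ - c' ⟨i, h⟩ * A with hB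
    set v : ℕ → F := fun k => if k = i then A else if k = i' then B else 0 with hv
    have hvi : v i = A := by simp [hv]
    have hvi' : v i' = B := by simp [hv, hne.symm, Ne.symm hne]
    apply not_dvd_of_point _ _ v
    · rw [eval_lin, sum_eval_zero i hi c v ?_, hvi, hA]
      · ring
      · intro m hm
        have h1 : (m : ℕ) ≠ i := by omega
        have h2 : (m : ℕ) ≠ i' := by have := m.isLt; omega
        simp [hv, h1, h2]
    · rw [eval_lin, sum_eval_two i' hi' ⟨i, h⟩ (by simp; omega) c' v ?_, hvi']
      · show B + (c' ⟨0, hi'⟩ + c' ⟨i, h⟩ * v i) ≠ 0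
        rw [hvi, hB]; intro hcon; apply one_ne_zero (α := F); linear_combination hcon
      · intro m hm hmk
        have h2 : (m : ℕ) ≠ i' := by have := m.isLt; omega
        have h1 : (m : ℕ) ≠ i := fun hh => hmk (Fin.ext hh)
        simp [hv, h1, h2]
  · -- i' < i
    set B : F := 1 - c' ⟨0, hi'⟩ with hB
    set A : F := -(c ⟨0, hi⟩ + c ⟨i', h⟩ * B) with hA
    set v : ℕ → F := fun k => if k = i then A else if k = i' then B else 0 with hv
    have hvi : v i = A := by simp [hv]
    have hvi' : v i' = B := by simp [hv, hne.symm, Ne.symm hne]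
    apply not_dvd_of_point _ _ v
    · rw [eval_lin, sum_eval_two i hi ⟨i', h⟩ (by simp; omega) c v ?_, hvi]
      · show A + (c ⟨0, hi⟩ + c ⟨i', h⟩ * v i') = 0
        rw [hvi', hA]; ring
      · intro m hm hmk
        have h1 : (m : ℕ) ≠ i := by have := m.isLt; omega
        have h2 : (m : ℕ) ≠ i' := fun hh => hmk (Fin.ext hh)
        simp [hv, h1, h2]
    · rw [eval_lin, sum_eval_zero i' hi' c' v ?_, hvi', hB]
      · intro hcon; apply one_ne_zero (α := F); linear_combination hcon
      · intro m hm
        have h1 : (m : ℕ) ≠ i := by have := m.isLt; omega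
        have h2 : (m : ℕ) ≠ i' := by omega
        simp [hv, h1, h2]

lemma not_dvd_lin_eq (i : ℕ) (hi : 0 < i) (c c' : Fin i → F) (hcc : c ≠ c') :
    ¬ lin F i c ∣ lin F i c' := by
  obtain ⟨j, hj⟩ := Function.ne_iff.mp hcc
  by_cases h0 : c ⟨0, hi⟩ = c' ⟨0, hi⟩
  · have hj0 : (j : ℕ) ≠ 0 := by
      intro hh
      exact hj (by rw [show j = ⟨0, hi⟩ from Fin.ext hh]; exact h0)
    set v : ℕ → F := fun k => if k = i then -(c j + c ⟨0, hi⟩) else if k = (j : ℕ) then 1 else 0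
      with hv
    have hji : (j : ℕ) ≠ i := by have := j.isLt; omega
    have hvi : v i = -(c j + c ⟨0, hi⟩) := by simp [hv]
    have hvj : v (j : ℕ) = 1 := by simp [hv, hji]
    apply not_dvd_of_point _ _ v
    · rw [eval_lin, sum_eval_two i hi j hj0 c v ?_, hvi, hvj]
      · ring
      · intro m hm hmj
        have h1 : (m : ℕ) ≠ i := by have := m.isLt; omega
        have h2 : (m : ℕ) ≠ (j : ℕ) := fun hh => hmj (Fin.ext hh)
        simp [hv, h1, h2]
    · rw [eval_lin, sum_eval_two i hi j hj0 c' v ?_, hvi, hvj]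
      · rw [← h0]; intro hcon; apply hj; linear_combination -hcon
      · intro m hm hmj
        have h1 : (m : ℕ) ≠ i := by have := m.isLt; omega
        have h2 : (m : ℕ) ≠ (j : ℕ) := fun hh => hmj (Fin.ext hh)
        simp [hv, h1, h2]
  · set v : ℕ → F := fun k => if k = i then -(c ⟨0, hi⟩) else 0 with hv
    have hvi : v i = -(c ⟨0, hi⟩) := by simp [hv]
    apply not_dvd_of_point _ _ v
    · rw [eval_lin, sum_eval_zero i hi c v ?_, hvi]
      · ring
      · intro m hm
        have h1 : (m : ℕ) ≠ i := by have := m.isLt; omega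
        simp [hv, h1]
    · rw [eval_lin, sum_eval_zero i hi c' v ?_, hvi]
      · intro hcon; apply h0; linear_combination -hcon
      · intro m hm
        have h1 : (m : ℕ) ≠ i := by have := m.isLt; omega
        simp [hv, h1]

lemma prime_X_nat (i : ℕ) : Prime (X i : MvPolynomial ℕ F) := by
  classical
  let e0 : Option ℕ ≃ ℕ := Denumerable.eqv (Option ℕ)
  let e : ℕ ≃ Option ℕ := (Equiv.swap i (e0 none)).trans e0.symm
  have he : e i = none := by simp [e, Equiv.swap_apply_left]
  rw [← MulEquiv.prime_iff (renameEquiv F e).toMulEquiv]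
  have h1 : (renameEquiv F e).toMulEquiv (X i) = (X none : MvPolynomial (Option ℕ) F) := by
    show renameEquiv F e (X i) = _
    rw [renameEquiv_apply, rename_X, he]
  rw [h1, ← MulEquiv.prime_iff (optionEquivLeft F ℕ).toMulEquiv]
  have h2 : (optionEquivLeft F ℕ).toMulEquiv (X none)
      = (Polynomial.X : Polynomial (MvPolynomial ℕ F)) := by
    show optionEquivLeft F ℕ (X none) = _
    exact optionEquivLeft_X_none F ℕ
  rw [h2]
  exact Polynomial.prime_X

lemma prime_lin (i : ℕ) (c : Fin i → F) : Prime (lin F i c) := by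
  classical
  set l : MvPolynomial ℕ F := ∑ j : Fin i, C (c j) * (if (j : ℕ) = 0 then 1 else X (j : ℕ))
    with hl
  have key : ∀ (z : ℕ → MvPolynomial ℕ F), (∀ k, k < i → z k = X k) → aeval z l = l := by
    intro z hz
    rw [hl, map_sum]
    refine Finset.sum_congr rfl fun j _ => ?_
    by_cases h : (j : ℕ) = 0 <;>
      simp [h, aeval_X, hz (j : ℕ) j.isLt, algebraMap_eq]
  set u : ℕ → MvPolynomial ℕ F := fun k => if k = i then X i - l else X k with hu
  set w : ℕ → MvPolynomial ℕ F := fun k => if k = i then X i + l else X k with hw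
  have hui : ∀ k, k < i → u k = X k := fun k hk => by simp [hu, Nat.ne_of_lt hk]
  have hwi : ∀ k, k < i → w k = X k := fun k hk => by simp [hw, Nat.ne_of_lt hk]
  have huw : (aeval u).comp (aeval w) = AlgHom.id F (MvPolynomial ℕ F) := by
    apply algHom_ext
    intro k
    by_cases hk : k = i
    · subst hk
      simp only [AlgHom.comp_apply, AlgHom.id_apply, aeval_X]
      rw [show w k = X k + l by simp [hw], map_add, aeval_X,
        show u k = X k - l by simp [hu], key u hui]
      ring
    · simp [AlgHom.comp_apply, aeval_X, hw, hu, hk]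
  have hwu : (aeval w).comp (aeval u) = AlgHom.id F (MvPolynomial ℕ F) := by
    apply algHom_ext
    intro k
    by_cases hk : k = i
    · subst hk
      simp only [AlgHom.comp_apply, AlgHom.id_apply, aeval_X]
      rw [show u k = X k - l by simp [hu], map_sub, aeval_X,
        show w k = X k + l by simp [hw], key w hwi]
      ring
    · simp [AlgHom.comp_apply, aeval_X, hw, hu, hk]
  set σ : MvPolynomial ℕ F ≃ₐ[F] MvPolynomial ℕ F := AlgEquiv.ofAlgHom (aeval u) (aeval w) huw hwu
    with hσ
  have hσlin : σ (lin F i c) = X i := by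
    show aeval u (lin F i c) = X i
    rw [lin, map_add, aeval_X, show u i = X i - l by simp [hu], key u hui]
    exact sub_add_cancel _ _
  rw [← MulEquiv.prime_iff σ.toMulEquiv]
  show Prime (σ (lin F i c))
  rw [hσlin]
  exact prime_X_nat i

lemma prod_primes_dvd' {M : Type*} [CommMonoidWithZero M] [IsCancelMulZero M] {α : Type*} [DecidableEq α]
    (s : Finset α) (f : α → M) (n : M) (hp : ∀ a ∈ s, Prime (f a)) (hd : ∀ a ∈ s, f a ∣ n)
    (hnd : ∀ a ∈ s, ∀ b ∈ s, a ≠ b → ¬ f a ∣ f b) : (∏ a ∈ s, f a) ∣ n := by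
  classical
  induction s using Finset.induction_on with
  | empty => simp
  | @insert a s' ha ih =>
    rw [Finset.prod_insert ha]
    have hps := hp a (Finset.mem_insert_self a s')
    obtain ⟨m, hm⟩ := ih (fun b hb => hp b (Finset.mem_insert_of_mem hb))
      (fun b hb => hd b (Finset.mem_insert_of_mem hb))
      (fun b hb b' hb' hne => hnd b (Finset.mem_insert_of_mem hb) b'
        (Finset.mem_insert_of_mem hb') hne)
    have hdm : f a ∣ (∏ b ∈ s', f b) * m := hm ▸ hd a (Finset.mem_insert_self a s')
    rcases hps.dvd_or_dvd hdm with h | h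
    · exfalso
      obtain ⟨b, hb, hdvd⟩ := (Prime.dvd_finset_prod_iff hps f).mp h
      exact hnd a (Finset.mem_insert_self a s') b (Finset.mem_insert_of_mem hb)
        (fun hab => ha (hab ▸ hb)) hdvd
    · obtain ⟨m', hm'⟩ := h
      exact ⟨m', by rw [hm, hm']; exact (mul_left_comm _ _ _).trans (mul_assoc _ _ _).symm⟩

lemma det_add_lincomb {ι R κ : Type*} [DecidableEq ι] [Fintype ι] [CommRing R] [DecidableEq κ]
    (M : Matrix ι ι R) (i : ι) (T : Finset κ) (e : κ → ι) (he : ∀ j ∈ T, e j ≠ i) (c : κ → R) :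
    (M.updateCol i (fun s => M s i + ∑ j ∈ T, c j * M s (e j))).det = M.det := by
  classical
  induction T using Finset.induction_on with
  | empty => simp [Matrix.updateCol_eq_self]
  | @insert j T hj ih =>
    have heT : ∀ k ∈ T, e k ≠ i := fun k hk => he k (Finset.mem_insert_of_mem hk)
    set A := M.updateCol i (fun s => M s i + ∑ k ∈ T, c k * M s (e k)) with hA
    have h1 : M.updateCol i (fun s => M s i + ∑ k ∈ insert j T, c k * M s (e k)) =
        A.updateCol i (fun s => A s i + c j • A s (e j)) := by
      ext s t
      by_cases ht : t = i
      · subst ht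
        rw [Matrix.updateCol_self, Matrix.updateCol_self, hA,
          Matrix.updateCol_self, Matrix.updateCol_ne (he j (Finset.mem_insert_self j T)),
          Finset.sum_insert hj]
        simp; ring
      · rw [Matrix.updateCol_ne ht, Matrix.updateCol_ne ht, hA, Matrix.updateCol_ne ht]
    rw [h1, Matrix.det_updateCol_add_smul_self A
      (Ne.symm (he j (Finset.mem_insert_self j T))) (c j)]
    exact ih heT

variable [Fintype F]

lemma lin_dvd_fI (q lam : ℕ) (hcard : Fintype.card F = q) (hlam : 2 ≤ lam)
    (ι : Fin lam → ℕ) (i : ℕ) (hi1 : 1 ≤ i) (hi2 : i ≤ lam - 1) (a : Fin i → F) :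
    lin F i a ∣ fI q lam F ι := by
  classical
  set p := ringChar F with hp0
  haveI : CharP F p := ringChar.charP F
  obtain ⟨n, hp, hcard'⟩ := FiniteField.card F p
  haveI : Fact p.Prime := ⟨hp⟩
  have hq : q = p ^ (n : ℕ) := by rw [← hcard, hcard']
  have hg : ∀ (x : MvPolynomial ℕ F) (k : ℕ),
      x ^ q ^ k = iterateFrobenius (MvPolynomial ℕ F) p ((n : ℕ) * k) x := by
    intro x k
    rw [iterateFrobenius_def, hq, ← pow_mul]
  have hil : i < lam := by omega
  set M : Matrix (Fin lam) (Fin lam) (MvPolynomial ℕ F) := Matrix.of fun s t : Fin lam =>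
    if (t : ℕ) = 0 then 1 else X (t : ℕ) ^ q ^ ι s with hM
  set i' : Fin lam := ⟨i, hil⟩ with hi'
  have hemb : ∀ j : Fin i, (j : ℕ) < lam := fun j => lt_trans j.isLt hil
  have hexp : ∀ s : Fin lam, p ^ ((n : ℕ) * ι s) = q ^ ι s := fun s => by
    rw [pow_mul, ← hq]
  -- column identity
  have hcol : ∀ s : Fin lam,
      M s i' + ∑ j : Fin i, C (a j) * M s ⟨(j : ℕ), hemb j⟩ = (lin F i a) ^ q ^ ι s := by
    intro s
    have hfrob : (lin F i a) ^ q ^ ι s = X i ^ q ^ ι s +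
        ∑ j : Fin i, C (a j) * (if (j : ℕ) = 0 then 1 else X (j : ℕ) ^ q ^ ι s) := by
      rw [hg (lin F i a) (ι s), lin]
      simp only [map_add, map_sum, map_mul, iterateFrobenius_def, hexp s]
      congr 1
      refine Finset.sum_congr rfl fun j _ => ?_
      rw [← C_pow, show a j ^ q ^ ι s = a j from by
          rw [← hcard]; exact FiniteField.pow_card_pow _ _,
        apply_ite (fun z : MvPolynomial ℕ F => z ^ q ^ ι s), one_pow]
    rw [hfrob]
    congr 1
    · simp only [hM, Matrix.of_apply, hi']
      exact if_neg (by omega)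
  -- determinant manipulation
  have h2 : fI q lam F ι = (M.updateCol i' fun s => (lin F i a) ^ q ^ ι s).det := by
    have hdet := det_add_lincomb M i' (Finset.univ : Finset (Fin i)) (fun j => ⟨(j : ℕ), hemb j⟩)
      (fun j _ => by
        intro hcon
        have : (j : ℕ) = i := congrArg Fin.val hcon
        omega)
      (fun j => C (a j))
    have hfun : (fun s => M s i' + ∑ j : Fin i, C (a j) * M s ⟨(j : ℕ), hemb j⟩) =
        fun s => (lin F i a) ^ q ^ ι s := funext hcol
    rw [fI, ← hM, ← hdet, hfun]
  have h3 : (fun s : Fin lam => (lin F i a) ^ q ^ ι s) =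
      (lin F i a) • (fun s : Fin lam => (lin F i a) ^ (q ^ ι s - 1)) := by
    funext s
    have hq1 : 1 ≤ q := by rw [hq]; exact Nat.one_le_pow _ _ hp.pos
    have hpow : 1 ≤ q ^ ι s := Nat.one_le_pow _ _ (by omega)
    rw [Pi.smul_apply, smul_eq_mul, ← pow_succ']
    congr 1
    omega
  rw [h2, h3, Matrix.det_updateCol_smul]
  exact Dvd.intro _ rfl

end Stmt14Aux

/-- `f_0` divides `f^I`. -/
theorem stmt14 (q lam : ℕ) (hq : ∃ p e : ℕ, p.Prime ∧ 0 < e ∧ q = p ^ e)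
    (hlam : 2 ≤ lam)
    (F : Type) [Field F] [Fintype F] [DecidableEq F] (hcard : Fintype.card F = q)
    (ι : Fin lam → ℕ) (hι : StrictMono ι) :
    f0 q lam F ∣ fI q lam F ι := by
  classical
  have hf0 : f0 q lam F = ∏ x ∈ (Finset.Icc 1 (lam - 1)).sigma
      (fun i => (Finset.univ : Finset (Fin i → {x : F // x ^ q = x}))),
      Stmt14Aux.lin F x.1 (fun j => (x.2 j).val) := by
    rw [Finset.prod_sigma]
    have hIcc : Finset.Icc 1 (lam - 1) = insert 1 (Finset.Icc 2 (lam - 1)) := by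
      ext m
      simp only [Finset.mem_Icc, Finset.mem_insert]
      omega
    rw [hIcc, Finset.prod_insert (by simp [Finset.mem_Icc])]
    rw [f0]
    congr 1
    · rw [Finset.prod_subtype (p := fun x : F => x ^ q = x)
        (Finset.univ.filter fun x : F => x ^ q = x)
        (fun x => by simp [Finset.mem_filter]) (fun b => X 1 + C b),
        ← Equiv.prod_comp (Equiv.funUnique (Fin 1) {x : F // x ^ q = x})
          (fun b : {x : F // x ^ q = x} => X 1 + C b.val)]
      refine Finset.prod_congr rfl fun aa _ => ?_
      simp [Stmt14Aux.lin]
  rw [hf0]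
  apply Stmt14Aux.prod_primes_dvd'
  · intro x _
    exact Stmt14Aux.prime_lin _ _
  · intro x hx
    rw [Finset.mem_sigma] at hx
    have hb := Finset.mem_Icc.mp hx.1
    exact Stmt14Aux.lin_dvd_fI q lam hcard hlam ι x.1 hb.1 hb.2 _
  · intro x hx y hy hxy
    obtain ⟨i, cx⟩ := x
    obtain ⟨i', cy⟩ := y
    rw [Finset.mem_sigma] at hx hy
    have hx1 : 1 ≤ i ∧ i ≤ lam - 1 := Finset.mem_Icc.mp hx.1
    have hy1 : 1 ≤ i' ∧ i' ≤ lam - 1 := Finset.mem_Icc.mp hy.1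
    rcases eq_or_ne i i' with heq | hne
    · subst heq
      have hcc' : (fun j => (cx j).val) ≠ fun j => (cy j).val := by
        intro h
        apply hxy
        have : cx = cy := funext fun j => Subtype.ext (congrFun h j)
        rw [this]
      exact Stmt14Aux.not_dvd_lin_eq i (by omega) _ _ hcc'
    · exact Stmt14Aux.not_dvd_lin_ne i i' (by omega) (by omega) hne _ _

end
end

section
/- For every set I = {i_1 < ⋯ < i_λ} of λ nonnegative integers, the power f_0^{q^{i_1}} divides f^I in F_q[X_1,…,X_{λ−1}], where i_1 = min I. -/
noncomputable section
open MvPolynomial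

/-! ### Auxiliary material for the proof of `stmt16`. -/

set_option linter.unusedSectionVars false
set_option maxHeartbeats 1000000

/-- The linear factor `X_i + ∑_j a_j X_j + a_0` of `f_0`. -/
def gpoly (q : ℕ) (F : Type) [Field F] (i : ℕ) (a : Fin i → {x : F // x ^ q = x}) :
    MvPolynomial ℕ F :=
  X i + ∑ j : Fin i, C (a j).val * if (j : ℕ) = 0 then 1 else X (j : ℕ)

theorem aux_prod_dvd {α ι : Type*} [DecidableEq ι] [CommMonoidWithZero α] (s : Finset ι) :
    ∀ (p : ι → α) (n : α), (∀ i ∈ s, Prime (p i)) →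
      (∀ i ∈ s, ∀ j ∈ s, i ≠ j → ¬ p i ∣ p j) → (∀ i ∈ s, p i ∣ n) → (∏ i ∈ s, p i) ∣ n := by
  induction s using Finset.induction_on with
  | empty => simp
  | insert a t ha ih =>
    intro p n hp hnd hdvd
    obtain ⟨m, hm⟩ := hdvd a (Finset.mem_insert_self a t)
    rw [Finset.prod_insert ha, hm]
    refine mul_dvd_mul_left _ (ih p m (fun i hi => hp i (Finset.mem_insert_of_mem hi))
      (fun i hi j hj hij => hnd i (Finset.mem_insert_of_mem hi) j (Finset.mem_insert_of_mem hj) hij)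
      (fun i hi => ?_))
    have hia : i ≠ a := fun h => ha (h ▸ hi)
    have h1 : p i ∣ p a * m := hm ▸ hdvd i (Finset.mem_insert_of_mem hi)
    rcases (hp i (Finset.mem_insert_of_mem hi)).2.2 _ _ h1 with h | h
    · exact absurd h (hnd i (Finset.mem_insert_of_mem hi) a (Finset.mem_insert_self a t) hia)
    · exact h

variable {q : ℕ} {F : Type} [Field F] [Fintype F] [DecidableEq F]

theorem pow_q_pow_eq {x : F} (hx : x ^ q = x) (m : ℕ) : x ^ q ^ m = x := by
  induction m with
  | zero => simp
  | succ m ih => rw [pow_succ, pow_mul, ih, hx]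

theorem eval_gpoly (x : ℕ → F) (i : ℕ) (a : Fin i → {x : F // x ^ q = x}) :
    eval x (gpoly q F i a)
      = x i + ∑ j : Fin i, (a j).val * (if (j : ℕ) = 0 then 1 else x (j : ℕ)) := by
  simp [gpoly, apply_ite (eval x)]

theorem sum_aux0 {m : ℕ} (hm : 0 < m) (b : Fin m → F) (x : ℕ → F)
    (hx : ∀ k : Fin m, (k : ℕ) ≠ 0 → x k = 0) :
    ∑ j : Fin m, b j * (if (j : ℕ) = 0 then 1 else x (j : ℕ)) = b ⟨0, hm⟩ := by
  rw [Finset.sum_eq_single (⟨0, hm⟩ : Fin m)]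
  · simp
  · intro j _ hj
    have : (j : ℕ) ≠ 0 := fun h => hj (Fin.ext h)
    simp [this, hx j this]
  · simp

theorem sum_aux1 {m : ℕ} (hm : 0 < m) (b : Fin m → F) (x : ℕ → F) (n0 : Fin m)
    (h0 : (n0 : ℕ) ≠ 0) (hx : ∀ k : Fin m, (k : ℕ) ≠ 0 → k ≠ n0 → x k = 0) :
    ∑ j : Fin m, b j * (if (j : ℕ) = 0 then 1 else x (j : ℕ)) = b ⟨0, hm⟩ + b n0 * x n0 := by
  have h01 : (⟨0, hm⟩ : Fin m) ≠ n0 := fun h => h0 (by rw [← h])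
  rw [← Finset.sum_subset (Finset.subset_univ ({⟨0, hm⟩, n0} : Finset (Fin m)))]
  · rw [Finset.sum_pair h01]
    simp [h0]
  · intro j _ hj
    simp only [Finset.mem_insert, Finset.mem_singleton] at hj
    push_neg at hj
    have : (j : ℕ) ≠ 0 := fun h => hj.1 (Fin.ext h)
    simp [this, hx j this hj.2]

theorem not_dvd_of_eval (g g' : MvPolynomial ℕ F) (x : ℕ → F)
    (h0 : eval x g = 0) (h1 : eval x g' ≠ 0) : ¬ g ∣ g' := by
  intro h
  have := map_dvd (eval x) h
  rw [h0, zero_dvd_iff] at this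
  exact h1 this

theorem gpoly_prime (i : ℕ) (a : Fin i → {x : F // x ^ q = x}) : Prime (gpoly q F i a) := by
  classical
  set d : Option ℕ ≃ ℕ := Denumerable.eqv (Option ℕ) with hd
  set e : ℕ ≃ Option ℕ := (Equiv.swap i (d none)).trans d.symm with he
  have hei : e i = none := by simp [he, Equiv.swap_apply_left]
  have hen : ∀ n : ℕ, n ≠ i → e n ≠ none := fun n hn h => hn (e.injective (h.trans hei.symm))
  set k : ℕ → ℕ := fun n => (e n).getD 0 with hk
  have hkn : ∀ n : ℕ, n ≠ i → e n = some (k n) := by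
    intro n hn
    cases h : e n with
    | none => exact absurd h (hen n hn)
    | some m => simp [hk, h]
  set φ : MvPolynomial ℕ F ≃ₐ[F] Polynomial (MvPolynomial ℕ F) :=
    (renameEquiv F e).trans (optionEquivLeft F ℕ) with hφ
  have key : φ (gpoly q F i a) = Polynomial.X -
      Polynomial.C (- ∑ j : Fin i, C (a j).val *
        if (j : ℕ) = 0 then 1 else X (k (j : ℕ))) := by
    rw [map_neg, sub_neg_eq_add]
    simp only [gpoly, map_add, map_sum, map_mul]
    congr 1
    · simp [hφ, hei]
    · refine Finset.sum_congr rfl (fun j _ => ?_)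
      have hji : (j : ℕ) ≠ i := Nat.ne_of_lt j.isLt
      rw [apply_ite φ, apply_ite Polynomial.C, map_one]
      congr 1
      · simp [hφ]
      · congr 1
        simp [hφ, hkn _ hji]
  have : Prime (φ (gpoly q F i a)) := key ▸ Polynomial.prime_X_sub_C _
  exact (MulEquiv.prime_iff φ.toRingEquiv.toMulEquiv).mp this

theorem gpoly_not_dvd_same {i : ℕ} (hi : 0 < i) (a a' : Fin i → {x : F // x ^ q = x})
    (hne : a ≠ a') : ¬ gpoly q F i a ∣ gpoly q F i a' := by
  obtain ⟨j0, hj0⟩ := Function.ne_iff.mp hne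
  by_cases h00 : (a ⟨0, hi⟩).val ≠ (a' ⟨0, hi⟩).val
  · set x : ℕ → F := fun n => if n = i then -(a ⟨0, hi⟩).val else 0 with hx
    refine not_dvd_of_eval _ _ x ?_ ?_
    · rw [eval_gpoly, sum_aux0 hi _ x (fun k hk => ?_)]
      · simp [hx]
      · have : (k : ℕ) ≠ i := Nat.ne_of_lt k.isLt
        simp [hx, this]
    · rw [eval_gpoly, sum_aux0 hi _ x (fun k hk => ?_)]
      · simp only [hx, if_pos rfl]
        intro h
        exact h00 (by linear_combination -h)
      · have : (k : ℕ) ≠ i := Nat.ne_of_lt k.isLt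
        simp [hx, this]
  · push_neg at h00
    have hj00 : (j0 : ℕ) ≠ 0 := by
      intro h
      exact hj0 (by rwa [show j0 = ⟨0, hi⟩ from Fin.ext h, Subtype.ext_iff])
    have hj0i : (j0 : ℕ) ≠ i := Nat.ne_of_lt j0.isLt
    set x : ℕ → F := fun n => if n = (j0 : ℕ) then 1
      else if n = i then -((a ⟨0, hi⟩).val + (a j0).val) else 0 with hx
    have hxvan : ∀ k : Fin i, (k : ℕ) ≠ 0 → k ≠ j0 → x k = 0 := by
      intro k _ hkj
      have h1 : (k : ℕ) ≠ (j0 : ℕ) := fun h => hkj (Fin.ext h)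
      have h2 : (k : ℕ) ≠ i := Nat.ne_of_lt k.isLt
      simp [hx, h1, h2]
    have hxj0 : x (j0 : ℕ) = 1 := by simp [hx]
    have hij0 : i ≠ (j0 : ℕ) := Ne.symm hj0i
    have hxi : x i = -((a ⟨0, hi⟩).val + (a j0).val) := by
      simp [hx, hij0]
    refine not_dvd_of_eval _ _ x ?_ ?_
    · rw [eval_gpoly, sum_aux1 hi _ x j0 hj00 hxvan, hxj0, hxi]
      ring
    · rw [eval_gpoly, sum_aux1 hi _ x j0 hj00 hxvan, hxj0, hxi, h00]
      intro h
      apply hj0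
      have : (a j0).val = (a' j0).val := by linear_combination -h
      exact Subtype.ext this

theorem gpoly_not_dvd_lt {i i' : ℕ} (h1 : 0 < i) (hii : i < i')
    (a : Fin i → {x : F // x ^ q = x}) (a' : Fin i' → {x : F // x ^ q = x}) :
    ¬ gpoly q F i a ∣ gpoly q F i' a' := by
  have h1' : 0 < i' := h1.trans hii
  have hne : i ≠ i' := Nat.ne_of_lt hii
  set A0 : F := (a ⟨0, h1⟩).val with hA0
  set B0 : F := (a' ⟨0, h1'⟩).val with hB0
  set Bi : F := (a' ⟨i, hii⟩).val with hBi
  set x : ℕ → F := fun n => if n = i then -A0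
    else if n = i' then 1 - (B0 + Bi * (-A0)) else 0 with hx
  have hxi : x i = -A0 := by simp [hx]
  have hxi' : x i' = 1 - (B0 + Bi * (-A0)) := by simp [hx, Ne.symm hne]
  refine not_dvd_of_eval _ _ x ?_ ?_
  · rw [eval_gpoly, sum_aux0 h1 _ x (fun k hk => ?_), hxi]
    · simp only [← hA0]
      ring
    · have hk1 : (k : ℕ) ≠ i := Nat.ne_of_lt k.isLt
      have hk2 : (k : ℕ) ≠ i' := Nat.ne_of_lt (k.isLt.trans hii)
      simp [hx, hk1, hk2]
  · have hi0 : ((⟨i, hii⟩ : Fin i') : ℕ) ≠ 0 := h1.ne'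
    rw [eval_gpoly, sum_aux1 h1' _ x ⟨i, hii⟩ hi0 (fun k hk hkne => ?_)]
    · simp only [show ((⟨i, hii⟩ : Fin i') : ℕ) = i from rfl, hxi, hxi', ← hB0, ← hBi]
      intro h
      have : (1 : F) = 0 := by linear_combination h
      simp at this
    · have hk1 : (k : ℕ) ≠ i := fun h => hkne (Fin.ext h)
      have hk2 : (k : ℕ) ≠ i' := Nat.ne_of_lt k.isLt
      simp [hx, hk1, hk2]

theorem gpoly_not_dvd_gt {i i' : ℕ} (h1' : 0 < i') (hii : i' < i)
    (a : Fin i → {x : F // x ^ q = x}) (a' : Fin i' → {x : F // x ^ q = x}) :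
    ¬ gpoly q F i a ∣ gpoly q F i' a' := by
  have h1 : 0 < i := h1'.trans hii
  have hne : i ≠ i' := (Nat.ne_of_lt hii).symm
  set A0 : F := (a ⟨0, h1⟩).val with hA0
  set B0 : F := (a' ⟨0, h1'⟩).val with hB0
  set Ai : F := (a ⟨i', hii⟩).val with hAi
  set x : ℕ → F := fun n => if n = i' then 1 - B0
    else if n = i then -(A0 + Ai * (1 - B0)) else 0 with hx
  have hxi' : x i' = 1 - B0 := by simp [hx]
  have hxi : x i = -(A0 + Ai * (1 - B0)) := by simp [hx, hne]
  refine not_dvd_of_eval _ _ x ?_ ?_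
  · have hi0 : ((⟨i', hii⟩ : Fin i) : ℕ) ≠ 0 := h1'.ne'
    rw [eval_gpoly, sum_aux1 h1 _ x ⟨i', hii⟩ hi0 (fun k hk hkne => ?_)]
    · simp only [show ((⟨i', hii⟩ : Fin i) : ℕ) = i' from rfl, hxi, hxi', ← hA0, ← hAi]
      ring
    · have hk1 : (k : ℕ) ≠ i' := fun h => hkne (Fin.ext h)
      have hk2 : (k : ℕ) ≠ i := Nat.ne_of_lt k.isLt
      simp [hx, hk1, hk2]
  · rw [eval_gpoly, sum_aux0 h1' _ x (fun k hk => ?_), hxi']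
    · simp only [← hB0]
      intro h
      have : (1 : F) = 0 := by linear_combination h
      simp at this
    · have hk1 : (k : ℕ) ≠ i' := Nat.ne_of_lt k.isLt
      have hk2 : (k : ℕ) ≠ i := Nat.ne_of_lt (k.isLt.trans hii)
      simp [hx, hk1, hk2]

theorem dvd_sub_bind (v : ℕ → MvPolynomial ℕ F) (g : MvPolynomial ℕ F)
    (hv : ∀ n, g ∣ (X n - v n)) (f : MvPolynomial ℕ F) : g ∣ f - bind₁ v f := by
  induction f using MvPolynomial.induction_on with
  | C a => simp
  | add f1 f2 h1 h2 =>
    rw [map_add]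
    have := dvd_add h1 h2
    convert this using 1
    ring
  | mul_X f n hf =>
    rw [map_mul, bind₁_X_right]
    have : f * X n - bind₁ v f * v n
        = (f - bind₁ v f) * X n + bind₁ v f * (X n - v n) := by ring
    rw [this]
    exact dvd_add (hf.mul_right _) ((hv n).mul_left _)

theorem gpoly_dvd_fI (p e₀ : ℕ) [CharP F p] (hp : p.Prime) (hqpe : q = p ^ e₀)
    (lam : ℕ) (ι : Fin lam → ℕ) (i : ℕ) (h1 : 0 < i) (h2 : i < lam)
    (a : Fin i → {x : F // x ^ q = x}) :
    gpoly q F i a ∣ fI q lam F ι := by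
  haveI : Fact p.Prime := ⟨hp⟩
  haveI : ExpChar (MvPolynomial ℕ F) p := ExpChar.prime hp
  set rest : MvPolynomial ℕ F :=
    ∑ j : Fin i, C (a j).val * if (j : ℕ) = 0 then 1 else X (j : ℕ) with hrest
  set v : ℕ → MvPolynomial ℕ F := fun n => if n = i then -rest else X n with hvdef
  have hv : ∀ n, gpoly q F i a ∣ X n - v n := by
    intro n
    by_cases h : n = i
    · rw [hvdef]
      simp [h, sub_neg_eq_add, gpoly, hrest]
    · simp [hvdef, h]
  have hbind : bind₁ v (fI q lam F ι) = 0 := by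
    rw [fI, AlgHom.map_det]
    set A : Matrix (Fin lam) (Fin lam) (MvPolynomial ℕ F) :=
      (Matrix.of fun s t : Fin lam =>
        if (t : ℕ) = 0 then 1 else X (t : ℕ) ^ q ^ ι s).map (bind₁ v) with hA
    set c : Fin lam := ⟨i, h2⟩ with hc
    set w : Fin lam → MvPolynomial ℕ F :=
      fun k => if hk : (k : ℕ) < i then -(C ((a ⟨k, hk⟩).val)) else 0 with hw
    have hwc : w c = 0 := by simp [hw, hc]
    have hcol : ∀ s, A s c = ∑ k, w k • A s k := by
      intro s
      have hQ : q ^ ι s = p ^ (e₀ * ι s) := by rw [hqpe, ← pow_mul]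
      have hres : ∑ k, w k • A s k
          = ∑ j : Fin i, w (Fin.castLEEmb h2.le j) • A s (Fin.castLEEmb h2.le j) := by
        rw [← Finset.sum_map Finset.univ (Fin.castLEEmb h2.le) (fun k => w k • A s k)]
        refine (Finset.sum_subset (Finset.subset_univ _) (fun k _ hk => ?_)).symm
        have hki : ¬ (k : ℕ) < i := by
          intro hlt
          exact hk (Finset.mem_map.mpr ⟨⟨(k : ℕ), hlt⟩, Finset.mem_univ _, Fin.ext rfl⟩)
        simp only [hw, dif_neg hki, zero_smul]
      have hterm : ∀ j : Fin i, w (Fin.castLEEmb h2.le j) • A s (Fin.castLEEmb h2.le j)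
          = -(C (a j).val * if (j : ℕ) = 0 then 1 else X (j : ℕ) ^ q ^ ι s) := by
        intro j
        have hlt : ((Fin.castLEEmb h2.le j : Fin lam) : ℕ) < i := j.isLt
        have hji : (j : ℕ) ≠ i := Nat.ne_of_lt j.isLt
        have hwj : w (Fin.castLEEmb h2.le j) = -(C (a j).val) := by
          simp only [hw, dif_pos hlt]
          have : (⟨((Fin.castLEEmb h2.le j : Fin lam) : ℕ), hlt⟩ : Fin i) = j := Fin.ext rfl
          rw [this]
        have hAj : A s (Fin.castLEEmb h2.le j)
            = if (j : ℕ) = 0 then 1 else X (j : ℕ) ^ q ^ ι s := by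
          rw [hA]
          simp only [Matrix.map_apply, Matrix.of_apply]
          have hco : ((Fin.castLEEmb h2.le j : Fin lam) : ℕ) = (j : ℕ) := rfl
          rw [hco, apply_ite (bind₁ v), map_one, map_pow, bind₁_X_right, hvdef]
          simp [hji]
        rw [hwj, hAj, smul_eq_mul]
        ring
      have hAc : A s c = (-rest) ^ q ^ ι s := by
        rw [hA]
        simp only [Matrix.map_apply, Matrix.of_apply, hc]
        rw [if_neg h1.ne', map_pow, bind₁_X_right, hvdef]
        simp
      have hneg : (-rest) ^ q ^ ι s = -(rest ^ q ^ ι s) := by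
        rw [hQ, neg_pow, neg_one_pow_char_pow, neg_one_mul]
      have hfrob : rest ^ q ^ ι s
          = ∑ j : Fin i, C (a j).val * if (j : ℕ) = 0 then 1 else X (j : ℕ) ^ q ^ ι s := by
        rw [hrest, hQ, sum_pow_char_pow]
        refine Finset.sum_congr rfl (fun j _ => ?_)
        rw [mul_pow, ← map_pow, ← hQ, pow_q_pow_eq (a j).2, apply_ite (· ^ q ^ ι s), one_pow]
      rw [hres, hAc, hneg, hfrob, ← Finset.sum_neg_distrib]
      exact Finset.sum_congr rfl (fun j _ => (hterm j).symm)
    have : A = A.updateCol c (fun s => ∑ k, w k • A s k) := by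
      refine Matrix.ext (fun s t => ?_)
      rw [Matrix.updateCol_apply]
      split
      · rename_i h
        rw [h]
        exact hcol s
      · rfl
    calc A.det = (A.updateCol c (fun s => ∑ k, w k • A s k)).det := by rw [← this]
      _ = w c • A.det := Matrix.det_updateCol_sum A c w
      _ = 0 := by rw [hwc, zero_smul]
  have hsub := dvd_sub_bind v _ hv (fI q lam F ι)
  rwa [hbind, sub_zero] at hsub

theorem expand_mul' (m n : ℕ) (f : MvPolynomial ℕ F) :
    expand m (expand n f) = expand (m * n) f := by
  have h : (expand m).comp (expand n) = (expand (m * n) : MvPolynomial ℕ F →ₐ[F] _) := by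
    apply MvPolynomial.algHom_ext
    intro i
    simp only [AlgHom.comp_apply, expand_X, map_pow, pow_mul]
  calc expand m (expand n f) = ((expand m).comp (expand n)) f := rfl
    _ = expand (m * n) f := by rw [h]

theorem expand_q_pow (p e₀ : ℕ) [CharP F p] (hp : p.Prime) (hqpe : q = p ^ e₀)
    (hcard : Fintype.card F = q) (k : ℕ) (f : MvPolynomial ℕ F) :
    expand (q ^ k) f = f ^ q ^ k := by
  haveI : Fact p.Prime := ⟨hp⟩
  haveI : ExpChar (MvPolynomial ℕ F) p := ExpChar.prime hp
  have h1 : ∀ g : MvPolynomial ℕ F, expand q g = g ^ q := by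
    have hh : ((expand q : MvPolynomial ℕ F →ₐ[F] MvPolynomial ℕ F) :
        MvPolynomial ℕ F →+* MvPolynomial ℕ F) = iterateFrobenius (MvPolynomial ℕ F) p e₀ := by
      apply MvPolynomial.ringHom_ext
      · intro a
        rw [iterateFrobenius_def]
        show (expand q) (C a) = C a ^ p ^ e₀
        rw [expand_C, ← map_pow, ← hqpe, ← hcard, FiniteField.pow_card]
      · intro n
        rw [iterateFrobenius_def]
        show (expand q) (X n) = X n ^ p ^ e₀
        rw [expand_X, hqpe]
    intro g
    calc expand q g = iterateFrobenius (MvPolynomial ℕ F) p e₀ g := by rw [← hh]; rfl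
      _ = g ^ p ^ e₀ := iterateFrobenius_def p e₀ g
      _ = g ^ q := by rw [hqpe]
  induction k with
  | zero => simp [expand_one_apply]
  | succ k ih =>
    have : expand (q ^ (k + 1)) f = expand (q ^ k) (expand q f) := by
      rw [expand_mul', ← pow_succ]
    rw [this, h1, map_pow, ih, ← pow_mul, ← pow_succ]

theorem f0_eq (lam : ℕ) (hlam : 2 ≤ lam) (hcard : Fintype.card F = q) :
    f0 q lam F = ∏ i ∈ Finset.Icc 1 (lam - 1),
      ∏ a : Fin i → {x : F // x ^ q = x}, gpoly q F i a := by
  have h1 : (1 : ℕ) ≤ lam - 1 := le_tsub_of_add_le_left hlam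
  have hins : Finset.Icc 1 (lam - 1) = insert 1 (Finset.Icc 2 (lam - 1)) := by
    ext x
    simp only [Finset.mem_Icc, Finset.mem_insert]
    omega
  rw [f0, hins, Finset.prod_insert (by simp)]
  congr 1
  · have hfil : Finset.univ.filter (fun x : F => x ^ q = x) = Finset.univ := by
      refine Finset.filter_true_of_mem (fun x _ => ?_)
      rw [← hcard]
      exact FiniteField.pow_card x
    have hg : ∀ a : Fin 1 → {x : F // x ^ q = x}, gpoly q F 1 a = X 1 + C (a 0).val := by
      intro a
      rw [gpoly]
      simp
    rw [hfil]
    refine (Fintype.prod_bijective (fun a : Fin 1 → {x : F // x ^ q = x} => (a 0).val)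
      ⟨fun a b hab => ?_, fun x => ?_⟩ _ _ (fun a => ?_)).symm
    · funext j
      have : j = 0 := Subsingleton.elim j 0
      subst this
      exact Subtype.ext hab
    · exact ⟨fun _ => ⟨x, by rw [← hcard]; exact FiniteField.pow_card x⟩, rfl⟩
    · rw [hg]

theorem fI_expand (lam : ℕ) [NeZero lam] (ι : Fin lam → ℕ) (hmono : ∀ s, ι 0 ≤ ι s) :
    fI q lam F ι = expand (q ^ ι 0) (fI q lam F (fun s => ι s - ι 0)) := by
  rw [fI, fI, AlgHom.map_det]
  congr 1
  refine Matrix.ext (fun s t => ?_)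
  simp only [AlgHom.mapMatrix_apply, Matrix.map_apply, Matrix.of_apply]
  rw [apply_ite (expand (q ^ ι 0)), map_one, map_pow, expand_X]
  by_cases ht : (t : ℕ) = 0
  · simp [ht]
  · simp only [if_neg ht]
    rw [← pow_mul, ← pow_add, Nat.add_sub_cancel' (hmono s)]

/-- `f_0^{q^{i_1}}` divides `f^I`, where `i_1 = min I`. -/
theorem stmt16 (q lam : ℕ) (hq : ∃ p e : ℕ, p.Prime ∧ 0 < e ∧ q = p ^ e)
    (hlam : 2 ≤ lam) [NeZero lam]
    (F : Type) [Field F] [Fintype F] [DecidableEq F] (hcard : Fintype.card F = q)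
    (ι : Fin lam → ℕ) (hι : StrictMono ι) :
    f0 q lam F ^ q ^ ι 0 ∣ fI q lam F ι := by
  classical
  obtain ⟨p, e₀, hp, he, hqpe⟩ := hq
  obtain ⟨n, hrp, hcardr⟩ := FiniteField.card F (ringChar F)
  have hpr : p = ringChar F := by
    have hh1 : q = ringChar F ^ (n : ℕ) := by rw [← hcard]; exact hcardr
    have hh2 : p ∣ ringChar F ^ (n : ℕ) := by
      rw [← hh1, hqpe]
      exact dvd_pow_self p he.ne'
    exact (Nat.prime_dvd_prime_iff_eq hp hrp).mp (hp.dvd_of_dvd_pow hh2)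
  haveI : CharP F p := by rw [hpr]; exact ringChar.charP F
  have hmono : ∀ s, ι 0 ≤ ι s := fun s => hι.monotone (Fin.zero_le s)
  have hstep1 : fI q lam F ι = expand (q ^ ι 0) (fI q lam F (fun s => ι s - ι 0)) :=
    fI_expand lam ι hmono
  have hdvd : f0 q lam F ∣ fI q lam F (fun s => ι s - ι 0) := by
    rw [f0_eq lam hlam hcard, Finset.prod_sigma']
    refine aux_prod_dvd _ _ _ (fun x _ => gpoly_prime x.1 x.2) (fun x hx y hy hxy => ?_)
      (fun x hx => ?_)
    · obtain ⟨i, a⟩ := x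
      obtain ⟨i', a'⟩ := y
      simp only [Finset.mem_sigma, Finset.mem_Icc] at hx hy
      rcases lt_trichotomy i i' with h | h | h
      · exact gpoly_not_dvd_lt (by omega) h a a'
      · subst h
        refine gpoly_not_dvd_same (by omega : 0 < i) a a' (fun hh => hxy ?_)
        rw [hh]
      · exact gpoly_not_dvd_gt (by omega) h a a'
    · simp only [Finset.mem_sigma, Finset.mem_Icc] at hx
      exact gpoly_dvd_fI p e₀ hp hqpe lam _ x.1 (by omega) (by omega) x.2
  rw [hstep1, expand_q_pow p e₀ hp hqpe hcard]
  exact pow_dvd_pow_of_dvd hdvd _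

end
end

section
/- Let A = (a_{i,j})_{i,j=0}^{λ−1} be an invertible λ×λ matrix with entries in F_q. In the field of rational functions F_q(X_1,…,X_{λ−1}), set D = a_{0,0} + Σ_{i=1}^{λ−1} a_{i,0} X_i (a nonzero polynomial) and φ_j = (a_{0,j} + Σ_{i=1}^{λ−1} a_{i,j} X_i)/D for j = 1,…,λ−1. Then for every set I = {i_1 < ⋯ < i_λ} of λ nonnegative integers, f^I(φ_1,…,φ_{λ−1}) = det(A) · D^{−N} · f^I(X_1,…,X_{λ−1}) in F_q(X_1,…,X_{λ−1}), where N = Σ_{s=1}^{λ} q^{i_s}. -/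
noncomputable section
open MvPolynomial

/-- substituting `X_j ↦ φ_j = (a_{0,j} + ∑_i a_{i,j} X_i)/D` into `f^I`
multiplies it by `det(A)·D^{-N}` with `N = ∑_s q^{i_s}`. -/
theorem stmt17 (q lam : ℕ) (hq : ∃ p e : ℕ, p.Prime ∧ 0 < e ∧ q = p ^ e)
    (hlam : 2 ≤ lam) [NeZero lam]
    (F : Type) [Field F] [Fintype F] [DecidableEq F] (hcard : Fintype.card F = q)
    (A : Matrix (Fin lam) (Fin lam) F) (hAinv : IsUnit A.det)
    (ξ : Fin lam → MvPolynomial ℕ F)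
    (hξ : ∀ i : Fin lam, ξ i = if (i : ℕ) = 0 then 1 else X (i : ℕ))
    (D : MvPolynomial ℕ F) (hD : D = ∑ i, C (A i 0) * ξ i)
    (φ : ℕ → FractionRing (MvPolynomial ℕ F))
    (hφ : ∀ (j : ℕ) (hj : j < lam), φ j =
      algebraMap (MvPolynomial ℕ F) (FractionRing (MvPolynomial ℕ F))
          (∑ i, C (A i ⟨j, hj⟩) * ξ i) /
        algebraMap (MvPolynomial ℕ F) (FractionRing (MvPolynomial ℕ F)) D)
    (ι : Fin lam → ℕ) (hι : StrictMono ι) (N : ℕ) (hN : N = ∑ s, q ^ ι s) :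
    D ≠ 0 ∧
    eval₂ ((algebraMap (MvPolynomial ℕ F) (FractionRing (MvPolynomial ℕ F))).comp
        (C : F →+* MvPolynomial ℕ F)) φ (fI q lam F ι) =
      algebraMap (MvPolynomial ℕ F) (FractionRing (MvPolynomial ℕ F)) (C A.det) *
        algebraMap (MvPolynomial ℕ F) (FractionRing (MvPolynomial ℕ F)) (fI q lam F ι) /
        (algebraMap (MvPolynomial ℕ F) (FractionRing (MvPolynomial ℕ F)) D) ^ N := by
  classical
  obtain ⟨p, e, hp, he, hqe⟩ := hq
  haveI : Fact p.Prime := ⟨hp⟩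
  haveI hpF : CharP F p := by
    obtain ⟨n, hrp, hcard'⟩ := FiniteField.card F (ringChar F)
    have hpr : p = ringChar F := by
      have hdvd : p ∣ ringChar F ^ (n : ℕ) := by
        rw [← hcard', hcard, hqe]; exact dvd_pow_self p he.ne'
      exact (Nat.prime_dvd_prime_iff_eq hp hrp).mp (hp.dvd_of_dvd_pow hdvd)
    rw [hpr]; exact ringChar.charP F
  have hfix : ∀ (a : F) (m : ℕ), a ^ q ^ m = a := by
    intro a m
    rw [← hcard]
    exact FiniteField.pow_card_pow m a
  set Pm : Fin lam → MvPolynomial ℕ F := fun t => ∑ i, C (A i t) * ξ i with hPm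
  have key : ∀ (t : Fin lam) (m : ℕ),
      Pm t ^ q ^ m = ∑ i, (C (A i t) : MvPolynomial ℕ F) * ξ i ^ q ^ m := by
    intro t m
    have hq' : q ^ m = p ^ (e * m) := by rw [hqe, ← pow_mul]
    rw [hPm, hq', sum_pow_char_pow]
    refine Finset.sum_congr rfl fun i _ => ?_
    rw [mul_pow, ← C_pow, ← hq', hfix]
  -- D ≠ 0
  have hcol : ¬ (∀ i, A i 0 = 0) := by
    intro h
    have : A.det = 0 := Matrix.det_eq_zero_of_column_eq_zero 0 h
    rw [this] at hAinv
    exact (not_isUnit_zero hAinv).elim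
  have hDne : D ≠ 0 := by
    intro hD0
    apply hcol
    intro i
    by_cases hi : (i : ℕ) = 0
    · have hi0 : i = 0 := Fin.ext hi
      have h0 : constantCoeff D = A 0 0 := by
        rw [hD, map_sum, Finset.sum_eq_single 0]
        · simp [hξ]
        · intro b _ hb
          have hbne : (b : ℕ) ≠ 0 := fun h => hb (Fin.ext h)
          simp [hξ, hbne]
        · simp
      rw [hD0, map_zero] at h0
      rw [hi0, ← h0]
    · have h0 : MvPolynomial.coeff (Finsupp.single (i : ℕ) 1) D = A i 0 := by
        rw [hD, MvPolynomial.coeff_sum, Finset.sum_eq_single i]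
        · simp [hξ, hi, MvPolynomial.coeff_X]
        · intro b _ hb
          by_cases hb0 : (b : ℕ) = 0
          · simp only [hξ, hb0, if_pos, MvPolynomial.coeff_C_mul, MvPolynomial.coeff_one]
            rw [if_neg (fun h => one_ne_zero (Finsupp.single_eq_zero.mp h.symm))]
            rw [mul_zero]
          · have hbi : (b : ℕ) ≠ (i : ℕ) := fun h => hb (Fin.ext h)
            simp [hξ, hb0, MvPolynomial.coeff_X', Finsupp.single_eq_single_iff, hbi]
        · simp
      rw [hD0, MvPolynomial.coeff_zero] at h0
      exact h0.symm
  refine ⟨hDne, ?_⟩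
  set α : MvPolynomial ℕ F →+* FractionRing (MvPolynomial ℕ F) :=
    algebraMap (MvPolynomial ℕ F) (FractionRing (MvPolynomial ℕ F)) with hα
  have hαinj : Function.Injective α :=
    IsFractionRing.injective (MvPolynomial ℕ F) (FractionRing (MvPolynomial ℕ F))
  have hαD : α D ≠ 0 := fun h => hDne (hαinj (by rw [h, map_zero]))
  set eh : MvPolynomial ℕ F →+* FractionRing (MvPolynomial ℕ F) :=
    eval₂Hom (α.comp (C : F →+* MvPolynomial ℕ F)) φ with heh
  have main : eh (fI q lam F ι) * (α D) ^ N = α (C A.det) * α (fI q lam F ι) := by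
    have h1 : (α D) ^ N = ∏ s : Fin lam, (α D) ^ q ^ ι s := by
      rw [hN, ← Finset.prod_pow_eq_pow_sum]
    rw [fI, RingHom.map_det, h1, mul_comm, ← Matrix.det_mul_column]
    have h2 : (Matrix.of fun s t : Fin lam => (α D) ^ q ^ ι s *
          (eh.mapMatrix (Matrix.of fun s t : Fin lam =>
            if (t : ℕ) = 0 then 1 else X (t : ℕ) ^ q ^ ι s)) s t) =
        (((Matrix.of fun s i : Fin lam => ξ i ^ q ^ ι s) * A.map (C : F →+* _)).map α) := by
      ext s t
      simp only [Matrix.map_apply, Matrix.mul_apply, Matrix.of_apply,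
        RingHom.mapMatrix_apply, Matrix.map_apply]
      have hrhs : α (∑ i, ξ i ^ q ^ ι s * C (A i t)) = α (Pm t ^ q ^ ι s) := by
        rw [key t (ι s)]
        congr 1
        refine Finset.sum_congr rfl fun i _ => ?_
        simp [mul_comm]
      rw [hrhs]
      have hDP : Pm 0 = D := hD.symm
      by_cases ht : (t : ℕ) = 0
      · have ht0 : t = 0 := Fin.ext ht
        simp only [ht, if_true, map_one, mul_one]
        rw [ht0, hDP, map_pow]
      · simp only [ht, if_false, map_pow]
        have hXt : eh (X (t : ℕ)) = φ (t : ℕ) := eval₂Hom_X' _ _ _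
        rw [hXt, hφ (t : ℕ) t.isLt, ← mul_pow, Fin.eta,
          mul_div_cancel₀ _ hαD, ← map_pow]
    rw [h2, ← RingHom.mapMatrix_apply, ← RingHom.map_det, Matrix.det_mul,
      ← RingHom.mapMatrix_apply, ← RingHom.map_det, mul_comm, map_mul]
    congr 2
    congr 1
    ext s t
    simp only [Matrix.of_apply]
    rw [hξ t]
    by_cases ht : (t : ℕ) = 0
    · simp [ht]
    · simp [ht]
  rw [eq_div_iff (pow_ne_zero N hαD)]
  exact main

end
end

section
/- Fix s ∈ {1,…,λ−1} and α_s ∈ F_{q^m}, and set F_s = f^{L_λ}·f^{M_s} − α_s·f^{M_λ}·f^{L_s} ∈ F_{q^m}[X_1,…,X_{λ−1}]. Then f_0^{q+1} divides F_s in F_{q^m}[X_1,…,X_{λ−1}], and the total degree of F_s is at most q^{λ+1} + q^{λ} + 2·Σ_{j=1}^{λ−1} q^{j} + 1 − q^{λ−s}. -/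
noncomputable section
open MvPolynomial

namespace Stmt18
open Matrix in
theorem _transposeCheck : True := trivial
open Matrix
variable {q lam : ℕ} {K : Type} [Field K]
def mat (q lam : ℕ) (K : Type) [CommRing K] (ι : Fin lam → ℕ) :
    Matrix (Fin lam) (Fin lam) (MvPolynomial ℕ K) :=
  Matrix.of fun s t : Fin lam => if (t : ℕ) = 0 then 1 else X (t : ℕ) ^ q ^ ι s
lemma fI_eq_det (ι : Fin lam → ℕ) : fI q lam K ι = (mat q lam K ι).det := rfl

lemma totalDegree_fI_le (hq1 : 1 ≤ q) (ι : Fin lam → ℕ) (hι : Monotone ι) (h0 : 0 < lam) :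
    (fI q lam K ι).totalDegree ≤ ∑ s ∈ Finset.univ.erase (⟨0, h0⟩ : Fin lam), q ^ ι s := by
  rw [fI_eq_det, Matrix.det_apply']
  refine (totalDegree_finset_sum _ _).trans (Finset.sup_le fun σ _ => ?_)
  have hε0 : (((Equiv.Perm.sign σ : ℤ)) : MvPolynomial ℕ K).totalDegree = 0 := by
    rw [← map_intCast (C : K →+* MvPolynomial ℕ K)]
    exact totalDegree_C _
  have step1 : ((Equiv.Perm.sign σ : ℤ) * ∏ i : Fin lam, mat q lam K ι (σ i) i).totalDegree
      ≤ (∏ i : Fin lam, mat q lam K ι (σ i) i).totalDegree := by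
    refine (totalDegree_mul _ _).trans ?_
    rw [hε0, zero_add]
  refine step1.trans ?_
  refine (totalDegree_finset_prod _ _).trans ?_
  have step2 : ∀ t : Fin lam, (mat q lam K ι (σ t) t).totalDegree
      ≤ if (t : ℕ) = 0 then 0 else q ^ ι (σ t) := by
    intro t
    simp only [mat, Matrix.of_apply]
    split_ifs with h
    · simp
    · simp [totalDegree_X_pow]
  refine (Finset.sum_le_sum fun t _ => step2 t).trans ?_
  have hz : (if ((⟨0, h0⟩ : Fin lam) : ℕ) = 0 then 0 else q ^ ι (σ ⟨0, h0⟩)) = 0 := by simp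
  rw [← Finset.sum_erase (f := fun t : Fin lam => if (t : ℕ) = 0 then 0 else q ^ ι (σ t)) Finset.univ hz]
  have step3 : ∀ t ∈ Finset.univ.erase (⟨0, h0⟩ : Fin lam),
      (if (t : ℕ) = 0 then 0 else q ^ ι (σ t)) = q ^ ι (σ t) := by
    intro t ht
    rw [if_neg]
    intro hval
    exact (Finset.mem_erase.mp ht).1 (Fin.ext hval)
  rw [Finset.sum_congr rfl step3]
  have e1 := Finset.sum_erase_add Finset.univ (fun t => q ^ ι (σ t))
    (Finset.mem_univ (⟨0, h0⟩ : Fin lam))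
  have e2 := Finset.sum_erase_add Finset.univ (fun s => q ^ ι s)
    (Finset.mem_univ (⟨0, h0⟩ : Fin lam))
  have e3 : ∑ t : Fin lam, q ^ ι (σ t) = ∑ s : Fin lam, q ^ ι s :=
    Equiv.sum_comp σ fun s => q ^ ι s
  have e4 : q ^ ι ⟨0, h0⟩ ≤ q ^ ι (σ ⟨0, h0⟩) :=
    Nat.pow_le_pow_right hq1 (hι (by simp [Fin.le_def]))
  omega

lemma apply_zero_eq {S : Set ℕ} (ι : Fin lam → ℕ) (hι : StrictMono ι)
    (hr : Set.range ι = S) (h0 : 0 < lam) {v : ℕ} (hv : v ∈ S) (hmin : ∀ x ∈ S, v ≤ x) :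
    ι ⟨0, h0⟩ = v := by
  have h1 : ι ⟨0, h0⟩ ∈ S := hr ▸ Set.mem_range_self _
  obtain ⟨s, hs⟩ : v ∈ Set.range ι := hr ▸ hv
  have h2 := hι.monotone (show (⟨0, h0⟩ : Fin lam) ≤ s by simp [Fin.le_def])
  have h3 := hmin _ h1
  omega

lemma sum_pow_range (ι : Fin lam → ℕ) (hι : StrictMono ι) (T : Finset ℕ)
    (hT : Set.range ι = ↑T) (h0 : 0 < lam) :
    (∑ s ∈ Finset.univ.erase (⟨0, h0⟩ : Fin lam), q ^ ι s) + q ^ ι ⟨0, h0⟩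
      = ∑ x ∈ T, q ^ x := by
  rw [Finset.sum_erase_add _ _ (Finset.mem_univ _)]
  have hTi : T = Finset.univ.image ι := Finset.coe_injective (by
    rw [Finset.coe_image, Finset.coe_univ, Set.image_univ, hT])
  rw [hTi, Finset.sum_image (fun a _ b _ h => hι.injective h)]

def csum (q : ℕ) (K : Type) [Field K] (i : ℕ) (a : Fin i → {x : K // x ^ q = x}) :
    MvPolynomial ℕ K :=
  ∑ j : Fin i, C (a j).val * if (j : ℕ) = 0 then 1 else X (j : ℕ)

def lin (q : ℕ) (K : Type) [Field K] (i : ℕ) (a : Fin i → {x : K // x ^ q = x}) :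
    MvPolynomial ℕ K :=
  X i + ∑ j : Fin i, C (a j).val * if (j : ℕ) = 0 then 1 else X (j : ℕ)

lemma lin_eq (i : ℕ) (a : Fin i → {x : K // x ^ q = x}) :
    lin q K i a = X i + csum q K i a := rfl

lemma pow_q_fix {x : K} (hx : x ^ q = x) (n : ℕ) : x ^ q ^ n = x := by
  induction n with
  | zero => simp
  | succ n ih => rw [pow_succ, pow_mul, ih, hx]

section Char
variable {p e : ℕ}

lemma csum_pow [CharP K p] (hp : p.Prime) (hqpe : q = p ^ e)
    (i : ℕ) (a : Fin i → {x : K // x ^ q = x}) (n : ℕ) :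
    csum q K i a ^ q ^ n
      = ∑ j : Fin i, C (a j).val * if (j : ℕ) = 0 then 1 else X (j : ℕ) ^ q ^ n := by
  haveI : Fact p.Prime := ⟨hp⟩
  haveI : ExpChar (MvPolynomial ℕ K) p := .prime hp
  have hqq : q ^ n = p ^ (e * n) := by rw [hqpe, ← pow_mul]
  rw [csum, hqq, sum_pow_char_pow]
  refine Finset.sum_congr rfl fun j _ => ?_
  rw [mul_pow, ← C_pow]
  have h1 : (a j).val ^ p ^ (e * n) = (a j).val := by
    rw [pow_mul, ← hqpe]; exact pow_q_fix (a j).2 n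
  rw [h1]
  congr 1
  split_ifs with h
  · exact one_pow _
  · rfl

end Char

lemma aeval_csum_fix (i : ℕ) (a : Fin i → {x : K // x ^ q = x})
    (g : ℕ → MvPolynomial ℕ K) (hg : ∀ j, j < i → g j = X j) :
    aeval g (csum q K i a) = csum q K i a := by
  rw [csum, map_sum]
  refine Finset.sum_congr rfl fun j _ => ?_
  rw [_root_.map_mul, aeval_C, algebraMap_eq]
  congr 1
  split_ifs with h
  · exact map_one _
  · rw [aeval_X, hg _ j.isLt]

lemma X_pow_dvd_fI (hq1 : 1 ≤ q) (ι : Fin lam → ℕ) (hι : Monotone ι) (h0 : 0 < lam)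
    (t0 : Fin lam) (ht : (t0 : ℕ) ≠ 0) :
    (X (t0 : ℕ) : MvPolynomial ℕ K) ^ q ^ ι ⟨0, h0⟩ ∣ fI q lam K ι := by
  rw [fI_eq_det, Matrix.det_apply']
  refine Finset.dvd_sum fun σ _ => Dvd.dvd.mul_left ?_ _
  have h1 : (X (t0 : ℕ) : MvPolynomial ℕ K) ^ q ^ ι ⟨0, h0⟩ ∣ mat q lam K ι (σ t0) t0 := by
    simp only [mat, Matrix.of_apply, if_neg ht]
    refine pow_dvd_pow _ (Nat.pow_le_pow_right hq1 (hι ?_))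
    simp [Fin.le_def]
  exact h1.trans (Finset.dvd_prod_of_mem _ (Finset.mem_univ t0))

section Main
variable {p e : ℕ}

lemma map_fI_eq [CharP K p] (hp : p.Prime) (hqpe : q = p ^ e)
    (ι : Fin lam → ℕ) (i : ℕ) (hi1 : 1 ≤ i) (hilam : i < lam)
    (a : Fin i → {x : K // x ^ q = x}) :
    aeval (fun j => if j = i then X i + csum q K i a else X j) (fI q lam K ι)
      = fI q lam K ι := by
  set c := csum q K i a with hc
  set φ : MvPolynomial ℕ K →ₐ[K] MvPolynomial ℕ K :=
    aeval (fun j => if j = i then X i + c else X j) with hφ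
  show φ (fI q lam K ι) = fI q lam K ι
  have hφX : ∀ j : ℕ, j ≠ i → φ (X j) = X j := by
    intro j hj; rw [hφ, aeval_X, if_neg hj]
  have hφXi : φ (X i) = X i + c := by rw [hφ, aeval_X, if_pos rfl]
  rw [fI_eq_det]
  have hdet : φ ((mat q lam K ι).det) = ((mat q lam K ι).map φ).det := by
    rw [show ((mat q lam K ι).map ⇑φ)
      = (φ : MvPolynomial ℕ K →+* MvPolynomial ℕ K).mapMatrix (mat q lam K ι) from rfl]
    exact RingHom.map_det _ _
  rw [hdet]
  -- now prove det of mapped matrix equals det of mat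
  set ii : Fin lam := ⟨i, hilam⟩ with hii
  set N := (mat q lam K ι)ᵀ with hN
  set cc : Fin lam → MvPolynomial ℕ K :=
    fun k => if h : (k : ℕ) < i then C (a ⟨k, h⟩).val else 0 with hcc
  set S : Finset (Fin lam) := Finset.univ.filter (fun k : Fin lam => (k : ℕ) < i) with hS
  have hiiS : ii ∉ S := by simp [hS, hii]
  have key : ((mat q lam K ι).map ⇑φ)ᵀ
      = N.updateRow ii ((1 : MvPolynomial ℕ K) • N ii + ∑ k ∈ S, cc k • N k) := by
    refine Matrix.ext fun k s => ?_
    by_cases hk : k = ii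
    · subst hk
      rw [Matrix.updateRow_self]
      have hrhs : ((1 : MvPolynomial ℕ K) • N ii + ∑ k ∈ S, cc k • N k) s
          = N ii s + ∑ k ∈ S, cc k * N k s := by
        simp [Finset.sum_apply]
      rw [hrhs]
      have hival : ((ii : Fin lam) : ℕ) = i := rfl
      have hlhs : ((mat q lam K ι).map ⇑φ)ᵀ ii s = φ (X i ^ q ^ ι s) := by
        simp only [Matrix.transpose_apply, Matrix.map_apply, mat, Matrix.of_apply, hival,
          if_neg (by omega : ¬ i = 0)]
      have hNii : N ii s = X (i : ℕ) ^ q ^ ι s := by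
        simp only [hN, Matrix.transpose_apply, mat, Matrix.of_apply, hival,
          if_neg (by omega : ¬ i = 0)]
      haveI : Fact p.Prime := ⟨hp⟩
      haveI : ExpChar (MvPolynomial ℕ K) p := .prime hp
      have hfrob : (X (i : ℕ) + c) ^ q ^ ι s = X (i : ℕ) ^ q ^ ι s + c ^ q ^ ι s := by
        have hqq : q ^ ι s = p ^ (e * ι s) := by rw [hqpe, ← pow_mul]
        rw [hqq]
        exact add_pow_char_pow (x := X (i : ℕ)) (y := c) (p := p) (n := e * ι s)
      rw [hlhs, map_pow, hφXi, hNii, hfrob, hc, csum_pow hp hqpe]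
      congr 1
      have hSim : S = Finset.univ.image (Fin.castLE (le_of_lt hilam) : Fin i → Fin lam) := by
        ext x
        simp only [hS, Finset.mem_filter, Finset.mem_univ, true_and, Finset.mem_image]
        constructor
        · intro h; exact ⟨⟨(x : ℕ), h⟩, by ext; simp⟩
        · rintro ⟨j, -, rfl⟩; simpa using j.isLt
      rw [hSim, Finset.sum_image (fun x _ y _ hxy => Fin.castLE_injective _ hxy)]
      refine Finset.sum_congr rfl fun j _ => ?_
      have h1 : cc (Fin.castLE (le_of_lt hilam) j) = C (a j).val := by
        have hjlt : ((Fin.castLE (le_of_lt hilam) j : Fin lam) : ℕ) < i := j.isLt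
        simp only [hcc]
        rw [dif_pos hjlt]
        rfl
      have h2 : N (Fin.castLE (le_of_lt hilam) j) s
          = if (j : ℕ) = 0 then 1 else X (j : ℕ) ^ q ^ ι s := by
        simp only [hN, Matrix.transpose_apply, mat, Matrix.of_apply]
        rfl
      rw [h1, h2]
    · rw [Matrix.updateRow_ne hk]
      have hkval : (k : ℕ) ≠ i := fun h => hk (Fin.ext h)
      show φ ((mat q lam K ι) s k) = N k s
      have hNk : N k s = (mat q lam K ι) s k := rfl
      rw [hNk]
      simp only [mat, Matrix.of_apply]
      by_cases hk0 : (k : ℕ) = 0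
      · rw [if_pos hk0, _root_.map_one]
      · rw [if_neg hk0, map_pow, hφX _ hkval]
  have hdet2 : ((mat q lam K ι).map φ).det = (mat q lam K ι).det := by
    rw [← Matrix.det_transpose ((mat q lam K ι).map φ), key,
      Matrix.det_updateRow_sum_aux N S hiiS cc 1, one_smul, hN, Matrix.det_transpose]
  rw [hdet2]

lemma lin_pow_dvd [CharP K p] (hp : p.Prime) (hqpe : q = p ^ e) (hq1 : 1 ≤ q)
    (ι : Fin lam → ℕ) (hι : Monotone ι) (h0 : 0 < lam)
    (i : ℕ) (hi1 : 1 ≤ i) (hilam : i < lam) (a : Fin i → {x : K // x ^ q = x}) :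
    lin q K i a ^ q ^ ι ⟨0, h0⟩ ∣ fI q lam K ι := by
  have hX := X_pow_dvd_fI (K := K) hq1 ι hι h0 ⟨i, hilam⟩ (by simpa using (by omega : i ≠ 0))
  set φ : MvPolynomial ℕ K →ₐ[K] MvPolynomial ℕ K :=
    aeval (fun j => if j = i then X i + csum q K i a else X j) with hφ
  have := map_dvd φ hX
  rw [map_pow] at this
  have hXi : φ (X (i : ℕ)) = X i + csum q K i a := by rw [hφ, aeval_X, if_pos rfl]
  have hfix : φ (fI q lam K ι) = fI q lam K ι := map_fI_eq hp hqpe ι i hi1 hilam a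
  rw [show (((⟨i, hilam⟩ : Fin lam) : ℕ)) = i from rfl] at this
  rw [hXi, hfix, ← lin_eq] at this
  exact this

end Main

lemma prime_X_nat (n : ℕ) : Prime (X n : MvPolynomial ℕ K) := by
  set e0 : ℕ ≃ Option ℕ := (Denumerable.eqv (Option ℕ)).symm with he0
  set g : ℕ ≃ Option ℕ := (Equiv.swap n (e0.symm none)).trans e0 with hg
  have hgn : g n = none := by
    rw [hg]
    simp [Equiv.swap_apply_left]
  set E : MvPolynomial ℕ K ≃ₐ[K] Polynomial (MvPolynomial ℕ K) :=
    (renameEquiv K g).trans (optionEquivLeft K ℕ) with hE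
  have hEX : E (X n) = Polynomial.X := by
    rw [hE]
    simp only [AlgEquiv.trans_apply, renameEquiv_apply, rename_X, hgn, optionEquivLeft_X_none]
  have : Prime (E (X n)) := hEX ▸ Polynomial.prime_X
  exact (MulEquiv.prime_iff (p := X n) E.toRingEquiv.toMulEquiv).mp this

lemma prime_lin (i : ℕ) (hi : 1 ≤ i) (a : Fin i → {x : K // x ^ q = x}) :
    Prime (lin q K i a) := by
  set c := csum q K i a with hc
  set f : MvPolynomial ℕ K →ₐ[K] MvPolynomial ℕ K :=
    aeval (fun j => if j = i then X i + c else X j) with hf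
  set f' : MvPolynomial ℕ K →ₐ[K] MvPolynomial ℕ K :=
    aeval (fun j => if j = i then X i - c else X j) with hf'
  have hfc : f c = c := aeval_csum_fix i a _ (fun j hj => if_neg (by omega))
  have hf'c : f' c = c := aeval_csum_fix i a _ (fun j hj => if_neg (by omega))
  have h1 : f.comp f' = AlgHom.id K _ := by
    refine algHom_ext fun j => ?_
    rw [AlgHom.comp_apply, AlgHom.id_apply]
    by_cases hj : j = i
    · subst hj
      rw [hf', aeval_X, if_pos rfl, map_sub]
      rw [show f (X j) = X j + c from by rw [hf, aeval_X, if_pos rfl], hfc]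
      ring
    · rw [hf', aeval_X, if_neg hj, hf, aeval_X, if_neg hj]
  have h2 : f'.comp f = AlgHom.id K _ := by
    refine algHom_ext fun j => ?_
    rw [AlgHom.comp_apply, AlgHom.id_apply]
    by_cases hj : j = i
    · subst hj
      rw [hf, aeval_X, if_pos rfl, map_add]
      rw [show f' (X j) = X j - c from by rw [hf', aeval_X, if_pos rfl], hf'c]
      ring
    · rw [hf, aeval_X, if_neg hj, hf', aeval_X, if_neg hj]
  set ψ := AlgEquiv.ofAlgHom f f' h1 h2 with hψ
  have hlin : lin q K i a = ψ (X i) := by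
    rw [hψ, lin_eq, ← hc]
    show _ = f (X i)
    rw [hf, aeval_X, if_pos rfl]
  rw [hlin]
  exact (MulEquiv.prime_iff (p := X i) ψ.toRingEquiv.toMulEquiv).mpr (prime_X_nat i)

lemma prod_pow_dvd {R : Type} [CommRing R] [IsDomain R] {ι' : Type*} [DecidableEq ι']
    (s : Finset ι') (g : ι' → R) (k : ℕ)
    (hpr : ∀ x ∈ s, Prime (g x))
    (hnd : ∀ x ∈ s, ∀ y ∈ s, x ≠ y → ¬ g x ∣ g y) :
    ∀ F : R, (∀ x ∈ s, g x ^ k ∣ F) → (∏ x ∈ s, g x ^ k) ∣ F := by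
  induction s using Finset.induction_on with
  | empty => intro F _; simpa using one_dvd F
  | @insert a t ha ih =>
    intro F hdvd
    rw [Finset.prod_insert ha]
    obtain ⟨G, hG⟩ := hdvd a (Finset.mem_insert_self a t)
    rw [hG]
    refine mul_dvd_mul_left _ (ih (fun x hx => hpr x (Finset.mem_insert_of_mem hx))
      (fun x hx y hy hxy => hnd x (Finset.mem_insert_of_mem hx) y
        (Finset.mem_insert_of_mem hy) hxy) G ?_)
    intro x hxt
    have hxa : x ≠ a := fun h => ha (h ▸ hxt)
    have hprx := hpr x (Finset.mem_insert_of_mem hxt)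
    have h1 : g x ^ k ∣ g a ^ k * G := hG ▸ hdvd x (Finset.mem_insert_of_mem hxt)
    refine hprx.pow_dvd_of_dvd_mul_left k ?_ h1
    intro hdd
    exact hnd x (Finset.mem_insert_of_mem hxt) a (Finset.mem_insert_self a t) hxa
      (hprx.dvd_of_dvd_pow hdd)


lemma eval_lin (v : ℕ → K) (n : ℕ) (b : Fin n → {x : K // x ^ q = x}) :
    eval v (lin q K n b)
      = v n + ∑ j : Fin n, (b j).val * (if (j : ℕ) = 0 then 1 else v (j : ℕ)) := by
  simp [lin, apply_ite (eval v)]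

lemma sum_eval_aux0 {n : ℕ} (hn : 0 < n) (b : Fin n → K) (v : ℕ → K)
    (hv : ∀ j : Fin n, (j : ℕ) ≠ 0 → v (j : ℕ) = 0) :
    (∑ j : Fin n, b j * (if (j : ℕ) = 0 then 1 else v (j : ℕ))) = b ⟨0, hn⟩ := by
  rw [Finset.sum_eq_single (⟨0, hn⟩ : Fin n)]
  · simp
  · intro j _ hj
    have hjv : (j : ℕ) ≠ 0 := fun h => hj (Fin.ext h)
    rw [if_neg hjv, hv j hjv, mul_zero]
  · intro h; exact absurd (Finset.mem_univ _) h

lemma sum_eval_aux {n : ℕ} (hn : 0 < n) (b : Fin n → K) (v : ℕ → K)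
    (j₀ : Fin n) (hj₀ : (j₀ : ℕ) ≠ 0)
    (hv : ∀ j : Fin n, (j : ℕ) ≠ 0 → j ≠ j₀ → v (j : ℕ) = 0) :
    (∑ j : Fin n, b j * (if (j : ℕ) = 0 then 1 else v (j : ℕ)))
      = b ⟨0, hn⟩ + b j₀ * v (j₀ : ℕ) := by
  have hne : (⟨0, hn⟩ : Fin n) ≠ j₀ := fun h => hj₀ (by rw [← h])
  rw [← Finset.sum_subset (Finset.subset_univ ({⟨0, hn⟩, j₀} : Finset (Fin n)))]
  · rw [Finset.sum_pair hne, if_pos rfl, if_neg hj₀, mul_one]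
  · intro j _ hj
    simp only [Finset.mem_insert, Finset.mem_singleton] at hj
    push_neg at hj
    have hjv : (j : ℕ) ≠ 0 := fun h => hj.1 (Fin.ext h)
    rw [if_neg hjv, hv j hjv hj.2, mul_zero]

lemma lin_not_dvd {i i' : ℕ} (hi : 1 ≤ i) (hi' : 1 ≤ i')
    (a : Fin i → {x : K // x ^ q = x}) (a' : Fin i' → {x : K // x ^ q = x})
    (hne : (⟨i, a⟩ : Σ n : ℕ, Fin n → {x : K // x ^ q = x}) ≠ ⟨i', a'⟩) :
    ¬ lin q K i a ∣ lin q K i' a' := by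
  intro hdvd
  obtain ⟨u, hu⟩ := hdvd
  have key : ∀ v : ℕ → K, eval v (lin q K i a) = 0 → eval v (lin q K i' a') = 0 := by
    intro v hv
    rw [hu, eval_mul, hv, zero_mul]
  -- notation
  set A0 : K := (a ⟨0, hi⟩).val with hA0
  set A0' : K := (a' ⟨0, hi'⟩).val with hA0'
  rcases lt_trichotomy i i' with hii | hii | hii
  · -- i < i'
    set emb' : Fin i' := ⟨i, hii⟩ with hemb'
    set w : K := 1 - A0' - (a' emb').val * (-A0) with hw
    set v : ℕ → K := fun t => if t = i then -A0 else if t = i' then w else 0 with hv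
    have hvi : v i = -A0 := by rw [hv]; simp
    have hvi' : v i' = w := by rw [hv]; simp [show i' ≠ i by omega]
    have h1 : eval v (lin q K i a) = 0 := by
      rw [eval_lin, sum_eval_aux0 (by omega) _ v ?hv]
      · rw [hvi, ← hA0]; ring
      case hv =>
        intro j hj
        have hjlt : (j : ℕ) < i := j.isLt
        rw [hv]
        simp [show (j : ℕ) ≠ i by omega, show (j : ℕ) ≠ i' by omega]
    have h2 : eval v (lin q K i' a') = 0 := key v h1
    rw [eval_lin, sum_eval_aux (by omega) _ v emb' (show i ≠ 0 by omega) ?hv2] at h2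
    case hv2 =>
      intro j hjv hjne
      have hjlt : (j : ℕ) < i' := j.isLt
      have hjni : (j : ℕ) ≠ i := fun h => hjne (Fin.ext h)
      rw [hv]
      simp [hjni, show (j : ℕ) ≠ i' by omega]
    rw [hvi', ← hA0'] at h2
    have hembv : ((emb' : Fin i') : ℕ) = i := rfl
    rw [hembv, hvi] at h2
    rw [hw] at h2
    have hcontra : (1 : K) = 0 := by linear_combination h2
    exact one_ne_zero hcontra
  · -- i = i'
    subst hii
    have ha : a ≠ a' := by
      intro h
      exact hne (by rw [h])
    obtain ⟨j₀, hj₀⟩ : ∃ j₀ : Fin i, a j₀ ≠ a' j₀ := by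
      by_contra h
      push_neg at h
      exact ha (funext h)
    have hvalne : (a j₀).val ≠ (a' j₀).val := fun h => hj₀ (Subtype.ext h)
    by_cases hj0 : (j₀ : ℕ) = 0
    · -- differ at constant term
      have hj₀eq : j₀ = ⟨0, hi⟩ := Fin.ext hj0
      set v : ℕ → K := fun t => if t = i then -A0 else 0 with hv
      have hvi : v i = -A0 := by rw [hv]; simp
      have hvz : ∀ j : Fin i, (j : ℕ) ≠ 0 → v (j : ℕ) = 0 := by
        intro j hj
        rw [hv]
        simp [show (j : ℕ) ≠ i by have := j.isLt; omega]
      have h1 : eval v (lin q K i a) = 0 := by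
        rw [eval_lin, sum_eval_aux0 (by omega) _ v hvz, hvi, ← hA0]; ring
      have h2 : eval v (lin q K i a') = 0 := key v h1
      rw [eval_lin, sum_eval_aux0 (by omega) _ v hvz, hvi, ← hA0'] at h2
      have : A0 = A0' := by linear_combination -h2
      rw [hj₀eq] at hvalne
      exact hvalne (by rw [← hA0, ← hA0']; exact this)
    · -- differ at a nonzero coefficient
      set d : K := (a' j₀).val - (a j₀).val with hd
      have hdne : d ≠ 0 := sub_ne_zero.mpr (fun h => hvalne h.symm)
      set w : K := d⁻¹ * (1 - (A0' - A0)) with hw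
      set z : K := -A0 - (a j₀).val * w with hz
      have hj₀i : (j₀ : ℕ) ≠ i := by have := j₀.isLt; omega
      set v : ℕ → K := fun t => if t = (j₀ : ℕ) then w else if t = i then z else 0 with hv
      have hvj₀ : v (j₀ : ℕ) = w := by rw [hv]; simp
      have hij₀ : i ≠ (j₀ : ℕ) := fun h => hj₀i h.symm
      have hvi : v i = z := by rw [hv]; simp [hij₀]
      have hvz : ∀ j : Fin i, (j : ℕ) ≠ 0 → j ≠ j₀ → v (j : ℕ) = 0 := by
        intro j hjv hjne
        have hjni : (j : ℕ) ≠ (j₀ : ℕ) := fun h => hjne (Fin.ext h)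
        rw [hv]
        simp [hjni, show (j : ℕ) ≠ i by have := j.isLt; omega]
      have h1 : eval v (lin q K i a) = 0 := by
        rw [eval_lin, sum_eval_aux (by omega) _ v j₀ hj0 hvz, hvj₀, hvi, ← hA0, hz]
        ring
      have h2 : eval v (lin q K i a') = 0 := key v h1
      rw [eval_lin, sum_eval_aux (by omega) _ v j₀ hj0 hvz, hvj₀, hvi, ← hA0', hz] at h2
      -- h2 : -A0 - a j₀ * w + (A0' + a' j₀ * w) = 0  i.e. (A0' - A0) + d * w = 0
      have h3 : (A0' - A0) + d * w = 0 := by rw [hd]; linear_combination h2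
      have h4 : d * w = 1 - (A0' - A0) := by
        rw [hw, ← mul_assoc, mul_inv_cancel₀ hdne, one_mul]
      rw [h4] at h3
      have hcontra : (1 : K) = 0 := by linear_combination h3
      exact one_ne_zero hcontra
  · -- i' < i
    set emb : Fin i := ⟨i', hii⟩ with hemb
    set w : K := 1 - A0' with hw
    set z : K := -A0 - (a emb).val * w with hz
    set v : ℕ → K := fun t => if t = i' then w else if t = i then z else 0 with hv
    have hvi' : v i' = w := by rw [hv]; simp
    have hvi : v i = z := by rw [hv]; simp [show i ≠ i' by omega]
    have h1 : eval v (lin q K i a) = 0 := by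
      rw [eval_lin, sum_eval_aux (by omega) _ v emb (show i' ≠ 0 by omega) ?hv3, hvi]
      case hv3 =>
        intro j hjv hjne
        have hjlt : (j : ℕ) < i := j.isLt
        have hjni' : (j : ℕ) ≠ i' := fun h => hjne (Fin.ext h)
        rw [hv]
        simp [hjni', show (j : ℕ) ≠ i by omega]
      have hembv : ((emb : Fin i) : ℕ) = i' := rfl
      rw [hembv, hvi', ← hA0, hz]
      ring
    have h2 : eval v (lin q K i' a') = 0 := key v h1
    rw [eval_lin, sum_eval_aux0 (by omega) _ v ?hv4, hvi', ← hA0', hw] at h2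
    case hv4 =>
      intro j hjv
      have hjlt : (j : ℕ) < i' := j.isLt
      rw [hv]
      simp [show (j : ℕ) ≠ i' by omega, show (j : ℕ) ≠ i by omega]
    have hcontra : (1 : K) = 0 := by linear_combination h2
    exact one_ne_zero hcontra


lemma f0_eq_prod [Fintype K] [DecidableEq K] (hlam : 2 ≤ lam) :
    f0 q lam K = ∏ x ∈ (Finset.Icc 1 (lam - 1)).sigma
      (fun i => (Finset.univ : Finset (Fin i → {x : K // x ^ q = x}))),
      lin q K x.1 x.2 := by
  rw [Finset.prod_sigma]
  have h1 : Finset.Icc 1 (lam - 1) = insert 1 (Finset.Icc 2 (lam - 1)) := by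
    ext x; simp only [Finset.mem_Icc, Finset.mem_insert]; omega
  rw [h1, Finset.prod_insert (by simp [Finset.mem_Icc])]
  rw [f0]
  congr 1
  have h2 : ∀ b : Fin 1 → {x : K // x ^ q = x}, lin q K 1 b = X 1 + C (b 0).val := by
    intro b
    rw [lin, Fin.sum_univ_one]
    simp
  calc ∏ a ∈ Finset.univ.filter (fun x : K => x ^ q = x), (X 1 + C a)
      = ∏ x : {x : K // x ^ q = x}, (X 1 + C x.val) := by
        rw [Finset.prod_subtype (p := fun x : K => x ^ q = x)
          (Finset.univ.filter (fun x : K => x ^ q = x))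
          (fun x => by simp) (fun a => (X 1 + C a : MvPolynomial ℕ K))]
    _ = ∏ b : Fin 1 → {x : K // x ^ q = x}, (X 1 + C (b 0).val) := by
        rw [← (Equiv.funUnique (Fin 1) {x : K // x ^ q = x}).symm.prod_comp
          (fun b => (X 1 + C (b 0).val : MvPolynomial ℕ K))]
        rfl
    _ = ∏ b : Fin 1 → {x : K // x ^ q = x}, lin q K 1 b := by
        exact Finset.prod_congr rfl fun b _ => (h2 b).symm

lemma coe_Lset_lam (hlam : 2 ≤ lam) :
    Lset lam lam = ↑((Finset.Icc 1 (lam - 1)) ∪ {lam + 1}) := by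
  ext x
  simp only [Lset, Jset, Set.mem_image, Set.mem_union, Set.mem_diff, Set.mem_Icc,
    Set.mem_singleton_iff, Finset.coe_union, Finset.coe_Icc, Finset.coe_singleton]
  constructor
  · rintro ⟨t, ht, rfl⟩; omega
  · intro hx; exact ⟨lam + 1 - x, by omega, by omega⟩

lemma coe_Mset_lam (hlam : 2 ≤ lam) :
    MsetJ lam lam = ↑(Finset.Icc 1 lam) := by
  ext x
  simp only [MsetJ, Jset, Set.mem_image, Set.mem_diff, Set.mem_Icc,
    Set.mem_singleton_iff, Finset.coe_Icc]
  constructor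
  · rintro ⟨t, ht, rfl⟩; omega
  · intro hx; exact ⟨lam + 1 - x, by omega, by omega⟩

lemma coe_Mset_s {s : ℕ} (hlam : 2 ≤ lam) (hs1 : 1 ≤ s) (hs2 : s ≤ lam - 1) :
    MsetJ lam s = ↑((Finset.Icc 0 lam).erase (lam - s)) := by
  ext x
  simp only [MsetJ, Jset, Set.mem_image, Set.mem_diff, Set.mem_Icc,
    Set.mem_singleton_iff, Finset.coe_erase, Finset.coe_Icc]
  constructor
  · rintro ⟨t, ht, rfl⟩; omega
  · intro hx; exact ⟨lam + 1 - x, by omega, by omega⟩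

lemma coe_Lset_s {s : ℕ} (hlam : 2 ≤ lam) (hs1 : 1 ≤ s) (hs2 : s ≤ lam - 1) :
    Lset lam s = ↑((((Finset.Icc 0 (lam - 1)).erase (lam - s))) ∪ {lam + 1}) := by
  ext x
  simp only [Lset, Jset, Set.mem_image, Set.mem_union, Set.mem_diff, Set.mem_Icc,
    Set.mem_singleton_iff, Finset.coe_union, Finset.coe_erase, Finset.coe_Icc,
    Finset.coe_singleton]
  constructor
  · rintro ⟨t, ht, rfl⟩; omega
  · intro hx
    rcases hx with ⟨⟨h1, h2⟩, h3⟩ | h4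
    · exact ⟨lam + 1 - x, by omega, by omega⟩
    · exact ⟨0, by omega, by omega⟩

end Stmt18

open Stmt18

/-- `f_0^{q+1}` divides `F_s`, and
`deg F_s ≤ q^{λ+1} + q^λ + 2∑_{j=1}^{λ-1} q^j + 1 - q^{λ-s}`. -/
theorem stmt18 (q m lam : ℕ) (hq : ∃ p e : ℕ, p.Prime ∧ 0 < e ∧ q = p ^ e)
    (hm : 0 < m) (hlam : 2 ≤ lam)
    (K : Type) [Field K] [Fintype K] [DecidableEq K] (hcard : Fintype.card K = q ^ m)
    (s : ℕ) (hs1 : 1 ≤ s) (hs2 : s ≤ lam - 1) (α : K)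
    (ιLs ιMs ιLlam ιMlam : Fin lam → ℕ)
    (hLs : StrictMono ιLs) (hLs' : Set.range ιLs = Lset lam s)
    (hMs : StrictMono ιMs) (hMs' : Set.range ιMs = MsetJ lam s)
    (hLl : StrictMono ιLlam) (hLl' : Set.range ιLlam = Lset lam lam)
    (hMl : StrictMono ιMlam) (hMl' : Set.range ιMlam = MsetJ lam lam)
    (Fs : MvPolynomial ℕ K)
    (hFs : Fs = fI q lam K ιLlam * fI q lam K ιMs -
      C α * (fI q lam K ιMlam * fI q lam K ιLs)) :
    f0 q lam K ^ (q + 1) ∣ Fs ∧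
    Fs.totalDegree ≤
      q ^ (lam + 1) + q ^ lam + 2 * (∑ j ∈ Finset.Icc 1 (lam - 1), q ^ j) + 1 -
        q ^ (lam - s) := by
  classical
  obtain ⟨p, e, hp, he, hqpe⟩ := hq
  have h0 : 0 < lam := by omega
  have hq2 : 2 ≤ q := by
    have hp2 : 2 ≤ p := hp.two_le
    have hle : p ≤ p ^ e := Nat.le_self_pow (by omega) p
    omega
  have hq1 : 1 ≤ q := by omega
  -- characteristic of K is p
  haveI hKp : CharP K p := by
    haveI := ringChar.charP K
    obtain ⟨n, hrp, hcard'⟩ := FiniteField.card K (ringChar K)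
    have h1 : q ^ m = ringChar K ^ (n : ℕ) := by rw [← hcard, hcard']
    have h2 : p ∣ ringChar K := by
      have hdvd : p ∣ ringChar K ^ (n : ℕ) := by
        rw [← h1, hqpe, ← pow_mul]
        exact dvd_pow_self p (by positivity)
      exact hp.dvd_of_dvd_pow hdvd
    have h3 : p = ringChar K := (Nat.prime_dvd_prime_iff_eq hp hrp).mp h2
    rw [h3]; exact ringChar.charP K
  -- minimum values of the enumerations
  have hmin_Ll : ιLlam ⟨0, h0⟩ = 1 := by
    refine apply_zero_eq ιLlam hLl hLl' h0 ?_ ?_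
    · rw [coe_Lset_lam hlam]
      simp only [Finset.coe_union, Finset.coe_Icc, Finset.coe_singleton, Set.mem_union,
        Set.mem_Icc, Set.mem_singleton_iff]
      omega
    · intro x hx
      rw [coe_Lset_lam hlam] at hx
      simp only [Finset.coe_union, Finset.coe_Icc, Finset.coe_singleton, Set.mem_union,
        Set.mem_Icc, Set.mem_singleton_iff] at hx
      omega
  have hmin_Ml : ιMlam ⟨0, h0⟩ = 1 := by
    refine apply_zero_eq ιMlam hMl hMl' h0 ?_ ?_
    · rw [coe_Mset_lam hlam]
      simp only [Finset.coe_Icc, Set.mem_Icc]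
      omega
    · intro x hx
      rw [coe_Mset_lam hlam] at hx
      simp only [Finset.coe_Icc, Set.mem_Icc] at hx
      omega
  have hmin_Ms : ιMs ⟨0, h0⟩ = 0 := by
    refine apply_zero_eq ιMs hMs hMs' h0 ?_ ?_
    · rw [coe_Mset_s hlam hs1 hs2]
      simp only [Finset.coe_erase, Finset.coe_Icc, Set.mem_diff, Set.mem_Icc,
        Set.mem_singleton_iff]
      omega
    · intro x hx
      exact Nat.zero_le x
  have hmin_Ls : ιLs ⟨0, h0⟩ = 0 := by
    refine apply_zero_eq ιLs hLs hLs' h0 ?_ ?_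
    · rw [coe_Lset_s hlam hs1 hs2]
      simp only [Finset.coe_union, Finset.coe_erase, Finset.coe_Icc, Finset.coe_singleton,
        Set.mem_union, Set.mem_diff, Set.mem_Icc, Set.mem_singleton_iff]
      omega
    · intro x hx
      exact Nat.zero_le x
  constructor
  · -- divisibility
    rw [f0_eq_prod hlam, ← Finset.prod_pow]
    refine prod_pow_dvd _ _ _ ?_ ?_ Fs ?_
    · rintro ⟨i, a⟩ hx
      have hmem : i ∈ Finset.Icc 1 (lam - 1) := (Finset.mem_sigma.mp hx).1
      rw [Finset.mem_Icc] at hmem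
      exact prime_lin i hmem.1 a
    · intro x hxm y hym hxy
      have hx1 : x.1 ∈ Finset.Icc 1 (lam - 1) := (Finset.mem_sigma.mp hxm).1
      have hy1 : y.1 ∈ Finset.Icc 1 (lam - 1) := (Finset.mem_sigma.mp hym).1
      rw [Finset.mem_Icc] at hx1 hy1
      exact lin_not_dvd hx1.1 hy1.1 x.2 y.2 hxy
    · rintro ⟨i, a⟩ hx
      have hmem : i ∈ Finset.Icc 1 (lam - 1) := (Finset.mem_sigma.mp hx).1
      rw [Finset.mem_Icc] at hmem
      have hi1 : 1 ≤ i := hmem.1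
      have hilam : i < lam := by omega
      have d1 : lin q K i a ^ q ∣ fI q lam K ιLlam := by
        have hd := lin_pow_dvd hp hqpe hq1 ιLlam hLl.monotone h0 i hi1 hilam a
        rwa [hmin_Ll, pow_one] at hd
      have d2 : lin q K i a ∣ fI q lam K ιMs := by
        have hd := lin_pow_dvd hp hqpe hq1 ιMs hMs.monotone h0 i hi1 hilam a
        rwa [hmin_Ms, pow_zero, pow_one] at hd
      have d3 : lin q K i a ^ q ∣ fI q lam K ιMlam := by
        have hd := lin_pow_dvd hp hqpe hq1 ιMlam hMl.monotone h0 i hi1 hilam a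
        rwa [hmin_Ml, pow_one] at hd
      have d4 : lin q K i a ∣ fI q lam K ιLs := by
        have hd := lin_pow_dvd hp hqpe hq1 ιLs hLs.monotone h0 i hi1 hilam a
        rwa [hmin_Ls, pow_zero, pow_one] at hd
      rw [hFs]
      refine dvd_sub ?_ ?_
      · rw [pow_succ]
        exact mul_dvd_mul d1 d2
      · rw [pow_succ]
        exact (mul_dvd_mul d3 d4).mul_left (C α)
  · -- degree bound
    set T := ∑ j ∈ Finset.Icc 1 (lam - 1), q ^ j with hT
    have hPle : q ^ (lam - s) ≤ T := by
      refine Finset.single_le_sum (f := fun j => q ^ j) (fun i _ => Nat.zero_le _) ?_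
      rw [Finset.mem_Icc]; omega
    have hIcc1lam : Finset.Icc 1 lam = insert lam (Finset.Icc 1 (lam - 1)) := by
      ext x; simp only [Finset.mem_Icc, Finset.mem_insert]; omega
    have hSMl : ∑ x ∈ Finset.Icc 1 lam, q ^ x = q ^ lam + T := by
      rw [hIcc1lam, Finset.sum_insert (by rw [Finset.mem_Icc]; omega)]
    have hIcc0lam : Finset.Icc 0 lam = insert 0 (Finset.Icc 1 lam) := by
      ext x; simp only [Finset.mem_Icc, Finset.mem_insert]; omega
    have hS0lam : ∑ x ∈ Finset.Icc 0 lam, q ^ x = 1 + (q ^ lam + T) := by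
      rw [hIcc0lam, Finset.sum_insert (by rw [Finset.mem_Icc]; omega), pow_zero, hSMl]
    have hIcc0lam1 : Finset.Icc 0 (lam - 1) = insert 0 (Finset.Icc 1 (lam - 1)) := by
      ext x; simp only [Finset.mem_Icc, Finset.mem_insert]; omega
    have hS0lam1 : ∑ x ∈ Finset.Icc 0 (lam - 1), q ^ x = 1 + T := by
      rw [hIcc0lam1, Finset.sum_insert (by rw [Finset.mem_Icc]; omega), pow_zero]
    have hMsErase : (∑ x ∈ (Finset.Icc 0 lam).erase (lam - s), q ^ x) + q ^ (lam - s)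
        = 1 + (q ^ lam + T) := by
      rw [Finset.sum_erase_add _ _ (by rw [Finset.mem_Icc]; omega), hS0lam]
    have hLsErase : (∑ x ∈ (Finset.Icc 0 (lam - 1)).erase (lam - s), q ^ x) + q ^ (lam - s)
        = 1 + T := by
      rw [Finset.sum_erase_add _ _ (by rw [Finset.mem_Icc]; omega), hS0lam1]
    have hLlSum : ∑ x ∈ (Finset.Icc 1 (lam - 1) ∪ {lam + 1}), q ^ x = T + q ^ (lam + 1) := by
      rw [Finset.sum_union (by
        simp only [Finset.disjoint_singleton_right, Finset.mem_Icc]; omega),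
        Finset.sum_singleton]
    have hLsSum : ∑ x ∈ ((Finset.Icc 0 (lam - 1)).erase (lam - s) ∪ {lam + 1}), q ^ x
        = (∑ x ∈ (Finset.Icc 0 (lam - 1)).erase (lam - s), q ^ x) + q ^ (lam + 1) := by
      rw [Finset.sum_union (by
        simp only [Finset.disjoint_singleton_right, Finset.mem_erase, Finset.mem_Icc]; omega),
        Finset.sum_singleton]
    -- the four degree sums
    have hDLl := sum_pow_range (q := q) ιLlam hLl (Finset.Icc 1 (lam - 1) ∪ {lam + 1})
      (by rw [hLl', coe_Lset_lam hlam]) h0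
    rw [hmin_Ll, pow_one, hLlSum] at hDLl
    have hDMl := sum_pow_range (q := q) ιMlam hMl (Finset.Icc 1 lam)
      (by rw [hMl', coe_Mset_lam hlam]) h0
    rw [hmin_Ml, pow_one, hSMl] at hDMl
    have hDMs := sum_pow_range (q := q) ιMs hMs ((Finset.Icc 0 lam).erase (lam - s))
      (by rw [hMs', coe_Mset_s hlam hs1 hs2]) h0
    rw [hmin_Ms, pow_zero] at hDMs
    have hDLs := sum_pow_range (q := q) ιLs hLs
      ((Finset.Icc 0 (lam - 1)).erase (lam - s) ∪ {lam + 1})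
      (by rw [hLs', coe_Lset_s hlam hs1 hs2]) h0
    rw [hmin_Ls, pow_zero, hLsSum] at hDLs
    have hdegLl := totalDegree_fI_le (K := K) hq1 ιLlam hLl.monotone h0
    have hdegMl := totalDegree_fI_le (K := K) hq1 ιMlam hMl.monotone h0
    have hdegMs := totalDegree_fI_le (K := K) hq1 ιMs hMs.monotone h0
    have hdegLs := totalDegree_fI_le (K := K) hq1 ιLs hLs.monotone h0
    have hdeg1 : (fI q lam K ιLlam * fI q lam K ιMs).totalDegree
        ≤ (∑ x ∈ Finset.univ.erase (⟨0, h0⟩ : Fin lam), q ^ ιLlam x)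
          + ∑ x ∈ Finset.univ.erase (⟨0, h0⟩ : Fin lam), q ^ ιMs x :=
      (MvPolynomial.totalDegree_mul _ _).trans (add_le_add hdegLl hdegMs)
    have hdeg2 : (C α * (fI q lam K ιMlam * fI q lam K ιLs)).totalDegree
        ≤ (∑ x ∈ Finset.univ.erase (⟨0, h0⟩ : Fin lam), q ^ ιMlam x)
          + ∑ x ∈ Finset.univ.erase (⟨0, h0⟩ : Fin lam), q ^ ιLs x := by
      refine (MvPolynomial.totalDegree_mul _ _).trans ?_
      rw [MvPolynomial.totalDegree_C, zero_add]
      exact (MvPolynomial.totalDegree_mul _ _).trans (add_le_add hdegMl hdegLs)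
    have hsub : Fs.totalDegree
        ≤ max (fI q lam K ιLlam * fI q lam K ιMs).totalDegree
            (C α * (fI q lam K ιMlam * fI q lam K ιLs)).totalDegree := by
      rw [hFs, sub_eq_add_neg]
      refine (MvPolynomial.totalDegree_add _ _).trans ?_
      rw [MvPolynomial.totalDegree_neg]
    refine hsub.trans (max_le (hdeg1.trans ?_) (hdeg2.trans ?_)) <;> omega

end
end

section
/- Let A = (a_{i,j})_{i,j=0}^{λ−1} be an invertible λ×λ matrix with entries in F_q; in F_{q^m}(X_1,…,X_{λ−1}) set D = a_{0,0} + Σ_{i=1}^{λ−1} a_{i,0} X_i and φ_j = (a_{0,j} + Σ_{i=1}^{λ−1} a_{i,j} X_i)/D for j = 1,…,λ−1. Fix s ∈ {1,…,λ−1} and α_s ∈ F_{q^m}, and set F_s = f^{L_λ}·f^{M_s} − α_s·f^{M_λ}·f^{L_s}. Then F_s(φ_1,…,φ_{λ−1}) = det(A)^2 · D^{−e} · F_s(X_1,…,X_{λ−1}) in F_{q^m}(X_1,…,X_{λ−1}), where e = q^{λ+1} + q^{λ} + 2·Σ_{j=1}^{λ−1} q^{j} + 1 − q^{λ−s}. In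 particular, if β = (β_1,…,β_{λ−1}) ∈ F_{q^m}^{λ−1} is a common root of the F_s (s = 1,…,λ−1) with D(β) ≠ 0, then (φ_1(β),…,φ_{λ−1}(β)) is again a common root. -/
noncomputable section
open MvPolynomial

lemma pow_q_pow_fixed {K : Type} [CommRing K] {q : ℕ} {a : K} (hq : a ^ q = a) (n : ℕ) :
    a ^ q ^ n = a := by
  induction n with
  | zero => simp
  | succ n ih => rw [pow_succ, pow_mul, ih, hq]

lemma Lset_eq {lam s : ℕ} (hs1 : 1 ≤ s) (hs2 : s ≤ lam) :
    Lset lam s = ↑(((Finset.range lam).erase (lam - s)) ∪ {lam + 1}) := by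
  ext n
  simp only [Lset, Jset, Set.mem_image, Set.mem_union, Set.mem_diff, Set.mem_Icc,
    Set.mem_singleton_iff, Finset.coe_union, Finset.coe_erase, Finset.coe_singleton,
    Finset.coe_range, Set.mem_Iio]
  constructor
  · rintro ⟨t, ht, rfl⟩
    rcases ht with ⟨⟨⟨h1, h2⟩, h3⟩, h4⟩ | h0
    · left; omega
    · right; omega
  · rintro (⟨⟨hne, hlt⟩⟩ | rfl)
    · exact ⟨lam + 1 - n, Or.inl ⟨⟨⟨by omega, by omega⟩, by omega⟩, by omega⟩, by omega⟩
    · exact ⟨0, Or.inr rfl, by omega⟩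

lemma MsetJ_eq {lam s : ℕ} (hs1 : 1 ≤ s) (hs2 : s ≤ lam) :
    MsetJ lam s = ↑((Finset.range (lam + 1)).erase (lam - s)) := by
  ext n
  simp only [MsetJ, Jset, Set.mem_image, Set.mem_diff, Set.mem_Icc, Set.mem_singleton_iff,
    Finset.coe_erase, Finset.coe_range, Set.mem_Iio]
  constructor
  · rintro ⟨t, ⟨⟨h1, h2⟩, h3⟩, rfl⟩
    constructor <;> omega
  · rintro ⟨hne, hlt⟩
    exact ⟨lam + 1 - n, ⟨⟨by omega, by omega⟩, by omega⟩, by omega⟩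

lemma sum_pow_range {lam q : ℕ} (ι : Fin lam → ℕ) (hmono : StrictMono ι) (S : Finset ℕ)
    (hr : Set.range ι = ↑S) : ∑ i, q ^ ι i = ∑ t ∈ S, q ^ t := by
  have himg : Finset.univ.image ι = S := by
    apply Finset.coe_injective
    rw [Finset.coe_image, Finset.coe_univ, Set.image_univ, hr]
  rw [← himg, Finset.sum_image (fun a _ b _ h => hmono.injective h)]

lemma range_eq_insert {lam : ℕ} (hlam : 1 ≤ lam) :
    Finset.range lam = insert 0 (Finset.Icc 1 (lam - 1)) := by
  ext n; simp; omega

section weights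
variable {q lam s : ℕ}

lemma weight_L {hq : 2 ≤ q} (hs1 : 1 ≤ s) (hs2 : s ≤ lam) (hlam : 1 ≤ lam) :
    (∑ u ∈ ((Finset.range lam).erase (lam - s) ∪ {lam + 1}), q ^ u) + q ^ (lam - s)
      = 1 + (∑ j ∈ Finset.Icc 1 (lam - 1), q ^ j) + q ^ (lam + 1) := by
  have hd : Disjoint ((Finset.range lam).erase (lam - s)) {lam + 1} := by
    simp only [Finset.disjoint_singleton_right, Finset.mem_erase, Finset.mem_range]
    omega
  rw [Finset.sum_union hd, Finset.sum_singleton]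
  have hmem : lam - s ∈ Finset.range lam := by simp; omega
  have h1 : (∑ u ∈ (Finset.range lam).erase (lam - s), q ^ u) + q ^ (lam - s)
      = ∑ u ∈ Finset.range lam, q ^ u :=
    Finset.sum_erase_add (Finset.range lam) (fun u => q ^ u) hmem
  have h2 : ∑ u ∈ Finset.range lam, q ^ u = 1 + ∑ j ∈ Finset.Icc 1 (lam - 1), q ^ j := by
    rw [range_eq_insert hlam, Finset.sum_insert (by simp), pow_zero]
  omega

lemma weight_M {hq : 2 ≤ q} (hs1 : 1 ≤ s) (hs2 : s ≤ lam) (hlam : 1 ≤ lam) :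
    (∑ u ∈ (Finset.range (lam + 1)).erase (lam - s), q ^ u) + q ^ (lam - s)
      = 1 + (∑ j ∈ Finset.Icc 1 (lam - 1), q ^ j) + q ^ lam := by
  have hmem : lam - s ∈ Finset.range (lam + 1) := by simp
  have h1 : (∑ u ∈ (Finset.range (lam + 1)).erase (lam - s), q ^ u) + q ^ (lam - s)
      = ∑ u ∈ Finset.range (lam + 1), q ^ u :=
    Finset.sum_erase_add (Finset.range (lam + 1)) (fun u => q ^ u) hmem
  have h2 : ∑ u ∈ Finset.range (lam + 1), q ^ u
      = 1 + (∑ j ∈ Finset.Icc 1 (lam - 1), q ^ j) + q ^ lam := by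
    rw [Finset.sum_range_succ, range_eq_insert hlam, Finset.sum_insert (by simp), pow_zero]
  omega

end weights

lemma core_fI (q lam : ℕ) [NeZero lam] (K : Type) [Field K]
    (p n0 : ℕ) (hp : p.Prime) (hn0 : 0 < n0) (hqe : q = p ^ n0)
    (A : Matrix (Fin lam) (Fin lam) K) (hAq : ∀ i j, A i j ^ q = A i j)
    (L : Type) [Field L] (hL : CharP L p)
    (g : K →+* L) (x : ℕ → L)
    (d : L) (hd : d = ∑ i, g (A i 0) * (if (i : ℕ) = 0 then 1 else x i)) (hdne : d ≠ 0)
    (ψ : ℕ → L) (hψ : ∀ (j : ℕ) (hj : j < lam), ψ j =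
      (∑ i, g (A i ⟨j, hj⟩) * (if (i : ℕ) = 0 then 1 else x i)) / d)
    (ι : Fin lam → ℕ) :
    eval₂ g ψ (fI q lam K ι) * d ^ (∑ s, q ^ ι s) =
      g A.det * eval₂ g x (fI q lam K ι) := by
  haveI : Fact p.Prime := ⟨hp⟩
  haveI := hL
  haveI : ExpChar L p := ExpChar.prime hp
  -- Frobenius additivity for the linear forms
  have hsum : ∀ (j : Fin lam) (n : ℕ),
      (∑ i, g (A i j) * (if (i : ℕ) = 0 then 1 else x i)) ^ q ^ n
        = ∑ i, g (A i j) * (if (i : ℕ) = 0 then 1 else x i ^ q ^ n) := by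
    intro j n
    have hqp : q ^ n = p ^ (n0 * n) := by rw [hqe, ← pow_mul]
    rw [hqp, sum_pow_char_pow]
    refine Finset.sum_congr rfl fun i _ => ?_
    rw [mul_pow, ← map_pow, ← hqp, pow_q_pow_fixed (hAq i j)]
    congr 1
    split_ifs
    · exact one_pow _
    · rw [hqp]
  have hmapdet : ∀ (h : MvPolynomial ℕ K →+* L) (M : Matrix (Fin lam) (Fin lam) (MvPolynomial ℕ K)),
      h M.det = (M.map h).det := by
    intro h M
    rw [RingHom.map_det]; rfl
  have heval : ∀ (y : ℕ → L),
      eval₂ g y (fI q lam K ι) =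
        Matrix.det (Matrix.of fun s t : Fin lam =>
          if (t : ℕ) = 0 then (1 : L) else (y t) ^ q ^ ι s) := by
    intro y
    rw [fI, ← coe_eval₂Hom, hmapdet]
    congr 1
    ext s t
    simp only [Matrix.map_apply, Matrix.of_apply, apply_ite (eval₂Hom g y), map_one, map_pow,
      eval₂Hom_X']
  rw [heval ψ, heval x, ← Finset.prod_pow_eq_pow_sum, mul_comm (Matrix.det _),
    ← Matrix.det_mul_column (fun s => d ^ q ^ ι s)]
  have hmat : (Matrix.of fun s t : Fin lam =>
        d ^ q ^ ι s * (if (t : ℕ) = 0 then (1 : L) else (ψ t) ^ q ^ ι s))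
      = (Matrix.of fun s t : Fin lam =>
          if (t : ℕ) = 0 then (1 : L) else (x t) ^ q ^ ι s) * (A.map g) := by
    ext s t
    rw [Matrix.mul_apply]
    simp only [Matrix.of_apply, Matrix.map_apply]
    by_cases ht : (t : ℕ) = 0
    · have ht0 : t = 0 := Fin.ext (by simpa using ht)
      subst ht0
      rw [if_pos ht, mul_one, hd, hsum 0 (ι s)]
      exact Finset.sum_congr rfl fun i _ => mul_comm _ _
    · have hψt : ψ t = (∑ i, g (A i t) * (if (i : ℕ) = 0 then 1 else x i)) / d := by
        rw [hψ t t.isLt]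
      rw [if_neg ht, hψt, div_pow, mul_div_cancel₀ _ (pow_ne_zero _ hdne), hsum t (ι s)]
      exact Finset.sum_congr rfl fun i _ => mul_comm _ _
  have hmapdet' : (A.map ⇑g).det = g A.det := by rw [RingHom.map_det]; rfl
  simp only [Matrix.of_apply] at hmat ⊢
  rw [hmat, Matrix.det_mul, hmapdet']
  ring

lemma core_Fs (q lam : ℕ) [NeZero lam] (K : Type) [Field K]
    (p n0 : ℕ) (hp : p.Prime) (hn0 : 0 < n0) (hqe : q = p ^ n0) (hlam : 2 ≤ lam)
    (A : Matrix (Fin lam) (Fin lam) K) (hAq : ∀ i j, A i j ^ q = A i j)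
    (L : Type) [Field L] (hL : CharP L p)
    (g : K →+* L) (x : ℕ → L)
    (d : L) (hd : d = ∑ i, g (A i 0) * (if (i : ℕ) = 0 then 1 else x i)) (hdne : d ≠ 0)
    (ψ : ℕ → L) (hψ : ∀ (j : ℕ) (hj : j < lam), ψ j =
      (∑ i, g (A i ⟨j, hj⟩) * (if (i : ℕ) = 0 then 1 else x i)) / d)
    (α : ℕ → K) (ιL ιM : ℕ → Fin lam → ℕ)
    (hι : ∀ s ∈ Finset.Icc 1 lam,
      StrictMono (ιL s) ∧ Set.range (ιL s) = Lset lam s ∧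
      StrictMono (ιM s) ∧ Set.range (ιM s) = MsetJ lam s)
    (Fs : ℕ → MvPolynomial ℕ K)
    (hFs : ∀ s, Fs s = fI q lam K (ιL lam) * fI q lam K (ιM s) -
      C (α s) * (fI q lam K (ιM lam) * fI q lam K (ιL s)))
    (e : ℕ → ℕ)
    (he : ∀ s, e s =
      q ^ (lam + 1) + q ^ lam + 2 * (∑ j ∈ Finset.Icc 1 (lam - 1), q ^ j) + 1 -
        q ^ (lam - s))
    (s : ℕ) (hs : s ∈ Finset.Icc 1 (lam - 1)) :
    eval₂ g ψ (Fs s) * d ^ e s = g A.det ^ 2 * eval₂ g x (Fs s) := by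
  have hq2 : 2 ≤ q := by
    rw [hqe]
    calc 2 ≤ p := hp.two_le
    _ = p ^ 1 := (pow_one p).symm
    _ ≤ p ^ n0 := Nat.pow_le_pow_right hp.pos hn0
  simp only [Finset.mem_Icc] at hs
  have hs1 : 1 ≤ s := hs.1
  have hs2 : s ≤ lam := by omega
  have hlam1 : 1 ≤ lam := by omega
  obtain ⟨hLl, hLlr, hMl, hMlr⟩ := hι lam (by simp [Finset.mem_Icc]; omega)
  obtain ⟨hLs, hLsr, hMs, hMsr⟩ := hι s (by simp [Finset.mem_Icc]; omega)
  -- weights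
  have wLlam : ∑ i, q ^ ιL lam i
      = ∑ u ∈ ((Finset.range lam).erase (lam - lam) ∪ {lam + 1}), q ^ u :=
    sum_pow_range _ hLl _ (hLlr.trans (Lset_eq hlam1 le_rfl))
  have wLs : ∑ i, q ^ ιL s i
      = ∑ u ∈ ((Finset.range lam).erase (lam - s) ∪ {lam + 1}), q ^ u :=
    sum_pow_range _ hLs _ (hLsr.trans (Lset_eq hs1 hs2))
  have wMlam : ∑ i, q ^ ιM lam i
      = ∑ u ∈ (Finset.range (lam + 1)).erase (lam - lam), q ^ u :=
    sum_pow_range _ hMl _ (hMlr.trans (MsetJ_eq hlam1 le_rfl))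
  have wMs : ∑ i, q ^ ιM s i
      = ∑ u ∈ (Finset.range (lam + 1)).erase (lam - s), q ^ u :=
    sum_pow_range _ hMs _ (hMsr.trans (MsetJ_eq hs1 hs2))
  have hqmono : q ^ (lam - s) ≤ q ^ lam := Nat.pow_le_pow_right (by omega) (by omega)
  have hwL1 := weight_L (q := q) (lam := lam) (hq := hq2) hlam1 le_rfl hlam1
  have hwL2 := weight_L (q := q) (lam := lam) (hq := hq2) hs1 hs2 hlam1
  have hwM1 := weight_M (q := q) (lam := lam) (hq := hq2) hlam1 le_rfl hlam1
  have hwM2 := weight_M (q := q) (lam := lam) (hq := hq2) hs1 hs2 hlam1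
  have he1 : (∑ i, q ^ ιL lam i) + (∑ i, q ^ ιM s i) = e s := by
    rw [wLlam, wMs, he s]
    have h0 : q ^ (lam - lam) = 1 := by simp
    omega
  have he2 : (∑ i, q ^ ιM lam i) + (∑ i, q ^ ιL s i) = e s := by
    rw [wMlam, wLs, he s]
    have h0 : q ^ (lam - lam) = 1 := by simp
    omega
  -- apply the core lemma to the four fI's
  have k1 := core_fI q lam K p n0 hp hn0 hqe A hAq L hL g x d hd hdne ψ hψ (ιL lam)
  have k2 := core_fI q lam K p n0 hp hn0 hqe A hAq L hL g x d hd hdne ψ hψ (ιM s)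
  have k3 := core_fI q lam K p n0 hp hn0 hqe A hAq L hL g x d hd hdne ψ hψ (ιM lam)
  have k4 := core_fI q lam K p n0 hp hn0 hqe A hAq L hL g x d hd hdne ψ hψ (ιL s)
  rw [hFs s]
  simp only [eval₂_sub, eval₂_mul, eval₂_C]
  rw [sub_mul]
  have t1 : eval₂ g ψ (fI q lam K (ιL lam)) * eval₂ g ψ (fI q lam K (ιM s)) * d ^ e s
      = g A.det ^ 2 * (eval₂ g x (fI q lam K (ιL lam)) * eval₂ g x (fI q lam K (ιM s))) := by
    rw [← he1, pow_add,
      show eval₂ g ψ (fI q lam K (ιL lam)) * eval₂ g ψ (fI q lam K (ιM s)) *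
          (d ^ (∑ i, q ^ ιL lam i) * d ^ (∑ i, q ^ ιM s i))
        = (eval₂ g ψ (fI q lam K (ιL lam)) * d ^ (∑ i, q ^ ιL lam i)) *
          (eval₂ g ψ (fI q lam K (ιM s)) * d ^ (∑ i, q ^ ιM s i)) from by ring,
      k1, k2]
    ring
  have t2 : eval₂ g ψ (fI q lam K (ιM lam)) * eval₂ g ψ (fI q lam K (ιL s)) * d ^ e s
      = g A.det ^ 2 * (eval₂ g x (fI q lam K (ιM lam)) * eval₂ g x (fI q lam K (ιL s))) := by
    rw [← he2, pow_add,
      show eval₂ g ψ (fI q lam K (ιM lam)) * eval₂ g ψ (fI q lam K (ιL s)) *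
          (d ^ (∑ i, q ^ ιM lam i) * d ^ (∑ i, q ^ ιL s i))
        = (eval₂ g ψ (fI q lam K (ιM lam)) * d ^ (∑ i, q ^ ιM lam i)) *
          (eval₂ g ψ (fI q lam K (ιL s)) * d ^ (∑ i, q ^ ιL s i)) from by ring,
      k3, k4]
    ring
  linear_combination t1 - g (α s) * t2

/-- substituting `X_j ↦ φ_j` into `F_s` multiplies it by `det(A)²·D^{-e}`;
in particular the transformation maps common roots of the `F_s` (with `D(β) ≠ 0`) to
common roots. -/
theorem stmt19 (q m lam : ℕ) (hq : ∃ p e : ℕ, p.Prime ∧ 0 < e ∧ q = p ^ e)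
    (hm : 0 < m) (hlam : 2 ≤ lam) [NeZero lam]
    (K : Type) [Field K] [Fintype K] [DecidableEq K] (hcard : Fintype.card K = q ^ m)
    (A : Matrix (Fin lam) (Fin lam) K) (hAq : ∀ i j, A i j ^ q = A i j)
    (hAinv : IsUnit A.det)
    (ξ : Fin lam → MvPolynomial ℕ K)
    (hξ : ∀ i : Fin lam, ξ i = if (i : ℕ) = 0 then 1 else X (i : ℕ))
    (D : MvPolynomial ℕ K) (hD : D = ∑ i, C (A i 0) * ξ i)
    (φ : ℕ → FractionRing (MvPolynomial ℕ K))
    (hφ : ∀ (j : ℕ) (hj : j < lam), φ j =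
      algebraMap (MvPolynomial ℕ K) (FractionRing (MvPolynomial ℕ K))
          (∑ i, C (A i ⟨j, hj⟩) * ξ i) /
        algebraMap (MvPolynomial ℕ K) (FractionRing (MvPolynomial ℕ K)) D)
    (α : ℕ → K) (ιL ιM : ℕ → Fin lam → ℕ)
    (hι : ∀ s ∈ Finset.Icc 1 lam,
      StrictMono (ιL s) ∧ Set.range (ιL s) = Lset lam s ∧
      StrictMono (ιM s) ∧ Set.range (ιM s) = MsetJ lam s)
    (Fs : ℕ → MvPolynomial ℕ K)
    (hFs : ∀ s, Fs s = fI q lam K (ιL lam) * fI q lam K (ιM s) -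
      C (α s) * (fI q lam K (ιM lam) * fI q lam K (ιL s)))
    (e : ℕ → ℕ)
    (he : ∀ s, e s =
      q ^ (lam + 1) + q ^ lam + 2 * (∑ j ∈ Finset.Icc 1 (lam - 1), q ^ j) + 1 -
        q ^ (lam - s)) :
    (∀ s ∈ Finset.Icc 1 (lam - 1),
      eval₂ ((algebraMap (MvPolynomial ℕ K) (FractionRing (MvPolynomial ℕ K))).comp
          (C : K →+* MvPolynomial ℕ K)) φ (Fs s) =
        (algebraMap (MvPolynomial ℕ K) (FractionRing (MvPolynomial ℕ K)) (C A.det)) ^ 2 *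
          algebraMap (MvPolynomial ℕ K) (FractionRing (MvPolynomial ℕ K)) (Fs s) /
          (algebraMap (MvPolynomial ℕ K) (FractionRing (MvPolynomial ℕ K)) D) ^ e s) ∧
    (∀ b : ℕ → K, (∀ s ∈ Finset.Icc 1 (lam - 1), eval b (Fs s) = 0) →
      eval b D ≠ 0 →
      ∀ s ∈ Finset.Icc 1 (lam - 1),
        eval (fun j => if hj : j < lam then
            (∑ i, A i ⟨j, hj⟩ * if (i : ℕ) = 0 then 1 else b (i : ℕ)) / eval b D
          else 0) (Fs s) = 0) := by
  obtain ⟨p, n0, hp, hn0, hqe⟩ := hq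
  haveI hfact : Fact p.Prime := ⟨hp⟩
  haveI hKchar : CharP K p := by
    obtain ⟨p', hc⟩ := CharP.exists K
    haveI := hc
    obtain ⟨n, hp', hcard'⟩ := FiniteField.card K p'
    have hq' : q ^ m = p' ^ (n : ℕ) := by rw [← hcard, hcard']
    have hpp : p = p' := by
      have hdvd : p ∣ p' ^ (n : ℕ) := by
        rw [← hq', hqe, ← pow_mul]
        exact dvd_pow_self p (Nat.mul_ne_zero (by omega) (by omega))
      exact (Nat.prime_dvd_prime_iff_eq hp hp').mp (hp.dvd_of_dvd_pow hdvd)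
    rwa [hpp]
  haveI hFRchar : CharP (FractionRing (MvPolynomial ℕ K)) p :=
    charP_of_injective_algebraMap (IsFractionRing.injective (MvPolynomial ℕ K) _) p
  have hevalD : ∀ b : ℕ → K,
      eval b D = ∑ i, A i 0 * (if (i : ℕ) = 0 then 1 else b i) := by
    intro b
    rw [hD, map_sum]
    refine Finset.sum_congr rfl fun i _ => ?_
    rw [map_mul, eval_C, hξ i]
    congr 1
    rw [apply_ite (eval b), map_one, eval_X]
  have hcol : ∃ i, A i 0 ≠ 0 := by
    by_contra h
    push_neg at h
    rw [Matrix.det_eq_zero_of_column_eq_zero 0 h] at hAinv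
    exact not_isUnit_zero hAinv
  have hDne : D ≠ 0 := by
    intro h0
    have h00 : A 0 0 = 0 := by
      have hv := hevalD (fun _ => 0)
      rw [h0, map_zero] at hv
      have hsum0 : ∑ i : Fin lam, A i 0 * (if (i : ℕ) = 0 then (1 : K) else 0) = A 0 0 := by
        rw [Finset.sum_eq_single 0
          (fun i _ hi => by
            rw [if_neg (fun hv' => hi (Fin.ext (by simpa using hv'))), mul_zero])
          (fun h => absurd (Finset.mem_univ _) h)]
        simp
      rw [hsum0] at hv
      exact hv.symm
    obtain ⟨i, hi⟩ := hcol
    by_cases hiz : i = 0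
    · exact hi (hiz ▸ h00)
    · have hinz : (i : ℕ) ≠ 0 := fun hv' => hiz (Fin.ext (by simpa using hv'))
      have hv := hevalD (fun j => if j = (i : ℕ) then 1 else 0)
      rw [h0, map_zero] at hv
      have hsum1 : ∑ j : Fin lam, A j 0 *
          (if (j : ℕ) = 0 then (1 : K) else if (j : ℕ) = (i : ℕ) then 1 else 0)
          = A 0 0 + A i 0 := by
        rw [Finset.sum_eq_add_of_mem 0 i (Finset.mem_univ _) (Finset.mem_univ _) (Ne.symm hiz)
          (fun c _ hc => by
            rw [if_neg (fun hv' => hc.1 (Fin.ext (by simpa using hv'))),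
              if_neg (fun hv' => hc.2 (Fin.ext hv')), mul_zero])]
        rw [if_pos (by simp), if_neg hinz, if_pos rfl, mul_one, mul_one]
      rw [hsum1, h00, zero_add] at hv
      exact hi hv.symm
  have hinj := IsFractionRing.injective (MvPolynomial ℕ K) (FractionRing (MvPolynomial ℕ K))
  have haDne : algebraMap (MvPolynomial ℕ K) (FractionRing (MvPolynomial ℕ K)) D ≠ 0 :=
    (map_ne_zero_iff _ hinj).mpr hDne
  have halg : ∀ P : MvPolynomial ℕ K,
      eval₂ ((algebraMap (MvPolynomial ℕ K) (FractionRing (MvPolynomial ℕ K))).comp C)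
        (fun j => algebraMap (MvPolynomial ℕ K) (FractionRing (MvPolynomial ℕ K)) (X j)) P
        = algebraMap (MvPolynomial ℕ K) (FractionRing (MvPolynomial ℕ K)) P := by
    intro P
    rw [show (fun j => algebraMap (MvPolynomial ℕ K) (FractionRing (MvPolynomial ℕ K)) (X j))
        = ⇑(algebraMap (MvPolynomial ℕ K) (FractionRing (MvPolynomial ℕ K))) ∘ X from rfl,
      ← eval₂_comp_left, eval₂_eta]
  have hlin : ∀ j : Fin lam,
      algebraMap (MvPolynomial ℕ K) (FractionRing (MvPolynomial ℕ K)) (∑ i, C (A i j) * ξ i)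
        = ∑ i, ((algebraMap (MvPolynomial ℕ K) (FractionRing (MvPolynomial ℕ K))).comp C)
            (A i j) * (if (i : ℕ) = 0 then 1 else
              algebraMap (MvPolynomial ℕ K) (FractionRing (MvPolynomial ℕ K)) (X i)) := by
    intro j
    rw [map_sum]
    refine Finset.sum_congr rfl fun i _ => ?_
    rw [map_mul, hξ i]
    congr 1
    rw [apply_ite (algebraMap (MvPolynomial ℕ K) (FractionRing (MvPolynomial ℕ K))), map_one]
  have hd1 : algebraMap (MvPolynomial ℕ K) (FractionRing (MvPolynomial ℕ K)) D
      = ∑ i, ((algebraMap (MvPolynomial ℕ K) (FractionRing (MvPolynomial ℕ K))).comp C)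
          (A i 0) * (if (i : ℕ) = 0 then 1 else
            algebraMap (MvPolynomial ℕ K) (FractionRing (MvPolynomial ℕ K)) (X i)) := by
    rw [hD, hlin 0]
  have hψ1 : ∀ (j : ℕ) (hj : j < lam), φ j =
      (∑ i, ((algebraMap (MvPolynomial ℕ K) (FractionRing (MvPolynomial ℕ K))).comp C)
          (A i ⟨j, hj⟩) * (if (i : ℕ) = 0 then 1 else
            algebraMap (MvPolynomial ℕ K) (FractionRing (MvPolynomial ℕ K)) (X i))) /
        algebraMap (MvPolynomial ℕ K) (FractionRing (MvPolynomial ℕ K)) D := by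
    intro j hj
    rw [hφ j hj, hlin ⟨j, hj⟩]
  constructor
  · intro s hs
    have key := core_Fs q lam K p n0 hp hn0 hqe hlam A hAq
      (FractionRing (MvPolynomial ℕ K)) hFRchar
      ((algebraMap (MvPolynomial ℕ K) (FractionRing (MvPolynomial ℕ K))).comp C)
      (fun j => algebraMap (MvPolynomial ℕ K) (FractionRing (MvPolynomial ℕ K)) (X j))
      (algebraMap (MvPolynomial ℕ K) (FractionRing (MvPolynomial ℕ K)) D)
      hd1 haDne φ hψ1 α ιL ιM hι Fs hFs e he s hs
    rw [halg] at key
    rw [eq_div_iff (pow_ne_zero _ haDne)]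
    exact key
  · intro b hroot hDb s hs
    set ψ : ℕ → K := fun j => if hj : j < lam then
        (∑ i, A i ⟨j, hj⟩ * if (i : ℕ) = 0 then 1 else b (i : ℕ)) / eval b D
      else 0 with hψdef
    have hd2 : eval b D = ∑ i, (RingHom.id K) (A i 0) * (if (i : ℕ) = 0 then 1 else b i) :=
      hevalD b
    have hψ2 : ∀ (j : ℕ) (hj : j < lam), ψ j =
        (∑ i, (RingHom.id K) (A i ⟨j, hj⟩) * (if (i : ℕ) = 0 then 1 else b i)) / eval b D := by
      intro j hj
      rw [hψdef]
      simp only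
      rw [dif_pos hj]
      rfl
    have key := core_Fs q lam K p n0 hp hn0 hqe hlam A hAq K hKchar (RingHom.id K) b
      (eval b D) hd2 hDb ψ hψ2 α ιL ιM hι Fs hFs e he s hs
    rw [eval₂_id, eval₂_id, hroot s hs, mul_zero] at key
    rcases mul_eq_zero.mp key with h | h
    · exact h
    · exact absurd h (pow_ne_zero _ hDb)


end
end
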